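/- arXiv:1111.3282 — 6 statements merged into one kernel-verified Lean document; each statement's English description precedes it below -/
import Mathlib

section
/- Let n ≥ 3 and let b = (b_1, ..., b_n) be a nonincreasing sequence of nonnegative integers with b_1 ≤ n-1. Then b is the degree sequence of a simple graph on n vertices if and only if (1) the sum b_1 + ... + b_n is even, and (2) for every j with 1 ≤ j ≤ n-1, the sum of the first j elements is at most j(j-1) + Σ_{k=j+1}^{n} min(j, b_k). -/
open Finset

section Helpers
variable {V : Type*} [Fintype V] [DecidableEq V]

lemma add_edge_degree (G : SimpleGraph V) [DecidableRel G.Adj] {x y : V}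
    (hxy : x ≠ y) (hadj : ¬ G.Adj x y) :
    ∃ (G' : SimpleGraph V) (_ : DecidableRel G'.Adj),
      (∀ a b, G'.Adj a b ↔ (G.Adj a b ∨ (a = x ∧ b = y) ∨ (a = y ∧ b = x))) ∧
      ∀ v, G'.degree v = G.degree v + (if v = x ∨ v = y then 1 else 0) := by
  classical
  refine ⟨⟨fun a b => G.Adj a b ∨ (a = x ∧ b = y) ∨ (a = y ∧ b = x), ?_, ?_⟩, ?_, fun a b => Iff.rfl, ?_⟩
  · refine ⟨?_⟩; rintro a b (h | ⟨rfl, rfl⟩ | ⟨rfl, rfl⟩)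
    · exact Or.inl h.symm
    · exact Or.inr (Or.inr ⟨rfl, rfl⟩)
    · exact Or.inr (Or.inl ⟨rfl, rfl⟩)
  · refine ⟨?_⟩; rintro a (h | ⟨rfl, h⟩ | ⟨rfl, h⟩)
    · exact G.irrefl h
    · exact hxy h
    · exact hxy h.symm
  · intro a b; infer_instance
  · intro v
    have hnf : ∀ (H : SimpleGraph V) (inst : DecidableRel H.Adj),
        H.degree v = (Finset.univ.filter (H.Adj v)).card := by
      intro H inst; rw [← SimpleGraph.neighborFinset_eq_filter]; rfl
    simp only [hnf]
    by_cases hvx : v = x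
    · have hset : (Finset.univ.filter fun b => G.Adj v b ∨ (v = x ∧ b = y) ∨ (v = y ∧ b = x)) =
          insert y (Finset.univ.filter (G.Adj v)) := by
        ext b; simp [hvx, hxy]; tauto
      rw [hset, Finset.card_insert_of_notMem (by simp [hvx, hadj]), if_pos (Or.inl hvx)]
    · by_cases hvy : v = y
      · have hset : (Finset.univ.filter fun b => G.Adj v b ∨ (v = x ∧ b = y) ∨ (v = y ∧ b = x)) =
            insert x (Finset.univ.filter (G.Adj v)) := by
          ext b; simp [hvy, hxy.symm]; tauto
        have hxn : x ∉ Finset.univ.filter (G.Adj v) := by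
          simp [hvy]; intro h; exact hadj h.symm
        rw [hset, Finset.card_insert_of_notMem hxn, if_pos (Or.inr hvy)]
      · have hset : (Finset.univ.filter fun b => G.Adj v b ∨ (v = x ∧ b = y) ∨ (v = y ∧ b = x)) =
            Finset.univ.filter (G.Adj v) := by
          ext b; simp [hvx, hvy]
        rw [hset, if_neg (by tauto)]; omega

lemma del_edge_degree (G : SimpleGraph V) [DecidableRel G.Adj] {x y : V}
    (hadj : G.Adj x y) :
    ∃ (G' : SimpleGraph V) (_ : DecidableRel G'.Adj),
      (∀ a b, G'.Adj a b ↔ (G.Adj a b ∧ ¬((a = x ∧ b = y) ∨ (a = y ∧ b = x)))) ∧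
      ∀ v, G'.degree v + (if v = x ∨ v = y then 1 else 0) = G.degree v := by
  classical
  have hxy : x ≠ y := G.ne_of_adj hadj
  refine ⟨⟨fun a b => G.Adj a b ∧ ¬((a = x ∧ b = y) ∨ (a = y ∧ b = x)), ?_, ?_⟩, ?_, fun a b => Iff.rfl, ?_⟩
  · refine ⟨?_⟩; rintro a b ⟨h, hn⟩
    exact ⟨h.symm, by tauto⟩
  · refine ⟨?_⟩; rintro a ⟨h, -⟩
    exact G.irrefl h
  · intro a b; infer_instance
  · intro v
    have hnf : ∀ (H : SimpleGraph V) (inst : DecidableRel H.Adj),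
        H.degree v = (Finset.univ.filter (H.Adj v)).card := by
      intro H inst; rw [← SimpleGraph.neighborFinset_eq_filter]; rfl
    simp only [hnf]
    by_cases hvx : v = x
    · have hset : (Finset.univ.filter fun b => G.Adj v b ∧ ¬((v = x ∧ b = y) ∨ (v = y ∧ b = x))) =
          (Finset.univ.filter (G.Adj v)).erase y := by
        ext b; simp [hvx, hxy]; tauto
      have hym : y ∈ Finset.univ.filter (G.Adj v) := by simp [hvx, hadj]
      rw [hset, Finset.card_erase_of_mem hym, if_pos (Or.inl hvx)]
      have : 0 < (Finset.univ.filter (G.Adj v)).card := Finset.card_pos.2 ⟨y, hym⟩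
      omega
    · by_cases hvy : v = y
      · have hset : (Finset.univ.filter fun b => G.Adj v b ∧ ¬((v = x ∧ b = y) ∨ (v = y ∧ b = x))) =
            (Finset.univ.filter (G.Adj v)).erase x := by
          ext b; simp [hvy, hxy.symm]; tauto
        have hxm : x ∈ Finset.univ.filter (G.Adj v) := by simp [hvy, hadj.symm]
        rw [hset, Finset.card_erase_of_mem hxm, if_pos (Or.inr hvy)]
        have : 0 < (Finset.univ.filter (G.Adj v)).card := Finset.card_pos.2 ⟨x, hxm⟩
        omega
      · have hset : (Finset.univ.filter fun b => G.Adj v b ∧ ¬((v = x ∧ b = y) ∨ (v = y ∧ b = x))) =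
            Finset.univ.filter (G.Adj v) := by
          ext b; simp [hvx, hvy]
        rw [hset, if_neg (by tauto)]; omega

end Helpers


lemma count_lemma {n : ℕ} (G : SimpleGraph (Fin n)) [DecidableRel G.Adj] (S : Finset (Fin n)) :
    ∑ v ∈ S, G.degree v ≤ S.card * (S.card - 1) + ∑ w ∈ Sᶜ, min S.card (G.degree w) := by
  classical
  have hdeg : ∀ v : Fin n, G.degree v = (G.neighborFinset v ∩ S).card + (G.neighborFinset v \ S).card := by
    intro v
    rw [Finset.card_inter_add_card_sdiff]
    rfl
  have h1 : ∀ v ∈ S, (G.neighborFinset v ∩ S).card ≤ S.card - 1 := by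
    intro v hv
    have hsub : G.neighborFinset v ∩ S ⊆ S.erase v := by
      intro w hw
      rw [Finset.mem_inter] at hw
      rw [Finset.mem_erase]
      exact ⟨fun he => G.irrefl (by rw [← he] at hw; exact (SimpleGraph.mem_neighborFinset _ _ _).1 hw.1), hw.2⟩
    calc (G.neighborFinset v ∩ S).card ≤ (S.erase v).card := Finset.card_le_card hsub
      _ = S.card - 1 := Finset.card_erase_of_mem hv
  have hcount : ∀ (v : Fin n) (T : Finset (Fin n)), (G.neighborFinset v ∩ T).card
      = ∑ w ∈ T, if G.Adj v w then 1 else 0 := by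
    intro v T
    rw [← Finset.sum_filter]
    have he : G.neighborFinset v ∩ T = T.filter (G.Adj v) := by
      ext w; simp [SimpleGraph.mem_neighborFinset, and_comm]
    rw [he, Finset.card_eq_sum_ones]
  have h2 : ∑ v ∈ S, (G.neighborFinset v \ S).card = ∑ w ∈ Sᶜ, (G.neighborFinset w ∩ S).card := by
    have hsd : ∀ v : Fin n, G.neighborFinset v \ S = G.neighborFinset v ∩ Sᶜ := by
      intro v; ext w; simp [Finset.mem_sdiff, Finset.mem_compl]
    calc ∑ v ∈ S, (G.neighborFinset v \ S).card
        = ∑ v ∈ S, ∑ w ∈ Sᶜ, if G.Adj v w then 1 else 0 := by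
          refine Finset.sum_congr rfl fun v _ => ?_; rw [hsd v, hcount]
      _ = ∑ w ∈ Sᶜ, ∑ v ∈ S, if G.Adj v w then 1 else 0 := Finset.sum_comm
      _ = ∑ w ∈ Sᶜ, (G.neighborFinset w ∩ S).card := by
          refine Finset.sum_congr rfl fun w _ => ?_
          rw [hcount]
          refine Finset.sum_congr rfl fun v _ => ?_
          simp [G.adj_comm]
  have h3 : ∀ w ∈ Sᶜ, (G.neighborFinset w ∩ S).card ≤ min S.card (G.degree w) := by
    intro w _
    refine le_min (Finset.card_le_card (Finset.inter_subset_right)) ?_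
    exact Finset.card_le_card (Finset.inter_subset_left)
  calc ∑ v ∈ S, G.degree v
      = ∑ v ∈ S, (G.neighborFinset v ∩ S).card + ∑ v ∈ S, (G.neighborFinset v \ S).card := by
        rw [← Finset.sum_add_distrib]; exact Finset.sum_congr rfl fun v _ => hdeg v
    _ ≤ S.card * (S.card - 1) + ∑ w ∈ Sᶜ, min S.card (G.degree w) := by
        gcongr
        · calc ∑ v ∈ S, (G.neighborFinset v ∩ S).card ≤ ∑ v ∈ S, (S.card - 1) :=
            Finset.sum_le_sum h1
            _ = S.card * (S.card - 1) := by rw [Finset.sum_const, smul_eq_mul]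
        · rw [h2]; exact Finset.sum_le_sum h3


lemma sum_attachFin {n : ℕ} (s : Finset ℕ) (h : ∀ m ∈ s, m < n) (f : ℕ → ℕ) :
    ∑ v ∈ s.attachFin h, f v.1 = ∑ i ∈ s, f i := by
  refine Finset.sum_bij' (fun v _ => v.1) (fun m hm => (⟨m, h m hm⟩ : Fin n)) ?_ ?_ ?_ ?_ ?_
  · intro a ha; rwa [Finset.mem_attachFin] at ha
  · intro a ha; rw [Finset.mem_attachFin]; exact ha
  · intro a ha; rfl
  · intro a ha; rfl
  · intro a ha; rfl

lemma nec {n : ℕ} (G : SimpleGraph (Fin n)) [DecidableRel G.Adj] (d : ℕ → ℕ)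
    (hd : ∀ v : Fin n, G.degree v = d v.1) :
    Even (∑ i ∈ range n, d i) ∧
      ∀ j, 1 ≤ j → j < n →
        ∑ i ∈ range j, d i ≤ j * (j - 1) + ∑ k ∈ Ico j n, min j (d k) := by
  classical
  constructor
  · have h1 : ∑ i ∈ range n, d i = ∑ v : Fin n, G.degree v := by
      rw [← Fin.sum_univ_eq_sum_range]
      exact Finset.sum_congr rfl fun v _ => (hd v).symm
    rw [h1, SimpleGraph.sum_degrees_eq_twice_card_edges]
    exact ⟨_, (two_mul _)⟩
  · intro j hj1 hjn
    have hmem : ∀ m ∈ range j, m < n := fun m hm => lt_trans (mem_range.1 hm) hjn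
    set S : Finset (Fin n) := (range j).attachFin hmem with hS
    have hcard : S.card = j := by rw [hS, Finset.card_attachFin, Finset.card_range]
    have hL : ∑ i ∈ range j, d i = ∑ v ∈ S, G.degree v := by
      rw [hS, ← sum_attachFin (range j) hmem d]
      exact Finset.sum_congr rfl fun v _ => (hd v).symm
    have hcompl : Sᶜ = (Ico j n).attachFin (fun m hm => (mem_Ico.1 hm).2) := by
      ext v
      simp only [Finset.mem_compl, hS, Finset.mem_attachFin, mem_range, mem_Ico]
      omega
    have hR : ∑ w ∈ Sᶜ, min j (G.degree w) = ∑ k ∈ Ico j n, min j (d k) := by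
      rw [hcompl, ← sum_attachFin (Ico j n) (fun m hm => (mem_Ico.1 hm).2) (fun k => min j (d k))]
      exact Finset.sum_congr rfl fun v _ => by rw [hd v]
    calc ∑ i ∈ range j, d i = ∑ v ∈ S, G.degree v := hL
      _ ≤ S.card * (S.card - 1) + ∑ w ∈ Sᶜ, min S.card (G.degree w) := count_lemma G S
      _ = j * (j - 1) + ∑ k ∈ Ico j n, min j (d k) := by rw [hcard, hR]


section Suff
set_option maxHeartbeats 1000000

lemma suff {n : ℕ} (hn : 3 ≤ n) : ∀ N : ℕ, ∀ d : ℕ → ℕ,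
    (∀ i j, i ≤ j → j < n → d j ≤ d i) →
    (∑ i ∈ range n, d i) = N → Even N →
    (∀ j, 1 ≤ j → j < n →
      ∑ i ∈ range j, d i ≤ j * (j - 1) + ∑ k ∈ Ico j n, min j (d k)) →
    ∃ (G : SimpleGraph (Fin n)) (_ : DecidableRel G.Adj), ∀ v : Fin n, G.degree v = d v.1 := by
  intro N
  induction N using Nat.strong_induction_on with
  | _ N IH =>
  intro d hmono hsum heven hEG
  rcases Nat.eq_zero_or_pos N with hN0 | hNpos
  · -- base case: all degrees zero
    subst hN0
    have hz : ∀ i ∈ range n, d i = 0 := by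
      intro i hi
      exact (Finset.sum_eq_zero_iff).1 hsum i hi
    refine ⟨⊥, inferInstance, fun v => ?_⟩
    rw [SimpleGraph.bot_degree, hz v.1 (mem_range.2 v.isLt)]
  · -- main case
    -- choose s0 : the last positive index
    have hs0ex : ∃ s0, s0 < n ∧ 0 < d s0 ∧ ∀ k, k < n → 0 < d k → k ≤ s0 := by
      have hex : ((range n).filter (fun i => 0 < d i)).Nonempty := by
        by_contra h
        rw [Finset.not_nonempty_iff_eq_empty, Finset.filter_eq_empty_iff] at h
        have : ∑ i ∈ range n, d i = 0 :=
          Finset.sum_eq_zero (fun i hi => by have := h hi; omega)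
        omega
      refine ⟨((range n).filter (fun i => 0 < d i)).max' hex, ?_, ?_, ?_⟩
      · have := Finset.max'_mem _ hex
        rw [mem_filter, mem_range] at this
        exact this.1
      · have := Finset.max'_mem _ hex
        rw [mem_filter, mem_range] at this
        exact this.2
      · intro k hk hdk
        exact Finset.le_max' ((range n).filter (fun i => 0 < d i)) k (mem_filter.2 ⟨mem_range.2 hk, hdk⟩)
    obtain ⟨s0, hs0n, hds0pos, hs0max⟩ := hs0ex
    have hzero : ∀ k, s0 < k → k < n → d k = 0 := by
      intro k h1 h2
      by_contra h
      have := hs0max k h2 (Nat.pos_of_ne_zero h)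
      omega
    have hs0pos : 1 ≤ s0 := by
      by_contra h
      have h10 : ∀ k, 1 ≤ k → k < n → d k = 0 := fun k hk1 hkn => hzero k (by omega) hkn
      have hEG1 := hEG 1 le_rfl (by omega)
      have hM : ∑ k ∈ Ico 1 n, min 1 (d k) = 0 :=
        Finset.sum_eq_zero (fun k hk => by
          rw [mem_Ico] at hk; rw [h10 k hk.1 hk.2]; simp)
      rw [Finset.sum_range_one, hM] at hEG1
      have hNd0 : ∑ i ∈ range n, d i = d 0 :=
        Finset.sum_eq_single_of_mem 0 (mem_range.2 (by omega))
          (fun k hk hne => h10 k (by omega) (mem_range.1 hk))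
      omega
    -- choose t0
    have ht0ex : ∃ t0, t0 < s0 ∧ (∀ i, i ≤ t0 → d i = d 0) ∧
        (t0 + 1 < s0 → d (t0+1) < d t0) := by
      have hstepgen : ∀ t0, (∀ i, i < t0 → ¬ (i < s0 ∧ d (i+1) < d i)) → t0 < s0 →
          ∀ i, i ≤ t0 → d i = d 0 := by
        intro t0 hnd ht0s i
        induction i with
        | zero => intro _; rfl
        | succ i ih =>
          intro hi
          have h1 : ¬ (i < s0 ∧ d (i+1) < d i) := hnd i (by omega)
          have h2 : d (i+1) ≤ d i := hmono i (i+1) (by omega) (by omega)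
          have h3 : d (i+1) = d i := by
            rcases Nat.lt_or_ge (d (i+1)) (d i) with h | h
            · exact absurd ⟨by omega, h⟩ h1
            · omega
          rw [h3, ih (by omega)]
      by_cases hD : ∃ i, i < s0 ∧ d (i+1) < d i
      · classical
        refine ⟨Nat.find hD, (Nat.find_spec hD).1, ?_, fun _ => (Nat.find_spec hD).2⟩
        exact hstepgen _ (fun i hi => Nat.find_min hD hi) (Nat.find_spec hD).1
      · push_neg at hD
        refine ⟨s0 - 1, by omega, ?_, by omega⟩
        refine hstepgen _ ?_ (by omega)
        intro i _
        rintro ⟨h1, h2⟩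
        exact absurd h2 (by have := hD i h1; omega)
    obtain ⟨t0, ht0lt, hconst, hdesc⟩ := ht0ex
    set c := d 0 with hcdef
    have hdt0c : d t0 = c := hconst t0 le_rfl
    have hcge : 1 ≤ c := by
      have := hmono t0 s0 (le_of_lt ht0lt) hs0n
      omega
    have ht0n : t0 < n := by omega
    have hts : t0 ≠ s0 := by omega
    -- the reduced sequence
    set d' : ℕ → ℕ := fun i => if i = t0 ∨ i = s0 then d i - 1 else d i with hd'def
    have hd't0 : d' t0 = d t0 - 1 := by rw [hd'def]; simp
    have hd's0 : d' s0 = d s0 - 1 := by rw [hd'def]; simp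
    have hd'other : ∀ i, i ≠ t0 → i ≠ s0 → d' i = d i := by
      intro i h1 h2; rw [hd'def]; simp [h1, h2]
    have hd'le : ∀ i, d' i ≤ d i := by
      intro i
      by_cases h1 : i = t0
      · rw [h1, hd't0]; omega
      · by_cases h2 : i = s0
        · rw [h2, hd's0]; omega
        · rw [hd'other i h1 h2]
    have hsumF : ∀ F : Finset ℕ,
        ∑ i ∈ F, d' i + ((if t0 ∈ F then 1 else 0) + (if s0 ∈ F then 1 else 0))
          = ∑ i ∈ F, d i := by
      intro F
      have hpt : ∀ i ∈ F, d i = d' i + ((if i = t0 then 1 else 0) + (if i = s0 then 1 else 0)) := by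
        intro i _
        by_cases h1 : i = t0
        · rw [h1, hd't0, if_pos rfl, if_neg hts]
          omega
        · by_cases h2 : i = s0
          · rw [h2, hd's0, if_neg (fun h => hts h.symm), if_pos rfl]
            omega
          · rw [hd'other i h1 h2, if_neg h1, if_neg h2]
            omega
      rw [Finset.sum_congr rfl hpt, Finset.sum_add_distrib, Finset.sum_add_distrib,
        Finset.sum_ite_eq' F t0 (fun _ => 1), Finset.sum_ite_eq' F s0 (fun _ => 1)]
    have hsum' : ∑ i ∈ range n, d' i + 2 = N := by
      have := hsumF (range n)
      rw [if_pos (mem_range.2 ht0n), if_pos (mem_range.2 hs0n)] at this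
      omega
    -- monotonicity of d'
    have hkey1 : ∀ jj, t0 < jj → jj ≠ s0 → jj < n → d jj ≤ d t0 - 1 := by
      intro jj h1 h2 h3
      rcases lt_or_gt_of_ne h2 with h4 | h4
      · have hd1 : d (t0+1) < d t0 := hdesc (by omega)
        have := hmono (t0+1) jj (by omega) h3
        omega
      · have := hzero jj (by omega) h3
        have h5 : 1 ≤ d t0 := by rw [hdt0c]; exact hcge
        omega
    have hmono' : ∀ i j, i ≤ j → j < n → d' j ≤ d' i := by
      intro i j hij hjn
      rcases eq_or_lt_of_le hij with rfl | hlt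
      · exact le_rfl
      have hbase : d j ≤ d i := hmono i j hij hjn
      by_cases hit : i = t0
      · by_cases hjs : j = s0
        · rw [hit, hjs, hd't0, hd's0]
          have := hmono t0 s0 (le_of_lt ht0lt) hs0n
          omega
        · have hjt : j ≠ t0 := by omega
          rw [hit, hd't0, hd'other j hjt hjs]
          exact hkey1 j (by omega) hjs hjn
      · by_cases his : i = s0
        · have hjt : j ≠ t0 := by omega
          have hjs : j ≠ s0 := by omega
          rw [his, hd'other j hjt hjs, hzero j (by omega) hjn]
          exact Nat.zero_le _
        · rw [hd'other i hit his]
          exact le_trans (hd'le j) hbase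
    -- EG for d'
    have hEG' : ∀ j, 1 ≤ j → j < n →
        ∑ i ∈ range j, d' i ≤ j * (j - 1) + ∑ k ∈ Ico j n, min j (d' k) := by
      intro j hj1 hjn
      have hLrel := hsumF (range j)
      rcases lt_or_ge s0 j with hcase1 | hcase2
      · -- s0 < j
        rw [if_pos (mem_range.2 (by omega)), if_pos (mem_range.2 hcase1)] at hLrel
        have hM : ∑ k ∈ Ico j n, min j (d' k) = ∑ k ∈ Ico j n, min j (d k) := by
          refine Finset.sum_congr rfl fun k hk => ?_
          rw [mem_Ico] at hk
          rw [hd'other k (by omega) (by omega)]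
        have := hEG j hj1 hjn
        omega
      · rcases lt_or_ge t0 j with hcase2a | hcase3
        · -- t0 < j ≤ s0
          rw [if_pos (mem_range.2 hcase2a), if_neg (by rw [mem_range]; omega)] at hLrel
          have hM : ∑ k ∈ Ico j n, min j (d k) ≤ ∑ k ∈ Ico j n, min j (d' k) + 1 := by
            have hpt : ∀ k ∈ Ico j n, min j (d k) ≤ min j (d' k) + (if k = s0 then 1 else 0) := by
              intro k hk
              rw [mem_Ico] at hk
              by_cases hks : k = s0
              · rw [hks, hd's0, if_pos rfl]
                rcases le_or_gt (d s0) j with h | h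
                · rw [min_eq_right h, min_eq_right (by omega)]
                  omega
                · rw [min_eq_left (by omega), min_eq_left (by omega)]
                  omega
              · rw [hd'other k (by omega) hks, if_neg hks]
                exact le_self_add
            calc ∑ k ∈ Ico j n, min j (d k)
                ≤ ∑ k ∈ Ico j n, (min j (d' k) + (if k = s0 then 1 else 0)) :=
                  Finset.sum_le_sum hpt
              _ = ∑ k ∈ Ico j n, min j (d' k) + (if s0 ∈ Ico j n then 1 else 0) := by
                  rw [Finset.sum_add_distrib, Finset.sum_ite_eq' (Ico j n) s0 (fun _ => 1)]
              _ ≤ ∑ k ∈ Ico j n, min j (d' k) + 1 := by split_ifs <;> omega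
          have := hEG j hj1 hjn
          omega
        · -- j ≤ t0
          rw [if_neg (by rw [mem_range]; omega), if_neg (by rw [mem_range]; omega)] at hLrel
          have hLc : ∑ i ∈ range j, d i = j * c := by
            rw [Finset.sum_congr rfl (fun i hi => hconst i (by rw [mem_range] at hi; omega)),
              Finset.sum_const, card_range, smul_eq_mul]
          rcases lt_or_ge c (j+1) with hcB | hcA
          · -- c ≤ j
            have hall : ∀ k, k < n → d k ≤ j := by
              intro k hk
              have := hmono 0 k (Nat.zero_le k) hk
              omega
            have hmind : ∑ k ∈ Ico j n, min j (d k) = ∑ k ∈ Ico j n, d k := by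
              refine Finset.sum_congr rfl fun k hk => ?_
              rw [mem_Ico] at hk
              exact min_eq_right (hall k hk.2)
            have hmind' : ∑ k ∈ Ico j n, min j (d' k) = ∑ k ∈ Ico j n, d' k := by
              refine Finset.sum_congr rfl fun k hk => ?_
              rw [mem_Ico] at hk
              exact min_eq_right (le_trans (hd'le k) (hall k hk.2))
            have hV := hsumF (Ico j n)
            rw [if_pos (mem_Ico.2 ⟨hcase3, ht0n⟩), if_pos (mem_Ico.2 ⟨by omega, hs0n⟩)] at hV
            -- lower bounds on V = ∑ k ∈ Ico j n, d k
            have hVsplit : ∑ k ∈ Ico j n, d k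
                = ∑ k ∈ Ico j (t0+1), d k + ∑ k ∈ Ico (t0+1) (s0+1), d k
                  + ∑ k ∈ Ico (s0+1) n, d k := by
              rw [Finset.sum_Ico_consecutive _ (by omega : j ≤ t0+1) (by omega : t0+1 ≤ s0+1),
                Finset.sum_Ico_consecutive _ (by omega : j ≤ s0+1) (by omega : s0+1 ≤ n)]
            have hpart1 : ∑ k ∈ Ico j (t0+1), d k = (t0+1-j) * c := by
              rw [Finset.sum_congr rfl (fun k hk => hconst k (by rw [mem_Ico] at hk; omega)),
                Finset.sum_const, Nat.card_Ico, smul_eq_mul]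
            have hpart2 : s0 - t0 ≤ ∑ k ∈ Ico (t0+1) (s0+1), d k := by
              have h1 : ∀ k ∈ Ico (t0+1) (s0+1), 1 ≤ d k := by
                intro k hk
                rw [mem_Ico] at hk
                have := hmono k s0 (by omega) hs0n
                omega
              calc s0 - t0 = ∑ _k ∈ Ico (t0+1) (s0+1), 1 := by
                    rw [Finset.sum_const, Nat.card_Ico, smul_eq_mul, mul_one]
                    omega
                _ ≤ ∑ k ∈ Ico (t0+1) (s0+1), d k := Finset.sum_le_sum h1
            have hc1 : 1 * c ≤ (t0+1-j) * c := Nat.mul_le_mul_right c (by omega)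
            rcases eq_or_lt_of_le (show c ≤ j by omega) with hceq | hclt
            · -- c = j : parity
              have hNsplit : ∑ i ∈ range n, d i = ∑ i ∈ range j, d i + ∑ k ∈ Ico j n, d k := by
                simp only [Finset.range_eq_Ico]
                rw [Finset.sum_Ico_consecutive _ (Nat.zero_le j) (by omega : j ≤ n)]
              have hjj : j * (j + 1) = j * j + j := by ring
              have hevenjj : Even (j * j + j) := by
                rw [← hjj]; exact Nat.even_mul_succ_self j
              obtain ⟨a, ha⟩ := heven
              obtain ⟨b, hb⟩ := hevenjj
              have hjcjj : j * c = j * j := by rw [hceq]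
              have hjid : j * (j - 1) + j = j * j := by
                have h1 : j * (j - 1 + 1) = j * (j-1) + j := Nat.mul_succ j (j-1)
                have h2 : j - 1 + 1 = j := by omega
                rw [h2] at h1
                omega
              omega
            · -- c < j
              have hmul : j * c ≤ j * (j - 1) := Nat.mul_le_mul_left j (by omega)
              omega
          · -- j + 1 ≤ c
            rcases le_or_gt (j+1) (d s0) with hds | hds
            · -- no drop
              have hM : ∑ k ∈ Ico j n, min j (d' k) = ∑ k ∈ Ico j n, min j (d k) := by
                refine Finset.sum_congr rfl fun k hk => ?_
                by_cases hkt : k = t0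
                · rw [hkt, hd't0, hdt0c, min_eq_left (by omega), min_eq_left (by omega)]
                · by_cases hks : k = s0
                  · rw [hks, hd's0, min_eq_left (by omega), min_eq_left (by omega)]
                  · rw [hd'other k hkt hks]
              have := hEG j hj1 hjn
              omega
            · -- drop: d s0 ≤ j; prove by contradiction
              by_contra hgoal
              push_neg at hgoal
              have hMd : ∑ k ∈ Ico j n, min j (d k) ≤ ∑ k ∈ Ico j n, min j (d' k) + 1 := by
                have hpt : ∀ k ∈ Ico j n, min j (d k) ≤ min j (d' k) + (if k = s0 then 1 else 0) := by
                  intro k hk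
                  by_cases hks : k = s0
                  · rw [hks, hd's0, if_pos rfl]
                    rcases le_or_gt (d s0) j with h | h
                    · rw [min_eq_right h, min_eq_right (by omega)]
                      omega
                    · rw [min_eq_left (by omega), min_eq_left (by omega)]
                      omega
                  · by_cases hkt : k = t0
                    · rw [hkt, hd't0, hdt0c, min_eq_left (by omega), min_eq_left (by omega), if_neg hts]
                      omega
                    · rw [hd'other k hkt hks, if_neg hks]
                      exact le_self_add
                calc ∑ k ∈ Ico j n, min j (d k)
                    ≤ ∑ k ∈ Ico j n, (min j (d' k) + (if k = s0 then 1 else 0)) :=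
                      Finset.sum_le_sum hpt
                  _ = ∑ k ∈ Ico j n, min j (d' k) + (if s0 ∈ Ico j n then 1 else 0) := by
                      rw [Finset.sum_add_distrib, Finset.sum_ite_eq' (Ico j n) s0 (fun _ => 1)]
                  _ ≤ ∑ k ∈ Ico j n, min j (d' k) + 1 := by split_ifs <;> omega
              have hEGj := hEG j hj1 hjn
              have hE0 : ∑ i ∈ range j, d i = j * (j-1) + ∑ k ∈ Ico j n, min j (d k) := by
                omega
              -- define r
              have hrex : ∃ r, r < n ∧ j+1 ≤ d r ∧ ∀ k, k < n → j+1 ≤ d k → k ≤ r := by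
                have hrexne : ((range n).filter (fun k => j+1 ≤ d k)).Nonempty := by
                  refine ⟨t0, ?_⟩
                  rw [mem_filter, mem_range]
                  exact ⟨ht0n, by omega⟩
                refine ⟨((range n).filter (fun k => j+1 ≤ d k)).max' hrexne, ?_, ?_, ?_⟩
                · have := Finset.max'_mem _ hrexne
                  rw [mem_filter, mem_range] at this
                  exact this.1
                · have := Finset.max'_mem _ hrexne
                  rw [mem_filter, mem_range] at this
                  exact this.2
                · intro k hk hdk
                  exact Finset.le_max' ((range n).filter (fun k => j+1 ≤ d k)) k
                    (mem_filter.2 ⟨mem_range.2 hk, hdk⟩)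
              obtain ⟨r, hrn, hrd, hrmax⟩ := hrex
              have hge : ∀ k, k ≤ r → j+1 ≤ d k := by
                intro k hk
                have := hmono k r hk hrn
                omega
              have hrhigh : ∀ k, r < k → k < n → d k ≤ j := by
                intro k h1 h2
                by_contra h
                have := hrmax k h2 (by omega)
                omega
              have htr : t0 ≤ r := hrmax t0 ht0n (by omega)
              have hrs : r < s0 := by
                by_contra h
                have := hge s0 (by omega)
                omega
              have hjr : j ≤ r := by omega
              set U := ∑ k ∈ Ico (r+1) n, d k with hUdef
              have hMj : ∑ k ∈ Ico j n, min j (d k) = (r+1-j) * j + U := by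
                rw [← Finset.sum_Ico_consecutive _ (by omega : j ≤ r+1) (by omega : r+1 ≤ n)]
                congr 1
                · rw [Finset.sum_congr rfl (fun k hk => min_eq_left ?_),
                    Finset.sum_const, Nat.card_Ico, smul_eq_mul]
                  rw [mem_Ico] at hk
                  have := hge k (by omega)
                  omega
                · exact Finset.sum_congr rfl (fun k hk => min_eq_right (by
                    rw [mem_Ico] at hk
                    exact hrhigh k (by omega) hk.2))
              have hid1 : j * (j-1) + (r+1-j) * j = j * r := by
                obtain ⟨j', rfl⟩ : ∃ j', j = j'+1 := ⟨j-1, by omega⟩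
                have h : j' + (r - j') = r := by omega
                calc (j'+1) * (j'+1-1) + (r+1-(j'+1)) * (j'+1)
                    = (j'+1) * j' + (r-j') * (j'+1) := by
                      rw [show j'+1-1 = j' from by omega, show r+1-(j'+1) = r-j' from by omega]
                  _ = (j'+1) * (j' + (r-j')) := by ring
                  _ = (j'+1) * r := by rw [h]
              have hE1 : j * c = j * r + U := by omega
              have hj1n : j + 1 < n := by omega
              have hEG2 := hEG (j+1) (by omega) hj1n
              have hL2 : ∑ i ∈ range (j+1), d i = (j+1) * c := by
                rw [Finset.sum_congr rfl (fun i hi => hconst i (by rw [mem_range] at hi; omega)),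
                  Finset.sum_const, card_range, smul_eq_mul]
              have hM2 : ∑ k ∈ Ico (j+1) n, min (j+1) (d k) = (r-j) * (j+1) + U := by
                rw [← Finset.sum_Ico_consecutive _ (by omega : j+1 ≤ r+1) (by omega : r+1 ≤ n)]
                congr 1
                · rw [Finset.sum_congr rfl (fun k hk => min_eq_left ?_),
                    Finset.sum_const, Nat.card_Ico, smul_eq_mul,
                    show r+1-(j+1) = r - j from by omega]
                  rw [mem_Ico] at hk
                  exact hge k (by omega)
                · exact Finset.sum_congr rfl (fun k hk => min_eq_right (by
                    rw [mem_Ico] at hk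
                    have := hrhigh k (by omega) hk.2
                    omega))
              have hid2 : (j+1) * ((j+1)-1) + (r-j) * (j+1) = (j+1) * r := by
                have h : j + (r-j) = r := by omega
                calc (j+1) * ((j+1)-1) + (r-j) * (j+1)
                    = (j+1) * j + (r-j) * (j+1) := by rw [show (j+1)-1 = j from by omega]
                  _ = (j+1) * (j + (r-j)) := by ring
                  _ = (j+1) * r := by rw [h]
              have hE2 : (j+1) * c ≤ (j+1) * r + U := by omega
              have ha : (j+1) * c = j * c + c := by ring
              have hb : (j+1) * r = j * r + r := by ring
              have hcr : c ≤ r := by omega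
              have hmul2 : j * c ≤ j * r := Nat.mul_le_mul le_rfl hcr
              have hU1 : 1 ≤ U := by
                have hs0mem' : s0 ∈ Ico (r+1) n := mem_Ico.2 ⟨by omega, hs0n⟩
                calc 1 ≤ d s0 := hds0pos
                  _ ≤ U := Finset.single_le_sum (f := d) (fun k _ => Nat.zero_le _) hs0mem'
              omega
    -- apply IH
    have hNge2 : 2 ≤ N := by
      obtain ⟨a, ha⟩ := heven
      omega
    obtain ⟨G', inst', hdeg'⟩ := IH (N - 2) (by omega) d' hmono' (by omega)
      (by obtain ⟨a, ha⟩ := heven; exact ⟨a - 1, by omega⟩) hEG'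
    -- set up vertices
    have hds0ge1 : 1 ≤ d s0 := hds0pos
    set vt : Fin n := ⟨t0, ht0n⟩ with hvtdef
    set vs : Fin n := ⟨s0, hs0n⟩ with hvsdef
    have hvts : vt ≠ vs := by
      intro h
      rw [Fin.ext_iff] at h
      exact hts h
    have hvt1 : (vt : Fin n).1 = t0 := rfl
    have hvs1 : (vs : Fin n).1 = s0 := rfl
    have hdegvt : G'.degree vt = d t0 - 1 := by rw [hdeg' vt, hvt1, hd't0]
    have hdegvs : G'.degree vs = d s0 - 1 := by rw [hdeg' vs, hvs1, hd's0]
    have hdother : ∀ v : Fin n, v ≠ vt → v ≠ vs → G'.degree v = d v.1 := by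
      intro v h1 h2
      rw [hdeg' v, hd'other v.1 (fun h => h1 (Fin.ext h)) (fun h => h2 (Fin.ext h))]
    by_cases hadjts : G'.Adj vt vs
    · -- need a rewiring edge
      have hgood : ∃ u w : Fin n, G'.Adj u w ∧ ¬(G'.Adj vt u ∨ vt = u) ∧ ¬(G'.Adj vs w ∨ vs = w) := by
        by_contra hcontra
        have hbad : ∀ u w : Fin n, G'.Adj u w →
            (G'.Adj vt u ∨ vt = u) ∨ (G'.Adj vs w ∨ vs = w) := by
          intro u w huw
          by_cases h1 : G'.Adj vt u ∨ vt = u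
          · exact Or.inl h1
          · by_cases h2 : G'.Adj vs w ∨ vs = w
            · exact Or.inr h2
            · exact absurd ⟨u, w, huw, h1, h2⟩ hcontra
        classical
        set A : Finset (Fin n) := insert vt (G'.neighborFinset vt) with hAdef
        set B : Finset (Fin n) := insert vs (G'.neighborFinset vs) with hBdef
        have memA : ∀ z : Fin n, z ∈ A ↔ (G'.Adj vt z ∨ vt = z) := by
          intro z
          rw [hAdef, Finset.mem_insert, SimpleGraph.mem_neighborFinset]
          constructor
          · rintro (h | h)
            · exact Or.inr h.symm
            · exact Or.inl h
          · rintro (h | h)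
            · exact Or.inr h
            · exact Or.inl h.symm
        have memB : ∀ z : Fin n, z ∈ B ↔ (G'.Adj vs z ∨ vs = z) := by
          intro z
          rw [hBdef, Finset.mem_insert, SimpleGraph.mem_neighborFinset]
          constructor
          · rintro (h | h)
            · exact Or.inr h.symm
            · exact Or.inl h
          · rintro (h | h)
            · exact Or.inr h
            · exact Or.inl h.symm
        have cardA : A.card = d t0 := by
          rw [hAdef, Finset.card_insert_of_notMem (G'.notMem_neighborFinset_self vt),
            SimpleGraph.card_neighborFinset_eq_degree, hdegvt]
          omega
        have cardB : B.card = d s0 := by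
          rw [hBdef, Finset.card_insert_of_notMem (G'.notMem_neighborFinset_self vs),
            SimpleGraph.card_neighborFinset_eq_degree, hdegvs]
          omega
        have hvsA : vs ∈ A := (memA vs).2 (Or.inl hadjts)
        have hvtB : vt ∈ B := (memB vt).2 (Or.inl hadjts.symm)
        have hvtA : vt ∈ A := (memA vt).2 (Or.inr rfl)
        have hvsB : vs ∈ B := (memB vs).2 (Or.inr rfl)
        -- B ⊆ A
        have hBA : ∀ z : Fin n, z ∈ B → z ∈ A := by
          intro z hzB
          by_contra hzA
          have hz_ne_vs : z ≠ vs := fun h => hzA (h ▸ hvsA)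
          have hz_ne_vt : z ≠ vt := fun h => hzA (h ▸ hvtA)
          have hadjz : G'.Adj vs z := by
            rcases (memB z).1 hzB with h | h
            · exact h
            · exact absurd h.symm hz_ne_vs
          have hnb : G'.neighborFinset z ⊆ B.erase z := by
            intro x hx
            rw [SimpleGraph.mem_neighborFinset] at hx
            have hb := hbad z x hx
            rw [Finset.mem_erase]
            refine ⟨(G'.ne_of_adj hx).symm, ?_⟩
            rcases hb with h | h
            · exact absurd ((memA z).2 h) hzA
            · exact (memB x).2 h
          have hcard : G'.degree z ≤ d s0 - 1 := by
            calc G'.degree z = (G'.neighborFinset z).card :=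
              (SimpleGraph.card_neighborFinset_eq_degree _ _).symm
              _ ≤ (B.erase z).card := Finset.card_le_card hnb
              _ = d s0 - 1 := by rw [Finset.card_erase_of_mem hzB, cardB]
          have hdz : G'.degree z = d z.1 := hdother z hz_ne_vt hz_ne_vs
          have hdegz1 : 1 ≤ G'.degree z := by
            rw [← SimpleGraph.card_neighborFinset_eq_degree]
            refine Finset.card_pos.2 ⟨vs, ?_⟩
            rw [SimpleGraph.mem_neighborFinset]
            exact hadjz.symm
          rcases le_or_gt z.1 s0 with hz | hz
          · have := hmono z.1 s0 hz hs0n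
            omega
          · have := hzero z.1 hz z.isLt
            omega
        -- all small-index vertices in A
        have hallA : ∀ z : Fin n, z.1 ≤ s0 → z ∈ A := by
          intro z hzle
          by_contra hzA
          have hz_ne_vt : z ≠ vt := fun h => hzA (h ▸ hvtA)
          have hz_ne_vs : z ≠ vs := fun h => hzA (h ▸ hvsA)
          have hzB : z ∉ B := fun h => hzA (hBA z h)
          have hnb : G'.neighborFinset z ⊆ (B.erase vs).erase vt := by
            intro x hx
            rw [SimpleGraph.mem_neighborFinset] at hx
            have hb1 := hbad z x hx
            have hxB : x ∈ B := by
              rcases hb1 with h | h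
              · exact absurd ((memA z).2 h) hzA
              · exact (memB x).2 h
            have hb2 := hbad x z hx.symm
            have hxA : x ∈ A := by
              rcases hb2 with h | h
              · exact (memA x).2 h
              · exact absurd ((memB z).2 h) hzB
            have hx_ne_vt : x ≠ vt := by
              intro h
              exact hzA ((memA z).2 (Or.inl (h ▸ hx.symm)))
            have hx_ne_vs : x ≠ vs := by
              intro h
              exact hzB ((memB z).2 (Or.inl (h ▸ hx.symm)))
            rw [Finset.mem_erase, Finset.mem_erase]
            exact ⟨hx_ne_vt, hx_ne_vs, hxB⟩
          have hcard : G'.degree z ≤ d s0 - 2 := by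
            calc G'.degree z = (G'.neighborFinset z).card :=
              (SimpleGraph.card_neighborFinset_eq_degree _ _).symm
              _ ≤ ((B.erase vs).erase vt).card := Finset.card_le_card hnb
              _ = d s0 - 2 := by
                  rw [Finset.card_erase_of_mem (Finset.mem_erase.2 ⟨hvts, hvtB⟩),
                    Finset.card_erase_of_mem hvsB, cardB]
                  omega
          have hdz : G'.degree z = d z.1 := hdother z hz_ne_vt hz_ne_vs
          have := hmono z.1 s0 hzle hs0n
          omega
        -- |A| ≥ s0 + 1
        have hattach : ∀ m ∈ range (s0+1), m < n := fun m hm => by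
          rw [mem_range] at hm; omega
        have hsubA : (range (s0+1)).attachFin hattach ⊆ A := by
          intro z hz
          rw [Finset.mem_attachFin, mem_range] at hz
          exact hallA z (by omega)
        have hcards0 : s0 + 1 ≤ A.card := by
          calc s0 + 1 = ((range (s0+1)).attachFin hattach).card := by
                rw [Finset.card_attachFin, card_range]
            _ ≤ A.card := Finset.card_le_card hsubA
        -- |B| ≥ t0 + 2
        have hattach2 : ∀ m ∈ range t0, m < n := fun m hm => by
          rw [mem_range] at hm; omega
        have hsubB : ∀ z : Fin n, z.1 < t0 → z ∈ B := by
          intro z hzlt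
          by_contra hzB
          have hz_ne_vt : z ≠ vt := by
            intro h
            rw [h] at hzlt
            omega
          have hz_ne_vs : z ≠ vs := by
            intro h
            rw [h] at hzlt
            simp only [hvs1] at hzlt
            omega
          have hzA : z ∈ A := hallA z (by omega)
          have hnb : G'.neighborFinset z ⊆ A.erase z := by
            intro x hx
            rw [SimpleGraph.mem_neighborFinset] at hx
            have hb2 := hbad x z hx.symm
            have hxA : x ∈ A := by
              rcases hb2 with h | h
              · exact (memA x).2 h
              · exact absurd ((memB z).2 h) hzB
            rw [Finset.mem_erase]
            exact ⟨(G'.ne_of_adj hx).symm, hxA⟩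
          have hcard : G'.degree z ≤ d t0 - 1 := by
            calc G'.degree z = (G'.neighborFinset z).card :=
              (SimpleGraph.card_neighborFinset_eq_degree _ _).symm
              _ ≤ (A.erase z).card := Finset.card_le_card hnb
              _ = d t0 - 1 := by rw [Finset.card_erase_of_mem hzA, cardA]
          have hdz : G'.degree z = d z.1 := hdother z hz_ne_vt hz_ne_vs
          have hdzc : d z.1 = c := hconst z.1 (by omega)
          omega
        have hsubB' : insert vt (insert vs ((range t0).attachFin hattach2)) ⊆ B := by
          intro z hz
          rw [Finset.mem_insert, Finset.mem_insert] at hz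
          rcases hz with rfl | rfl | hz
          · exact hvtB
          · exact hvsB
          · rw [Finset.mem_attachFin, mem_range] at hz
            exact hsubB z hz
        have hcardT : (insert vt (insert vs ((range t0).attachFin hattach2))).card = t0 + 2 := by
          rw [Finset.card_insert_of_notMem, Finset.card_insert_of_notMem,
            Finset.card_attachFin, card_range]
          · rw [Finset.mem_attachFin, mem_range, hvs1]
            omega
          · rw [Finset.mem_insert, Finset.mem_attachFin, mem_range, hvt1]
            push_neg
            exact ⟨hvts, by omega⟩
        have hcardt0 : t0 + 2 ≤ d s0 := by
          calc t0 + 2 = (insert vt (insert vs ((range t0).attachFin hattach2))).card :=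
              hcardT.symm
            _ ≤ B.card := Finset.card_le_card hsubB'
            _ = d s0 := cardB
        -- EG at t0 + 1 gives a contradiction
        have hEGt := hEG (t0+1) (by omega) (by omega)
        have hLt : ∑ i ∈ range (t0+1), d i = (t0+1) * c := by
          rw [Finset.sum_congr rfl (fun i hi => hconst i (by rw [mem_range] at hi; omega)),
            Finset.sum_const, card_range, smul_eq_mul]
        have hMt : ∑ k ∈ Ico (t0+1) n, min (t0+1) (d k) = (s0-t0) * (t0+1) := by
          rw [← Finset.sum_Ico_consecutive _ (by omega : t0+1 ≤ s0+1) (by omega : s0+1 ≤ n)]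
          have h2 : ∑ k ∈ Ico (s0+1) n, min (t0+1) (d k) = 0 :=
            Finset.sum_eq_zero (fun k hk => by
              rw [mem_Ico] at hk
              rw [hzero k (by omega) hk.2]
              simp)
          have h1 : ∑ k ∈ Ico (t0+1) (s0+1), min (t0+1) (d k) = (s0-t0) * (t0+1) := by
            rw [Finset.sum_congr rfl (fun k hk => min_eq_left ?_), Finset.sum_const,
              Nat.card_Ico, smul_eq_mul, show s0+1-(t0+1) = s0-t0 from by omega]
            rw [mem_Ico] at hk
            have := hmono k s0 (by omega) hs0n
            omega
          rw [h1, h2]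
          omega
        have hid : (t0+1) * t0 + (s0-t0) * (t0+1) = (t0+1) * s0 := by
          have h : t0 + (s0 - t0) = s0 := by omega
          calc (t0+1) * t0 + (s0-t0) * (t0+1) = (t0+1) * (t0 + (s0-t0)) := by ring
            _ = (t0+1) * s0 := by rw [h]
        rw [hLt, hMt, show t0+1-1 = t0 from by omega] at hEGt
        have hcs0 : (t0+1) * c ≤ (t0+1) * s0 := by omega
        have hcs0' : c ≤ s0 := Nat.le_of_mul_le_mul_left hcs0 (by omega)
        omega
      obtain ⟨u, w, huw, hnu, hnw⟩ := hgood
      push_neg at hnu hnw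
      obtain ⟨hnadjtu, hne_tu⟩ := hnu
      obtain ⟨hnadjsw, hne_sw⟩ := hnw
      have hne_tw : w ≠ vt := by
        intro h
        exact hnadjtu (h ▸ huw.symm)
      have hne_su : u ≠ vs := by
        intro h
        exact hnadjsw (h ▸ huw)
      have hne_uw : u ≠ w := G'.ne_of_adj huw
      obtain ⟨G1, i1, hA1, hD1⟩ := del_edge_degree G' huw
      have hnadj1 : ¬ G1.Adj vt u := fun h => hnadjtu ((hA1 _ _).1 h).1
      obtain ⟨G2, i2, hA2, hD2⟩ := add_edge_degree G1 hne_tu hnadj1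
      have hnadj2 : ¬ G2.Adj vs w := by
        intro h
        rw [hA2] at h
        rcases h with h | ⟨h, -⟩ | ⟨h, -⟩
        · exact hnadjsw ((hA1 _ _).1 h).1
        · exact hvts h.symm
        · exact hne_su h.symm
      obtain ⟨G3, i3, hA3, hD3⟩ := add_edge_degree G2 hne_sw hnadj2
      refine ⟨G3, i3, fun v => ?_⟩
      have e1 := hD1 v
      have e2 := hD2 v
      have e3 := hD3 v
      rw [hdeg' v] at e1
      by_cases hv1 : v = vt
      · rw [hv1] at e1 e2 e3 ⊢
        rw [hvt1, hd't0] at e1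
        rw [if_neg (fun h => h.elim hne_tu (fun h' => hne_tw h'.symm))] at e1
        rw [if_pos (Or.inl rfl)] at e2
        rw [if_neg (fun h => h.elim hvts (fun h' => hne_tw h'.symm))] at e3
        rw [hvt1]
        omega
      · by_cases hv2 : v = vs
        · rw [hv2] at e1 e2 e3 ⊢
          rw [hvs1, hd's0] at e1
          rw [if_neg (fun h => h.elim (fun h' => hne_su h'.symm) (fun h' => hne_sw h'))] at e1
          rw [if_neg (fun h => h.elim (fun h' => hvts h'.symm) (fun h' => hne_su h'.symm))] at e2
          rw [if_pos (Or.inl rfl)] at e3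
          rw [hvs1]
          omega
        · have hvd : d' v.1 = d v.1 :=
            hd'other v.1 (fun h => hv1 (Fin.ext (by rw [h, hvt1])))
              (fun h => hv2 (Fin.ext (by rw [h, hvs1])))
          rw [hvd] at e1
          by_cases hv3 : v = u
          · rw [hv3] at e1 e2 e3 ⊢
            rw [if_pos (Or.inl rfl)] at e1
            rw [if_pos (Or.inr rfl)] at e2
            rw [if_neg (fun h => h.elim (fun h' => hne_su (h'.symm ▸ rfl)) hne_uw)] at e3
            omega
          · by_cases hv4 : v = w
            · rw [hv4] at e1 e2 e3 ⊢
              rw [if_pos (Or.inr rfl)] at e1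
              rw [if_neg (fun h => h.elim (fun h' => hne_tw h') (fun h' => hne_uw h'.symm))] at e2
              rw [if_pos (Or.inr rfl)] at e3
              omega
            · rw [if_neg (fun h => h.elim hv3 hv4)] at e1
              rw [if_neg (fun h => h.elim hv1 hv3)] at e2
              rw [if_neg (fun h => h.elim hv2 hv4)] at e3
              omega
    · -- simply add the edge vt-vs
      obtain ⟨G, instG, hGadj, hGdeg⟩ := add_edge_degree G' hvts hadjts
      refine ⟨G, instG, fun v => ?_⟩
      rw [hGdeg v]
      by_cases hv1 : v = vt
      · rw [hv1, if_pos (Or.inl rfl), hdegvt, hvt1]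
        omega
      · by_cases hv2 : v = vs
        · rw [hv2, if_pos (Or.inr rfl), hdegvs, hvs1]
          omega
        · rw [if_neg (fun h => h.elim hv1 hv2), hdother v hv1 hv2]
          omega

end Suff


/-- `b 1, …, b n` (1-indexed) is the degree sequence of a simple graph on `n` vertices. -/
def IsGraphical (n : ℕ) (b : ℕ → ℕ) : Prop :=
  ∃ (G : SimpleGraph (Fin n)) (_ : DecidableRel G.Adj), ∀ i : Fin n, G.degree i = b (i.1 + 1)

/-- Erdős–Gallai theorem. -/
theorem erdos_gallai (n : ℕ) (hn : 3 ≤ n) (b : ℕ → ℕ)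
    (hmono : ∀ i j, 1 ≤ i → i ≤ j → j ≤ n → b j ≤ b i)
    (hbound : b 1 ≤ n - 1) :
    IsGraphical n b ↔
      (Even (∑ i ∈ Finset.Icc 1 n, b i) ∧
        ∀ j, 1 ≤ j → j ≤ n - 1 →
          (∑ i ∈ Finset.Icc 1 j, b i) ≤ j * (j - 1) + ∑ k ∈ Finset.Icc (j + 1) n, min j (b k)) := by
  have hT2 : ∀ j : ℕ, ∑ i ∈ Finset.Icc 1 j, b i = ∑ i ∈ range j, b (i + 1) := by
    intro j
    rw [show Finset.Icc 1 j = Finset.Ico 1 (j+1) from (Finset.Ico_add_one_right_eq_Icc _ _).symm,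
      Finset.sum_Ico_eq_sum_range]
    rw [show j + 1 - 1 = j from by omega]
    exact Finset.sum_congr rfl fun i _ => by rw [show 1 + i = i + 1 from by omega]
  have hT3 : ∀ j : ℕ, ∑ k ∈ Finset.Icc (j+1) n, min j (b k)
      = ∑ k ∈ Ico j n, min j (b (k + 1)) := by
    intro j
    rw [show Finset.Icc (j+1) n = Finset.Ico (j+1) (n+1) from (Finset.Ico_add_one_right_eq_Icc _ _).symm]
    rw [Finset.sum_Ico_eq_sum_range, Finset.sum_Ico_eq_sum_range]
    rw [show n + 1 - (j + 1) = n - j from by omega]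
    exact Finset.sum_congr rfl fun i _ => by rw [show j + 1 + i = j + i + 1 from by omega]
  have hmono0 : ∀ i j, i ≤ j → j < n → b (j+1) ≤ b (i+1) := fun i j hij hjn =>
    hmono (i+1) (j+1) (by omega) (by omega) (by omega)
  constructor
  · rintro ⟨G, inst, hdeg⟩
    obtain ⟨he, hin⟩ := nec G (fun i => b (i + 1)) (fun v => hdeg v)
    constructor
    · rw [hT2 n]
      exact he
    · intro j hj1 hjn
      rw [hT2 j, hT3 j]
      exact hin j hj1 (by omega)
  · rintro ⟨heven, hineq⟩
    obtain ⟨G, inst, hdeg⟩ := suff hn (∑ i ∈ range n, b (i + 1)) (fun i => b (i + 1)) hmono0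
      rfl (by rw [hT2 n] at heven; exact heven)
      (fun j hj1 hjn => by
        have := hineq j hj1 (by omega)
        rw [hT2 j, hT3 j] at this
        exact this)
    exact ⟨G, inst, hdeg⟩
end

section
/- Let n ≥ 1 and let b = (b_1, ..., b_n) be a nonincreasing sequence of nonnegative integers with b_1 ≤ n-1. Then b is n-graphical if and only if (1) H_n = b_1 + ... + b_n is even, and (2) for every i with 1 ≤ i ≤ n such that i(i-1) < H_i, we have H_i ≤ i(i-1) + Σ_{k=i+1}^{n} min(i, b_k), where H_i = b_1 + ... + b_i. -/
open Finset SimpleGraph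

namespace ErdosGallaiTV

section toolkit
variable {V : Type*} [Fintype V] [DecidableEq V]

lemma degree_eq_sum_ind (G : SimpleGraph V) [DecidableRel G.Adj] (v : V) :
    G.degree v = ∑ w : V, if G.Adj v w then 1 else 0 := by
  have h : G.neighborFinset v = univ.filter (G.Adj v) := by ext w; simp
  rw [SimpleGraph.degree, h, card_filter]

lemma degree_shift {G₁ G₂ : SimpleGraph V} [DecidableRel G₁.Adj] [DecidableRel G₂.Adj]
    {v : V} (s u : V)
    (h : ∀ w, (if G₂.Adj v w then 1 else 0) + (if w = s then 1 else 0)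
      = (if G₁.Adj v w then 1 else 0) + (if w = u then 1 else 0)) :
    G₂.degree v = G₁.degree v := by
  have hs : ∑ w : V, (if w = s then (1:ℕ) else 0) = 1 := by simp [Finset.sum_ite_eq']
  have hu : ∑ w : V, (if w = u then (1:ℕ) else 0) = 1 := by simp [Finset.sum_ite_eq']
  have hsum := Finset.sum_congr rfl (fun w (_ : w ∈ univ) => h w)
  rw [Finset.sum_add_distrib, Finset.sum_add_distrib, hs, hu] at hsum
  rw [degree_eq_sum_ind, degree_eq_sum_ind]
  omega

lemma degree_congr {G₁ G₂ : SimpleGraph V} [DecidableRel G₁.Adj] [DecidableRel G₂.Adj]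
    {v : V} (h : ∀ w, G₂.Adj v w ↔ G₁.Adj v w) : G₂.degree v = G₁.degree v := by
  rw [degree_eq_sum_ind, degree_eq_sum_ind]
  exact Finset.sum_congr rfl fun w _ => by simp [h w]

/-- Degree-preserving switch making `p, q` nonadjacent. -/
lemma make_nonadjacent (G : SimpleGraph V) [DecidableRel G.Adj] {p q : V}
    (hne : p ≠ q)
    (hdegp : G.degree p + 1 < Fintype.card V)
    (hmin : ∀ u, u ≠ p → u ≠ q → G.degree q < G.degree u) :
    ∃ (G₂ : SimpleGraph V) (_ : DecidableRel G₂.Adj),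
      (∀ v, G₂.degree v = G.degree v) ∧ ¬G₂.Adj p q := by
  by_cases hpq : G.Adj p q
  swap
  · exact ⟨G, inferInstance, fun v => rfl, hpq⟩
  -- find u, a non-neighbor of p
  have hcard : #(insert p (G.neighborFinset p)) < Fintype.card V :=
    lt_of_le_of_lt (Finset.card_insert_le _ _) (by rw [SimpleGraph.degree] at hdegp; omega)
  have hex : ∃ u, u ∉ insert p (G.neighborFinset p) := by
    by_contra hall
    push_neg at hall
    have : (univ : Finset V) ⊆ insert p (G.neighborFinset p) := fun u _ => hall u
    have := Finset.card_le_card this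
    simp only [Finset.card_univ] at this
    omega
  obtain ⟨u, hu⟩ := hex
  simp only [Finset.mem_insert, SimpleGraph.mem_neighborFinset, not_or] at hu
  obtain ⟨hup, hupn⟩ := hu
  have huq : u ≠ q := fun h => hupn (h ▸ hpq)
  have hdegu : G.degree q < G.degree u := hmin u hup huq
  -- find v ∈ N(u) \ N[q]
  have hnsub : ¬ (G.neighborFinset u ⊆ insert q (G.neighborFinset q)) := by
    intro hsub
    have hinsq : #(insert q (G.neighborFinset q)) = G.degree q + 1 := by
      rw [Finset.card_insert_of_notMem (by simp), SimpleGraph.degree]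
    have h1 : G.degree u ≤ G.degree q + 1 := by
      have := Finset.card_le_card hsub
      rwa [hinsq] at this
    have heq : G.neighborFinset u = insert q (G.neighborFinset q) :=
      Finset.eq_of_subset_of_card_le hsub (by rw [hinsq]; exact hdegu)
    have hq : q ∈ G.neighborFinset u := heq ▸ Finset.mem_insert_self q _
    have hu2 : u ∈ G.neighborFinset q := by
      rw [SimpleGraph.mem_neighborFinset] at hq ⊢
      exact G.adj_symm hq
    have : u ∈ G.neighborFinset u := heq ▸ Finset.mem_insert_of_mem hu2
    rw [SimpleGraph.mem_neighborFinset] at this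
    exact G.irrefl this
  obtain ⟨v, hvmem, hvnot⟩ := Finset.not_subset.1 hnsub
  rw [SimpleGraph.mem_neighborFinset] at hvmem
  simp only [Finset.mem_insert, SimpleGraph.mem_neighborFinset, not_or] at hvnot
  obtain ⟨hvq, hvqn⟩ := hvnot
  have hvu : v ≠ u := fun h => G.irrefl (h ▸ hvmem)
  have hvp : v ≠ p := fun h => hupn (G.adj_symm (h ▸ hvmem))
  have hqu : q ≠ u := Ne.symm huq
  have hqp : q ≠ p := Ne.symm hne
  have hpu : p ≠ u := Ne.symm hup
  have hpv : p ≠ v := Ne.symm hvp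
  have hqv : q ≠ v := Ne.symm hvq
  have huv : u ≠ v := Ne.symm hvu
  have hnqv : ¬ G.Adj q v := hvqn
  have hnpu : ¬ G.Adj p u := hupn
  have hauv : G.Adj u v := hvmem
  have hqp2 : G.Adj q p := G.adj_symm hpq
  have hvu2 : G.Adj v u := G.adj_symm hauv
  have hnup : ¬ G.Adj u p := fun h => hnpu (G.adj_symm h)
  have hnvq : ¬ G.Adj v q := fun h => hnqv (G.adj_symm h)
  -- the switched graph
  have hsymm : ∀ a b, ((G.Adj a b ∧ ¬(a = p ∧ b = q) ∧ ¬(a = q ∧ b = p) ∧ ¬(a = u ∧ b = v) ∧ ¬(a = v ∧ b = u))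
    ∨ (a = p ∧ b = u) ∨ (a = u ∧ b = p) ∨ (a = q ∧ b = v) ∨ (a = v ∧ b = q)) →
    ((G.Adj b a ∧ ¬(b = p ∧ a = q) ∧ ¬(b = q ∧ a = p) ∧ ¬(b = u ∧ a = v) ∧ ¬(b = v ∧ a = u))
    ∨ (b = p ∧ a = u) ∨ (b = u ∧ a = p) ∨ (b = q ∧ a = v) ∨ (b = v ∧ a = q)) := by
    intro a b h
    rcases h with ⟨h, h1, h2, h3, h4⟩ | ⟨rfl, rfl⟩ | ⟨rfl, rfl⟩ | ⟨rfl, rfl⟩ | ⟨rfl, rfl⟩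
    · exact Or.inl ⟨G.adj_symm h, fun ⟨x1, x2⟩ => h2 ⟨x2, x1⟩, fun ⟨x1, x2⟩ => h1 ⟨x2, x1⟩,
        fun ⟨x1, x2⟩ => h4 ⟨x2, x1⟩, fun ⟨x1, x2⟩ => h3 ⟨x2, x1⟩⟩
    · exact Or.inr (Or.inr (Or.inl ⟨rfl, rfl⟩))
    · exact Or.inr (Or.inl ⟨rfl, rfl⟩)
    · exact Or.inr (Or.inr (Or.inr (Or.inr ⟨rfl, rfl⟩)))
    · exact Or.inr (Or.inr (Or.inr (Or.inl ⟨rfl, rfl⟩)))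
  have hloop : ∀ a, ¬ ((G.Adj a a ∧ ¬(a = p ∧ a = q) ∧ ¬(a = q ∧ a = p) ∧ ¬(a = u ∧ a = v) ∧ ¬(a = v ∧ a = u))
    ∨ (a = p ∧ a = u) ∨ (a = u ∧ a = p) ∨ (a = q ∧ a = v) ∨ (a = v ∧ a = q)) := by
    intro a h
    rcases h with ⟨h, -⟩ | ⟨rfl, h⟩ | ⟨rfl, h⟩ | ⟨rfl, h⟩ | ⟨rfl, h⟩
    · exact G.irrefl h
    · exact hpu h
    · exact hpu h.symm
    · exact hqv h
    · exact hqv h.symm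
  set G₂ : SimpleGraph V := ⟨fun a b =>
    (G.Adj a b ∧ ¬(a = p ∧ b = q) ∧ ¬(a = q ∧ b = p) ∧ ¬(a = u ∧ b = v) ∧ ¬(a = v ∧ b = u))
    ∨ (a = p ∧ b = u) ∨ (a = u ∧ b = p) ∨ (a = q ∧ b = v) ∨ (a = v ∧ b = q),
    ⟨fun a b h => hsymm a b h⟩, ⟨fun a h => hloop a h⟩⟩ with hG₂
  have hadj : ∀ a b, G₂.Adj a b ↔
    ((G.Adj a b ∧ ¬(a = p ∧ b = q) ∧ ¬(a = q ∧ b = p) ∧ ¬(a = u ∧ b = v) ∧ ¬(a = v ∧ b = u))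
    ∨ (a = p ∧ b = u) ∨ (a = u ∧ b = p) ∨ (a = q ∧ b = v) ∨ (a = v ∧ b = q)) := fun a b => Iff.rfl
  haveI : DecidableRel G₂.Adj := fun a b => decidable_of_iff _ (hadj a b).symm
  have hiffp : ∀ w, G₂.Adj p w ↔ ((G.Adj p w ∧ w ≠ q) ∨ w = u) := by
    intro w; rw [hadj]
    constructor
    · rintro (⟨h, h1, -, -, -⟩ | ⟨-, rfl⟩ | ⟨h1, -⟩ | ⟨h1, -⟩ | ⟨h1, -⟩)
      · exact Or.inl ⟨h, fun hq => h1 ⟨rfl, hq⟩⟩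
      · exact Or.inr rfl
      · exact absurd h1 hpu
      · exact absurd h1 hne
      · exact absurd h1 hpv
    · rintro (⟨h, hq⟩ | rfl)
      · exact Or.inl ⟨h, fun h' => hq h'.2, fun h' => hne h'.1, fun h' => hpu h'.1,
          fun h' => hpv h'.1⟩
      · exact Or.inr (Or.inl ⟨rfl, rfl⟩)
  have hiffq : ∀ w, G₂.Adj q w ↔ ((G.Adj q w ∧ w ≠ p) ∨ w = v) := by
    intro w; rw [hadj]
    constructor
    · rintro (⟨h, -, h2, -, -⟩ | ⟨h1, -⟩ | ⟨h1, -⟩ | ⟨-, rfl⟩ | ⟨h1, -⟩)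
      · exact Or.inl ⟨h, fun hp => h2 ⟨rfl, hp⟩⟩
      · exact absurd h1 hqp
      · exact absurd h1 hqu
      · exact Or.inr rfl
      · exact absurd h1 hqv
    · rintro (⟨h, hp⟩ | rfl)
      · exact Or.inl ⟨h, fun h' => hqp h'.1, fun h' => hp h'.2, fun h' => hqu h'.1,
          fun h' => hqv h'.1⟩
      · exact Or.inr (Or.inr (Or.inr (Or.inl ⟨rfl, rfl⟩)))
  have hiffu : ∀ w, G₂.Adj u w ↔ ((G.Adj u w ∧ w ≠ v) ∨ w = p) := by
    intro w; rw [hadj]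
    constructor
    · rintro (⟨h, -, -, h3, -⟩ | ⟨h1, -⟩ | ⟨-, rfl⟩ | ⟨h1, -⟩ | ⟨h1, -⟩)
      · exact Or.inl ⟨h, fun hv => h3 ⟨rfl, hv⟩⟩
      · exact absurd h1 hup
      · exact Or.inr rfl
      · exact absurd h1 huq
      · exact absurd h1 huv
    · rintro (⟨h, hv⟩ | rfl)
      · exact Or.inl ⟨h, fun h' => hup h'.1, fun h' => huq h'.1, fun h' => hv h'.2,
          fun h' => huv h'.1⟩
      · exact Or.inr (Or.inr (Or.inl ⟨rfl, rfl⟩))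
  have hiffv : ∀ w, G₂.Adj v w ↔ ((G.Adj v w ∧ w ≠ u) ∨ w = q) := by
    intro w; rw [hadj]
    constructor
    · rintro (⟨h, -, -, -, h4⟩ | ⟨h1, -⟩ | ⟨h1, -⟩ | ⟨h1, -⟩ | ⟨-, rfl⟩)
      · exact Or.inl ⟨h, fun hu' => h4 ⟨rfl, hu'⟩⟩
      · exact absurd h1 hvp
      · exact absurd h1 hvu
      · exact absurd h1 hvq
      · exact Or.inr rfl
    · rintro (⟨h, hu'⟩ | rfl)
      · exact Or.inl ⟨h, fun h' => hvp h'.1, fun h' => hvq h'.1, fun h' => hvu h'.1,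
          fun h' => hu' h'.2⟩
      · exact Or.inr (Or.inr (Or.inr (Or.inr ⟨rfl, rfl⟩)))
  refine ⟨G₂, inferInstance, ?_, ?_⟩
  · intro x
    by_cases hxp : x = p
    · subst hxp
      refine degree_shift q u (fun w => ?_)
      by_cases hwq : w = q
      · subst hwq; simp [hiffp, hpq, hqp2, hauv, hvu2, hnpu, hnup, hnqv, hnvq, hne, hpu, hpv, hqp, hqu, hqv, hup, huq, huv, hvp, hvq, hvu]
      · by_cases hwu : w = u
        · subst hwu; simp [hiffp, hpq, hqp2, hauv, hvu2, hnpu, hnup, hnqv, hnvq, hne, hpu, hpv, hqp, hqu, hqv, hup, huq, huv, hvp, hvq, hvu]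
        · simp [hiffp, hwq, hwu, hpq, hqp2, hauv, hvu2, hnpu, hnup, hnqv, hnvq, hne, hpu, hpv, hqp, hqu, hqv, hup, huq, huv, hvp, hvq, hvu]
    by_cases hxq : x = q
    · subst hxq
      refine degree_shift p v (fun w => ?_)
      by_cases hwp : w = p
      · subst hwp; simp [hiffq, hpq, hqp2, hauv, hvu2, hnpu, hnup, hnqv, hnvq, hne, hpu, hpv, hqp, hqu, hqv, hup, huq, huv, hvp, hvq, hvu]
      · by_cases hwv : w = v
        · subst hwv; simp [hiffq, hpq, hqp2, hauv, hvu2, hnpu, hnup, hnqv, hnvq, hne, hpu, hpv, hqp, hqu, hqv, hup, huq, huv, hvp, hvq, hvu]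
        · simp [hiffq, hwp, hwv, hpq, hqp2, hauv, hvu2, hnpu, hnup, hnqv, hnvq, hne, hpu, hpv, hqp, hqu, hqv, hup, huq, huv, hvp, hvq, hvu]
    by_cases hxu : x = u
    · subst hxu
      refine degree_shift v p (fun w => ?_)
      by_cases hwv : w = v
      · subst hwv; simp [hiffu, hpq, hqp2, hauv, hvu2, hnpu, hnup, hnqv, hnvq, hne, hpu, hpv, hqp, hqu, hqv, hup, huq, huv, hvp, hvq, hvu]
      · by_cases hwp : w = p
        · subst hwp; simp [hiffu, hpq, hqp2, hauv, hvu2, hnpu, hnup, hnqv, hnvq, hne, hpu, hpv, hqp, hqu, hqv, hup, huq, huv, hvp, hvq, hvu]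
        · simp [hiffu, hwv, hwp, hpq, hqp2, hauv, hvu2, hnpu, hnup, hnqv, hnvq, hne, hpu, hpv, hqp, hqu, hqv, hup, huq, huv, hvp, hvq, hvu]
    by_cases hxv : x = v
    · subst hxv
      refine degree_shift u q (fun w => ?_)
      by_cases hwu : w = u
      · subst hwu; simp [hiffv, hpq, hqp2, hauv, hvu2, hnpu, hnup, hnqv, hnvq, hne, hpu, hpv, hqp, hqu, hqv, hup, huq, huv, hvp, hvq, hvu]
      · by_cases hwq : w = q
        · subst hwq; simp [hiffv, hpq, hqp2, hauv, hvu2, hnpu, hnup, hnqv, hnvq, hne, hpu, hpv, hqp, hqu, hqv, hup, huq, huv, hvp, hvq, hvu]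
        · simp [hiffv, hwu, hwq, hpq, hqp2, hauv, hvu2, hnpu, hnup, hnqv, hnvq, hne, hpu, hpv, hqp, hqu, hqv, hup, huq, huv, hvp, hvq, hvu]
    · refine degree_congr (fun w => ?_)
      rw [hadj]
      constructor
      · rintro (⟨h, -⟩ | ⟨rfl, -⟩ | ⟨rfl, -⟩ | ⟨rfl, -⟩ | ⟨rfl, -⟩)
        · exact h
        · exact absurd rfl hxp
        · exact absurd rfl hxu
        · exact absurd rfl hxq
        · exact absurd rfl hxv
      · intro h
        exact Or.inl ⟨h, fun h' => hxp h'.1, fun h' => hxq h'.1,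
          fun h' => hxu h'.1, fun h' => hxv h'.1⟩
  · rw [hiffp]
    rintro (⟨-, h⟩ | h)
    · exact h rfl
    · exact huq h.symm



lemma degree_plus {G₁ G₂ : SimpleGraph V} [DecidableRel G₁.Adj] [DecidableRel G₂.Adj]
    {v u : V}
    (h : ∀ w, (if G₂.Adj v w then 1 else 0)
      = (if G₁.Adj v w then 1 else 0) + (if w = u then 1 else 0)) :
    G₂.degree v = G₁.degree v + 1 := by
  have hu : ∑ w : V, (if w = u then (1:ℕ) else 0) = 1 := by simp [Finset.sum_ite_eq']
  have hsum := Finset.sum_congr rfl (fun w (_ : w ∈ univ) => h w)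
  rw [Finset.sum_add_distrib, hu] at hsum
  rw [degree_eq_sum_ind, degree_eq_sum_ind]
  omega

/-- Add an edge between two nonadjacent vertices. -/
lemma add_edge (G : SimpleGraph V) [DecidableRel G.Adj] {x y : V} (hxy : x ≠ y)
    (hnadj : ¬G.Adj x y) :
    ∃ (G₃ : SimpleGraph V) (_ : DecidableRel G₃.Adj),
      G₃.degree x = G.degree x + 1 ∧ G₃.degree y = G.degree y + 1 ∧
      ∀ v, v ≠ x → v ≠ y → G₃.degree v = G.degree v := by
  have hsymm : ∀ a b : V, (G.Adj a b ∨ (a = x ∧ b = y) ∨ (a = y ∧ b = x)) →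
      (G.Adj b a ∨ (b = x ∧ a = y) ∨ (b = y ∧ a = x)) := by
    intro a b h
    rcases h with h | ⟨rfl, rfl⟩ | ⟨rfl, rfl⟩
    · exact Or.inl (G.adj_symm h)
    · exact Or.inr (Or.inr ⟨rfl, rfl⟩)
    · exact Or.inr (Or.inl ⟨rfl, rfl⟩)
  have hloop : ∀ a : V, ¬(G.Adj a a ∨ (a = x ∧ a = y) ∨ (a = y ∧ a = x)) := by
    intro a h
    rcases h with h | ⟨rfl, h⟩ | ⟨rfl, h⟩
    · exact G.irrefl h
    · exact hxy h
    · exact hxy h.symm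
  set G₃ : SimpleGraph V :=
    ⟨fun a b => G.Adj a b ∨ (a = x ∧ b = y) ∨ (a = y ∧ b = x),
      ⟨fun a b h => hsymm a b h⟩, ⟨fun a h => hloop a h⟩⟩ with hG₃
  have hadj : ∀ a b, G₃.Adj a b ↔ (G.Adj a b ∨ (a = x ∧ b = y) ∨ (a = y ∧ b = x)) :=
    fun a b => Iff.rfl
  haveI : DecidableRel G₃.Adj := fun a b => decidable_of_iff _ (hadj a b).symm
  refine ⟨G₃, inferInstance, ?_, ?_, ?_⟩
  · refine degree_plus (u := y) (fun w => ?_)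
    have hx : G₃.Adj x w ↔ (G.Adj x w ∨ w = y) := by
      rw [hadj]
      constructor
      · rintro (h | ⟨-, rfl⟩ | ⟨h1, -⟩)
        · exact Or.inl h
        · exact Or.inr rfl
        · exact absurd h1 hxy
      · rintro (h | rfl)
        · exact Or.inl h
        · exact Or.inr (Or.inl ⟨rfl, rfl⟩)
    by_cases hw : w = y
    · subst hw; simp [hx, hnadj]
    · simp [hx, hw, hxy]
  · refine degree_plus (u := x) (fun w => ?_)
    have hy : G₃.Adj y w ↔ (G.Adj y w ∨ w = x) := by
      rw [hadj]
      constructor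
      · rintro (h | ⟨h1, -⟩ | ⟨-, rfl⟩)
        · exact Or.inl h
        · exact absurd h1 hxy.symm
        · exact Or.inr rfl
      · rintro (h | rfl)
        · exact Or.inl h
        · exact Or.inr (Or.inr ⟨rfl, rfl⟩)
    by_cases hw : w = x
    · subst hw
      have hny : ¬ G.Adj y w := fun h => hnadj (G.adj_symm h)
      simp [hy, hny]
    · simp [hy, hw, hxy.symm]
  · intro v hvx hvy
    refine degree_congr (fun w => ?_)
    rw [hadj]
    constructor
    · rintro (h | ⟨rfl, -⟩ | ⟨rfl, -⟩)
      · exact h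
      · exact absurd rfl hvx
      · exact absurd rfl hvy
    · exact Or.inl


end toolkit

lemma reindex_fin (n a c : ℕ) (hc : c ≤ n) (g : ℕ → ℕ) :
    ∑ v ∈ (univ : Finset (Fin n)).filter (fun v => a ≤ v.1 ∧ v.1 < c), g (v.1 + 1)
      = ∑ k ∈ Icc (a + 1) c, g k := by
  rcases Nat.eq_zero_or_pos n with rfl | hn
  · have hc0 : c = 0 := Nat.le_zero.1 hc
    subst hc0; simp
  refine Finset.sum_nbij' (fun v => v.1 + 1) (fun k => ⟨(k - 1) % n, Nat.mod_lt _ hn⟩)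
    ?_ ?_ ?_ ?_ ?_
  · intro v hv; simp only [mem_filter] at hv; simp only [mem_Icc]; omega
  · intro k hk; simp only [mem_Icc] at hk
    simp only [mem_filter, mem_univ, true_and]
    rw [Nat.mod_eq_of_lt (by omega)]; omega
  · intro v hv; simp only [mem_filter] at hv
    ext; simp [Nat.mod_eq_of_lt v.2]
  · intro k hk; simp only [mem_Icc] at hk; simp; rw [Nat.mod_eq_of_lt (by omega)]; omega
  · intro v hv; rfl


lemma deg_eq_split2 {V : Type*} [Fintype V] [DecidableEq V] (G : SimpleGraph V)
    [DecidableRel G.Adj] (S : Finset V) (v : V) :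
    G.degree v = #(S.filter (G.Adj v)) + #(Sᶜ.filter (G.Adj v)) := by
  have h : G.neighborFinset v = univ.filter (G.Adj v) := by ext w; simp
  rw [SimpleGraph.degree, h, card_filter, card_filter, card_filter,
    ← Finset.sum_add_sum_compl S]

lemma deg_sum_bound {V : Type*} [Fintype V] [DecidableEq V] (G : SimpleGraph V)
    [DecidableRel G.Adj] (S : Finset V) :
    ∑ v ∈ S, G.degree v ≤ #S * (#S - 1) + ∑ w ∈ Sᶜ, min #S (G.degree w) := by
  have cross : ∑ v ∈ S, #(Sᶜ.filter (G.Adj v)) = ∑ w ∈ Sᶜ, #(S.filter (G.Adj w)) := by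
    simp only [card_filter]
    rw [Finset.sum_comm]
    exact Finset.sum_congr rfl fun w _ => Finset.sum_congr rfl fun v _ => by simp [G.adj_comm]
  have h1 : ∑ v ∈ S, #(S.filter (G.Adj v)) ≤ #S * (#S - 1) := by
    calc ∑ v ∈ S, #(S.filter (G.Adj v)) ≤ ∑ _v ∈ S, (#S - 1) := by
          refine Finset.sum_le_sum fun v hv => ?_
          have hsub : S.filter (G.Adj v) ⊆ S.erase v := by
            intro w hw
            simp only [mem_filter] at hw
            exact Finset.mem_erase.2 ⟨fun h => G.irrefl (v := v) (h ▸ hw.2), hw.1⟩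
          calc #(S.filter (G.Adj v)) ≤ #(S.erase v) := Finset.card_le_card hsub
            _ = #S - 1 := Finset.card_erase_of_mem hv
      _ = #S * (#S - 1) := by rw [Finset.sum_const, smul_eq_mul]
  have h2 : ∑ v ∈ S, #(Sᶜ.filter (G.Adj v)) ≤ ∑ w ∈ Sᶜ, min #S (G.degree w) := by
    rw [cross]
    refine Finset.sum_le_sum fun w hw => le_min (Finset.card_filter_le S _) ?_
    rw [deg_eq_split2 G S w]; exact Nat.le_add_right _ _
  calc ∑ v ∈ S, G.degree v = ∑ v ∈ S, #(S.filter (G.Adj v)) + ∑ v ∈ S, #(Sᶜ.filter (G.Adj v)) := by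
        rw [← Finset.sum_add_distrib]; exact Finset.sum_congr rfl fun v _ => deg_eq_split2 G S v
    _ ≤ #S * (#S - 1) + ∑ w ∈ Sᶜ, min #S (G.degree w) := Nat.add_le_add h1 h2

lemma necessity (n : ℕ) (b : ℕ → ℕ) (G : SimpleGraph (Fin n)) [DecidableRel G.Adj]
    (hdeg : ∀ i : Fin n, G.degree i = b (i.1 + 1)) :
    Even (∑ k ∈ Icc 1 n, b k) ∧
      ∀ i, 1 ≤ i → i ≤ n → (∑ k ∈ Icc 1 i, b k) ≤
        i * (i - 1) + ∑ k ∈ Icc (i + 1) n, min i (b k) := by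
  have huniv : ∀ (g : ℕ → ℕ) , ∑ v : Fin n, g (v.1+1) = ∑ k ∈ Icc 1 n, g k := by
    intro g
    rw [← reindex_fin n 0 n le_rfl g]
    congr 1
    ext v; simp [v.2]
  constructor
  · rw [← huniv b]
    have : ∑ v : Fin n, b (v.1+1) = ∑ v : Fin n, G.degree v := by
      exact Finset.sum_congr rfl fun v _ => (hdeg v).symm
    rw [this, G.sum_degrees_eq_twice_card_edges]
    exact even_two_mul _
  · intro i hi1 hin
    set S : Finset (Fin n) := univ.filter (fun v => 0 ≤ v.1 ∧ v.1 < i) with hSdef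
    have hcard : #S = i := by
      rw [Finset.card_eq_sum_ones]
      rw [reindex_fin n 0 i hin (fun _ => 1)]
      simp [Nat.card_Icc]
    have hsum : ∑ v ∈ S, G.degree v = ∑ k ∈ Icc 1 i, b k := by
      rw [Finset.sum_congr rfl fun v _ => hdeg v]
      exact reindex_fin n 0 i hin b
    have hcompl : Sᶜ = univ.filter (fun v => i ≤ v.1 ∧ v.1 < n) := by
      simp only [hSdef, Finset.compl_filter, mem_filter, mem_univ, true_and]
      ext v
      simp only [mem_filter, mem_univ, true_and]
      have := v.2
      omega
    have hmin : ∑ w ∈ Sᶜ, min #S (G.degree w) = ∑ k ∈ Icc (i+1) n, min i (b k) := by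
      rw [hcompl, hcard]
      rw [← reindex_fin n i n le_rfl (fun k => min i (b k))]
      exact Finset.sum_congr rfl fun v hv => by rw [hdeg v]
    have H := deg_sum_bound G S
    rw [hsum, hcard] at H
    rw [← hmin, hcard]
    exact H

lemma degree_eq_sum_ind' {V : Type*} [Fintype V] (G : SimpleGraph V) [DecidableRel G.Adj] (v : V) :
    G.degree v = ∑ w : V, if G.Adj v w then 1 else 0 := by
  have h : G.neighborFinset v = univ.filter (G.Adj v) := by ext w; simp
  rw [SimpleGraph.degree, h, card_filter]

lemma graphical_empty (n : ℕ) (d : ℕ → ℕ) (h : ∀ k, 1 ≤ k → k ≤ n → d k = 0) :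
    IsGraphical n d := by
  refine ⟨⊥, inferInstance, fun i => ?_⟩
  rw [SimpleGraph.bot_degree, h (i.1+1) (by omega) (by omega)]

lemma graphical_extend (m : ℕ) (hm : 1 ≤ m) (d : ℕ → ℕ) (h : IsGraphical m d)
    (hd : d (m + 1) = 0) : IsGraphical (m + 1) d := by
  obtain ⟨G₀, inst, hdeg⟩ := h
  haveI := inst
  have hdeg' : ∀ j : Fin m, G₀.degree j = d (j.1 + 1) := fun j => by
    convert hdeg j using 2
  have hsymm : ∀ a b : Fin (m+1), (a.1 < m ∧ b.1 < m ∧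
      G₀.Adj ⟨a.1 % m, Nat.mod_lt _ hm⟩ ⟨b.1 % m, Nat.mod_lt _ hm⟩) →
      (b.1 < m ∧ a.1 < m ∧ G₀.Adj ⟨b.1 % m, Nat.mod_lt _ hm⟩ ⟨a.1 % m, Nat.mod_lt _ hm⟩) :=
    fun a b ⟨ha, hb, hab⟩ => ⟨hb, ha, G₀.adj_symm hab⟩
  have hloop : ∀ a : Fin (m+1), ¬(a.1 < m ∧ a.1 < m ∧
      G₀.Adj ⟨a.1 % m, Nat.mod_lt _ hm⟩ ⟨a.1 % m, Nat.mod_lt _ hm⟩) :=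
    fun a ⟨_, _, hab⟩ => G₀.irrefl hab
  set G : SimpleGraph (Fin (m+1)) := ⟨fun a b => a.1 < m ∧ b.1 < m ∧
      G₀.Adj ⟨a.1 % m, Nat.mod_lt _ hm⟩ ⟨b.1 % m, Nat.mod_lt _ hm⟩,
    ⟨fun a b hab => hsymm a b hab⟩, ⟨fun a hab => hloop a hab⟩⟩ with hG
  have hadj : ∀ a b, G.Adj a b ↔ (a.1 < m ∧ b.1 < m ∧
      G₀.Adj ⟨a.1 % m, Nat.mod_lt _ hm⟩ ⟨b.1 % m, Nat.mod_lt _ hm⟩) := fun a b => Iff.rfl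
  haveI : DecidableRel G.Adj := fun a b => decidable_of_iff _ (hadj a b).symm
  refine ⟨G, inferInstance, fun i => ?_⟩
  by_cases hi : i.1 < m
  · have : G.degree i = G₀.degree ⟨i.1, hi⟩ := by
      rw [degree_eq_sum_ind', degree_eq_sum_ind', Fin.sum_univ_castSucc]
      have hlast : (if G.Adj i (Fin.last m) then 1 else 0) = 0 := by
        rw [if_neg]
        rw [hadj]
        rintro ⟨-, hlt, -⟩
        simp at hlt
      rw [hlast, add_zero]
      refine Finset.sum_congr rfl fun w _ => ?_
      have hiff : G.Adj i w.castSucc ↔ G₀.Adj ⟨i.1, hi⟩ w := by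
        rw [hadj]
        have hw : (w.castSucc : Fin (m+1)).1 = w.1 := rfl
        have e1 : (⟨i.1 % m, Nat.mod_lt _ hm⟩ : Fin m) = ⟨i.1, hi⟩ :=
          Fin.ext (Nat.mod_eq_of_lt hi)
        have e2 : (⟨(w.castSucc : Fin (m+1)).1 % m, Nat.mod_lt _ hm⟩ : Fin m) = w :=
          Fin.ext (by rw [hw]; exact Nat.mod_eq_of_lt w.2)
        constructor
        · rintro ⟨-, -, hab⟩; rwa [e1, e2] at hab
        · intro hab
          refine ⟨hi, by rw [hw]; exact w.2, ?_⟩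
          rwa [e1, e2]
      exact if_congr hiff rfl rfl
    exact this.trans (hdeg' ⟨i.1, hi⟩)
  · have hi' : i.1 = m := by omega
    have : G.degree i = 0 := by
      rw [degree_eq_sum_ind']
      refine Finset.sum_eq_zero fun w _ => ?_
      rw [if_neg]
      rw [hadj]
      rintro ⟨ha, -⟩
      omega
    rw [this, hi', hd]

lemma graphical_step (n : ℕ) (d' d : ℕ → ℕ) (p : ℕ) (hp1 : 1 ≤ p) (hpn : p < n)
    (h : IsGraphical n d')
    (hdp : d' p + 1 = d p) (hdn : d' n + 1 = d n)
    (hother : ∀ k, 1 ≤ k → k ≤ n → k ≠ p → k ≠ n → d' k = d k)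
    (hdeg : d' p + 1 < n)
    (hmin : ∀ i, 1 ≤ i → i ≤ n → i ≠ p → i ≠ n → d' n < d' i) :
    IsGraphical n d := by
  obtain ⟨G, inst, hdeg0⟩ := h
  haveI := inst
  have hdeg' : ∀ j : Fin n, G.degree j = d' (j.1 + 1) := fun j => by
    convert hdeg0 j using 2
  have hn1 : 1 ≤ n := by omega
  set vp : Fin n := ⟨p - 1, by omega⟩ with hvp
  set vq : Fin n := ⟨n - 1, by omega⟩ with hvq
  have hvpq : vp ≠ vq := by
    intro hc
    have := congrArg Fin.val hc
    simp [hvp, hvq] at this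
    omega
  have hp1' : (vp.1) + 1 = p := by simp [hvp]; omega
  have hq1' : (vq.1) + 1 = n := by simp [hvq]; omega
  have hdvp : G.degree vp = d' p := by rw [hdeg' vp, hp1']
  have hdvq : G.degree vq = d' n := by rw [hdeg' vq, hq1']
  have hcond1 : G.degree vp + 1 < Fintype.card (Fin n) := by
    rw [hdvp, Fintype.card_fin]; exact hdeg
  have hcond2 : ∀ u : Fin n, u ≠ vp → u ≠ vq → G.degree vq < G.degree u := by
    intro u hu1 hu2
    rw [hdvq, hdeg' u]
    refine hmin (u.1 + 1) (by omega) (by omega) ?_ ?_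
    · intro hc
      apply hu1
      apply Fin.ext
      simp [hvp]; omega
    · intro hc
      apply hu2
      apply Fin.ext
      simp [hvq]; omega
  obtain ⟨G₂, inst2, hdeg2, hnadj⟩ := make_nonadjacent G hvpq hcond1 hcond2
  haveI := inst2
  have hdeg2' : ∀ v, G₂.degree v = G.degree v := fun v => by
    convert hdeg2 v using 2
  obtain ⟨G₃, inst3, hx, hy, ho3⟩ := add_edge G₂ hvpq hnadj
  haveI := inst3
  refine ⟨G₃, inst3, fun i => ?_⟩
  by_cases hip : i = vp
  · subst hip
    rw [hx, hdeg2', hdvp, hp1', hdp]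
  · by_cases hin : i = vq
    · subst hin
      rw [hy, hdeg2', hdvq, hq1', hdn]
    · rw [ho3 i hip hin, hdeg2', hdeg' i]
      refine hother (i.1 + 1) (by omega) (by omega) ?_ ?_
      · intro hc; exact hip (Fin.ext (by simp [hvp]; omega))
      · intro hc; exact hin (Fin.ext (by simp [hvq]; omega))

def Hs (d : ℕ → ℕ) (m : ℕ) : ℕ := ∑ k ∈ Icc 1 m, d k
def Us (d : ℕ → ℕ) (n k : ℕ) : ℕ := ∑ j ∈ Icc (k+1) n, min k (d j)

lemma Hs_split (d : ℕ → ℕ) {k n : ℕ} (hk : k ≤ n) :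
    Hs d n = Hs d k + ∑ j ∈ Icc (k+1) n, d j := by
  unfold Hs
  have h1 : ∀ m : ℕ, Icc 1 m = Ioc 0 m := fun m => by ext x; simp [mem_Icc, mem_Ioc]; omega
  have h2 : Icc (k+1) n = Ioc k n := by ext x; simp [mem_Icc, mem_Ioc]
  rw [h1, h1, h2]
  exact (Finset.sum_Ioc_consecutive d (Nat.zero_le k) hk).symm

lemma Hs_const (d : ℕ → ℕ) (m : ℕ) (h : ∀ j, 1 ≤ j → j ≤ m → d j = d 1) :
    Hs d m = m * d 1 := by
  unfold Hs
  have hc : ∑ k ∈ Icc 1 m, d k = ∑ _k ∈ Icc 1 m, d 1 :=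
    Finset.sum_congr rfl (fun j hj => by
      rw [mem_Icc] at hj
      exact h j hj.1 hj.2)
  rw [hc, Finset.sum_const, Nat.card_Icc, smul_eq_mul]
  have hm : m + 1 - 1 = m := by omega
  rw [hm]

lemma arith3b (X Y T c k n : ℕ) (hc1 : 1 ≤ c) (hck : c ≤ k) (hkn : k + 2 ≤ n)
    (hEG : X ≤ Y + T) (heven : Even (X + T)) (hevenY : Even Y)
    (hmlt : c < k → X ≤ Y) (hmeq : c = k → Y + k = X)
    (hTlb : c + (n - (k+1)) ≤ T) : X + 2 ≤ Y + T := by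
  obtain ⟨a, ha⟩ := heven
  obtain ⟨b, hb⟩ := hevenY
  rcases eq_or_lt_of_le hck with rfl | hlt
  · have := hmeq rfl
    omega
  · have := hmlt hlt
    omega


lemma const_of_flat (d : ℕ → ℕ) (t : ℕ) (hflat : ∀ i, 1 ≤ i → i < t → d (i+1) = d i) :
    ∀ i, 1 ≤ i → i ≤ t → d i = d 1 := by
  intro i
  induction i with
  | zero => intro h _; omega
  | succ i ih =>
    intro h1 h2
    rcases Nat.eq_zero_or_pos i with rfl | hi
    · rfl
    · rw [hflat i hi (by omega)]
      exact ih hi (by omega)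

lemma mul_pred_add (k : ℕ) (hk : 1 ≤ k) : k * (k - 1) + k = k * k := by
  obtain ⟨k', rfl⟩ : ∃ k', k = k' + 1 := ⟨k - 1, by omega⟩
  simp [Nat.add_sub_cancel]
  ring

lemma even_mul_pred (k : ℕ) : Even (k * (k - 1)) := by
  rcases Nat.eq_zero_or_pos k with rfl | hk
  · simp
  · obtain ⟨k', rfl⟩ : ∃ k', k = k' + 1 := ⟨k - 1, by omega⟩
    have := Nat.even_mul_succ_self k'
    have he : (k' + 1) * (k' + 1 - 1) = k' * (k' + 1) := by
      simp [Nat.add_sub_cancel]; ring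
    rwa [he]

theorem suffN (N : ℕ) : ∀ (n : ℕ) (d : ℕ → ℕ), n + Hs d n ≤ N →
    (∀ i j, 1 ≤ i → i ≤ j → j ≤ n → d j ≤ d i) →
    Even (Hs d n) →
    (∀ i, 1 ≤ i → i ≤ n → Hs d i ≤ i * (i - 1) + Us d n i) →
    IsGraphical n d := by
  induction N with
  | zero =>
    intro n d hN _ _ _
    have hn : n = 0 := by omega
    subst hn
    exact graphical_empty 0 d (fun k h1 h2 => by omega)
  | succ N ih =>
    intro n d hN hmono heven hEG
    rcases Nat.eq_zero_or_pos n with rfl | hn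
    · exact graphical_empty 0 d (fun k h1 h2 => by omega)
    by_cases hdn : d n = 0
    · -- drop the last (zero) entry
      obtain ⟨m, rfl⟩ : ∃ m, n = m + 1 := ⟨n - 1, by omega⟩
      rcases Nat.eq_zero_or_pos m with rfl | hm
      · exact graphical_empty 1 d (fun k h1 h2 => by
          have : k = 1 := by omega
          subst this; exact hdn)
      have hsplit : Hs d (m+1) = Hs d m + d (m+1) := by
        unfold Hs
        exact Finset.sum_Icc_succ_top (by omega) d
      refine graphical_extend m hm d ?_ hdn
      refine ih m d (by omega) (fun i j h1 h2 h3 => hmono i j h1 h2 (by omega)) ?_ ?_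
      · rw [hdn, add_zero] at hsplit
        rwa [← hsplit]
      · intro i h1 h2
        have hU : Us d (m+1) i = Us d m i + min i (d (m+1)) := by
          unfold Us
          exact Finset.sum_Icc_succ_top (by omega) _
        have := hEG i h1 (by omega)
        rw [hU, hdn] at this
        simpa using this
    · -- main case: all degrees positive
      have hdn1 : 1 ≤ d n := by omega
      have hpos : ∀ k, 1 ≤ k → k ≤ n → 1 ≤ d k :=
        fun k h1 h2 => le_trans hdn1 (hmono k n h1 h2 le_rfl)
      -- n = 1 is impossible
      have hH1 : Hs d 1 = d 1 := by unfold Hs; simp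
      by_cases hn1 : n = 1
      · exfalso
        have := hEG 1 le_rfl (by omega)
        rw [hH1] at this
        have hU1 : Us d n 1 = 0 := by
          unfold Us
          subst hn1
          simp
        rw [hU1] at this
        have := hpos 1 le_rfl (by omega)
        omega
      have hn2 : 2 ≤ n := by omega
      -- d 1 ≤ n - 1 from EG at 1
      have hcn : d 1 ≤ n - 1 := by
        have h := hEG 1 le_rfl (by omega)
        rw [hH1] at h
        have hU1 : Us d n 1 = n - 1 := by
          unfold Us
          have hc : ∑ j ∈ Icc 2 n, min 1 (d j) = ∑ _j ∈ Icc 2 n, 1 :=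
            Finset.sum_congr rfl (fun j hj => by
              rw [mem_Icc] at hj
              have := hpos j (by omega) hj.2
              omega)
          rw [hc, Finset.sum_const, smul_eq_mul, Nat.card_Icc]
          omega
        rw [hU1] at h
        omega
      -- find the plateau end t
      obtain ⟨t, ht1, htn, hconst, htd⟩ :
          ∃ t, 1 ≤ t ∧ t ≤ n ∧ (∀ i, 1 ≤ i → i ≤ t → d i = d 1) ∧
            (t < n → d (t+1) < d t) := by
        by_cases hex : ∃ i, 1 ≤ i ∧ i < n ∧ d (i+1) < d i
        · have hspec := Nat.find_spec hex
          set t := Nat.find hex with htdef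
          have hflat : ∀ i, 1 ≤ i → i < t → d (i+1) = d i := by
            intro i h1 h2
            have hmin := Nat.find_min hex h2
            push_neg at hmin
            have h3 := hmin h1 (by omega)
            have h4 := hmono i (i+1) h1 (by omega) (by omega)
            omega
          exact ⟨t, hspec.1, by omega, const_of_flat d t hflat, fun _ => hspec.2.2⟩
        · push_neg at hex
          have hflat : ∀ i, 1 ≤ i → i < n → d (i+1) = d i := by
            intro i h1 h2
            have h3 := hex i h1 h2
            have h4 := hmono i (i+1) h1 (by omega) (by omega)
            omega
          exact ⟨n, by omega, le_rfl, const_of_flat d n hflat, fun h => by omega⟩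
      set p := if t = n then n - 1 else t with hpdef
      have hp1 : 1 ≤ p := by
        rw [hpdef]; split <;> omega
      have hpn : p < n := by
        rw [hpdef]; split <;> omega
      have hpt : p ≤ t := by
        rw [hpdef]; split <;> omega
      have hdp : d p = d 1 := hconst p hp1 hpt
      -- larger indices have smaller degrees than d p - 1, except n itself
      have hpk : ∀ j, p < j → j ≤ n → d j + 1 ≤ d p ∨ j = n := by
        intro j hj1 hj2
        by_cases ht : t = n
        · right
          have hpv : p = n - 1 := by rw [hpdef, if_pos ht]
          omega
        · left
          have hptt : p = t := by rw [hpdef, if_neg ht]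
          have h1 := htd (by omega)
          have h2 := hmono (t+1) j (by omega) (by omega : t + 1 ≤ j) hj2
          have h3 : d p = d t := by rw [hptt]
          omega
      set d' : ℕ → ℕ := fun k => if k = p ∨ k = n then d k - 1 else d k with hd'def
      have hd'p : d' p = d p - 1 := by simp [hd'def]
      have hd'n : d' n = d n - 1 := by simp [hd'def]
      have hd'o : ∀ k, k ≠ p → k ≠ n → d' k = d k := fun k h1 h2 => by
        simp [hd'def, h1, h2]
      have hpn' : p ≠ n := by omega
      -- monotonicity of d'
      have hmono' : ∀ i j, 1 ≤ i → i ≤ j → j ≤ n → d' j ≤ d' i := by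
        intro i j h1 h2 h3
        have hdji : d j ≤ d i := hmono i j h1 h2 h3
        by_cases hjp : j = p
        · rw [hjp, hd'p]
          rw [hjp] at hdji
          by_cases hip : i = p
          · rw [hip, hd'p]
          · rw [hd'o i hip (by omega)]
            omega
        · by_cases hjn : j = n
          · rw [hjn, hd'n]
            rw [hjn] at hdji
            by_cases hip : i = p
            · rw [hip, hd'p]
              rw [hip] at hdji
              omega
            · by_cases hin : i = n
              · rw [hin, hd'n]
              · rw [hd'o i hip hin]; omega
          · rw [hd'o j hjp hjn]
            by_cases hip : i = p
            · rw [hip, hd'p]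
              rcases hpk j (by rw [← hip]; omega) h3 with h | h
              · omega
              · omega
            · by_cases hin : i = n
              · omega
              · rw [hd'o i hip hin]; omega
      -- sum relations
      have hmemn : n ∈ Icc 1 n := by rw [mem_Icc]; omega
      have hmempE : p ∈ (Icc 1 n).erase n := by
        rw [mem_erase, mem_Icc]; exact ⟨hpn', by omega⟩
      have hHc : Hs d' n + 2 = Hs d n := by
        have e1 := Finset.add_sum_erase (Icc 1 n) d' hmemn
        have e2 := Finset.add_sum_erase ((Icc 1 n).erase n) d' hmempE
        have e3 := Finset.add_sum_erase (Icc 1 n) d hmemn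
        have e4 := Finset.add_sum_erase ((Icc 1 n).erase n) d hmempE
        have e5 : ∑ k ∈ ((Icc 1 n).erase n).erase p, d' k
            = ∑ k ∈ ((Icc 1 n).erase n).erase p, d k :=
          Finset.sum_congr rfl (fun k hk => by
            rw [mem_erase, mem_erase] at hk
            exact hd'o k hk.1 hk.2.1)
        have hp2 := hpos p hp1 (by omega)
        unfold Hs
        omega
      have hHa : ∀ m, m < p → Hs d' m = Hs d m := by
        intro m hm
        exact Finset.sum_congr rfl (fun k hk => by
          rw [mem_Icc] at hk
          exact hd'o k (by omega) (by omega))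
      have hHb : ∀ m, p ≤ m → m < n → Hs d' m + 1 = Hs d m := by
        intro m hm1 hm2
        have hmemp : p ∈ Icc 1 m := by rw [mem_Icc]; omega
        have e1 := Finset.add_sum_erase (Icc 1 m) d' hmemp
        have e2 := Finset.add_sum_erase (Icc 1 m) d hmemp
        have e5 : ∑ k ∈ (Icc 1 m).erase p, d' k = ∑ k ∈ (Icc 1 m).erase p, d k :=
          Finset.sum_congr rfl (fun k hk => by
            rw [mem_erase, mem_Icc] at hk
            exact hd'o k hk.1 (by omega))
        have hp2 := hpos p hp1 (by omega)
        unfold Hs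
        omega
      -- tail relations
      have hUd : ∀ k, p ≤ k → k < n → Us d n k ≤ Us d' n k + 1 := by
        intro k hk1 hk2
        have hmem : n ∈ Icc (k+1) n := by rw [mem_Icc]; omega
        have e1 := Finset.add_sum_erase (Icc (k+1) n) (fun j => min k (d' j)) hmem
        have e2 := Finset.add_sum_erase (Icc (k+1) n) (fun j => min k (d j)) hmem
        have e5 : ∑ j ∈ (Icc (k+1) n).erase n, min k (d' j)
            = ∑ j ∈ (Icc (k+1) n).erase n, min k (d j) :=
          Finset.sum_congr rfl (fun j hj => by
            rw [mem_erase, mem_Icc] at hj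
            rw [hd'o j (by omega) hj.1])
        unfold Us
        omega
      have hUe : ∀ k, k < p → k + 1 ≤ d 1 → Us d n k ≤ Us d' n k + 1 := by
        intro k hk1 hk2
        have hmem : n ∈ Icc (k+1) n := by rw [mem_Icc]; omega
        have hmemp' : p ∈ (Icc (k+1) n).erase n := by
          rw [mem_erase, mem_Icc]; exact ⟨hpn', by omega⟩
        have e1 := Finset.add_sum_erase (Icc (k+1) n) (fun j => min k (d' j)) hmem
        have e2 := Finset.add_sum_erase (Icc (k+1) n) (fun j => min k (d j)) hmem
        have e3 := Finset.add_sum_erase ((Icc (k+1) n).erase n) (fun j => min k (d' j)) hmemp'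
        have e4 := Finset.add_sum_erase ((Icc (k+1) n).erase n) (fun j => min k (d j)) hmemp'
        have e5 : ∑ j ∈ ((Icc (k+1) n).erase n).erase p, min k (d' j)
            = ∑ j ∈ ((Icc (k+1) n).erase n).erase p, min k (d j) :=
          Finset.sum_congr rfl (fun j hj => by
            rw [mem_erase, mem_erase] at hj
            rw [hd'o j hj.1 hj.2.1])
        unfold Us
        omega
      have hUf : ∀ k, k < p → d 1 ≤ k →
          (Us d n k = ∑ j ∈ Icc (k+1) n, d j ∧
           Us d' n k + 2 = ∑ j ∈ Icc (k+1) n, d j) := by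
        intro k hk1 hk2
        have hsmall : ∀ j, k + 1 ≤ j → j ≤ n → d j ≤ k :=
          fun j h1 h2 => le_trans (hmono 1 j (by omega) (by omega) h2) hk2
        constructor
        · exact Finset.sum_congr rfl (fun j hj => by
            rw [mem_Icc] at hj
            have := hsmall j hj.1 hj.2
            omega)
        · have hmem : n ∈ Icc (k+1) n := by rw [mem_Icc]; omega
          have hmemp' : p ∈ (Icc (k+1) n).erase n := by
            rw [mem_erase, mem_Icc]; exact ⟨hpn', by omega⟩
          have e1 := Finset.add_sum_erase (Icc (k+1) n) (fun j => min k (d' j)) hmem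
          have e3 := Finset.add_sum_erase ((Icc (k+1) n).erase n) (fun j => min k (d' j)) hmemp'
          have e2 := Finset.add_sum_erase (Icc (k+1) n) d hmem
          have e4 := Finset.add_sum_erase ((Icc (k+1) n).erase n) d hmemp'
          have e5 : ∑ j ∈ ((Icc (k+1) n).erase n).erase p, min k (d' j)
              = ∑ j ∈ ((Icc (k+1) n).erase n).erase p, d j :=
            Finset.sum_congr rfl (fun j hj => by
              rw [mem_erase, mem_erase, mem_Icc] at hj
              rw [hd'o j hj.1 hj.2.1]
              have := hsmall j hj.2.2.1 hj.2.2.2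
              omega)
          have hp2 := hpos p hp1 (by omega)
          have hdpk : d p ≤ k := by omega
          have hdnk : d n ≤ k := le_trans (hmono 1 n (by omega) (by omega) le_rfl) hk2
          unfold Us
          omega
      -- EG conditions for d'
      have hEG' : ∀ k, 1 ≤ k → k ≤ n → Hs d' k ≤ k * (k - 1) + Us d' n k := by
        intro k hk1 hkn'
        by_cases hkeqn : k = n
        · subst hkeqn
          have hem : Icc (k+1) k = (∅ : Finset ℕ) := Finset.Icc_eq_empty (by omega)
          have hUn : Us d' k k = 0 := by unfold Us; rw [hem]; simp
          have hUn2 : Us d k k = 0 := by unfold Us; rw [hem]; simp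
          have hEGn := hEG k hk1 le_rfl
          rw [hUn2] at hEGn
          rw [hUn]
          omega
        · have hkltn : k < n := by omega
          by_cases hpk' : p ≤ k
          · have h1 := hHb k hpk' hkltn
            have h2 := hUd k hpk' hkltn
            have h3 := hEG k hk1 (by omega)
            omega
          · push_neg at hpk'
            have hHak := hHa k (by omega)
            have hHk : Hs d k = k * d 1 :=
              Hs_const d k (fun j hj1 hj2 => hconst j hj1 (by omega))
            have hk2n : k + 2 ≤ n := by omega
            by_cases hck : k + 1 ≤ d 1
            · by_cases hdnk : k + 1 ≤ d n
              · -- no drops at all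
                have hUeq : Us d' n k = Us d n k := by
                  unfold Us
                  refine Finset.sum_congr rfl (fun j hj => ?_)
                  rw [mem_Icc] at hj
                  by_cases hjp : j = p
                  · rw [hjp, hd'p, hdp]
                    omega
                  · by_cases hjn : j = n
                    · rw [hjn, hd'n]; omega
                    · rw [hd'o j hjp hjn]
                have h3 := hEG k hk1 (by omega)
                omega
              · -- the strict case
                push_neg at hdnk
                have hUek := hUe k (by omega) hck
                have hstrict : Hs d k + 1 ≤ k * (k - 1) + Us d n k := by
                  by_contra hcon
                  push_neg at hcon
                  have h3 := hEG k hk1 (by omega)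
                  have heq : Hs d k = k * (k - 1) + Us d n k := by omega
                  have hmem1 : k + 1 ∈ Icc (k+1) n := by rw [mem_Icc]; omega
                  have e1 := Finset.add_sum_erase (Icc (k+1) n) (fun j => min k (d j)) hmem1
                  have herase : (Icc (k+1) n).erase (k+1) = Icc (k+2) n := by
                    ext x; rw [mem_erase, mem_Icc, mem_Icc]; omega
                  rw [herase] at e1
                  have hdk1 : d (k+1) = d 1 := hconst (k+1) (by omega) (by omega)
                  have hidk := mul_pred_add k hk1
                  set B' := ∑ j ∈ Icc (k+2) n, min k (d j) with hB'
                  have heqX : k * d 1 = k * k + B' := by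
                    rw [hHk] at heq
                    unfold Us at heq
                    omega
                  set m' := #((Icc (k+2) n).filter (fun j => k + 1 ≤ d j)) with hm'
                  have hpt2 : ∀ j ∈ Icc (k+2) n, min (k+1) (d j)
                      = min k (d j) + (if k + 1 ≤ d j then 1 else 0) := fun j _ => by
                    by_cases h : k + 1 ≤ d j <;> simp [h] <;> omega
                  have hA : ∑ j ∈ Icc (k+2) n, min (k+1) (d j) = B' + m' := by
                    have h5 : ∑ j ∈ Icc (k+2) n, min (k+1) (d j)
                        = ∑ j ∈ Icc (k+2) n, (min k (d j) + (if k + 1 ≤ d j then 1 else 0)) :=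
                      Finset.sum_congr rfl hpt2
                    rw [h5, Finset.sum_add_distrib, Finset.sum_boole]
                    simp [hB', hm']
                  have hHk1 : Hs d (k+1) = (k+1) * d 1 :=
                    Hs_const d (k+1) (fun j h1 h2 => hconst j h1 (by omega))
                  have hEGk1 := hEG (k+1) (by omega) (by omega)
                  have hEGk1' : (k+1) * d 1 ≤ (k+1) * k + (B' + m') := by
                    rw [hHk1] at hEGk1
                    unfold Us at hEGk1
                    have hred : k + 1 - 1 = k := by omega
                    rw [hred] at hEGk1
                    have hic : k + 1 + 1 = k + 2 := by omega
                    rw [hic] at hEGk1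
                    rw [hA] at hEGk1
                    exact hEGk1
                  have ea : (k+1) * d 1 = k * d 1 + d 1 := by ring
                  have eb : (k+1) * k = k * k + k := by ring
                  have hd1km : d 1 ≤ k + m' := by linarith
                  have hsplitf := Finset.sum_filter_add_sum_filter_not (Icc (k+2) n)
                    (fun j => k + 1 ≤ d j) (fun j => min k (d j))
                  have hf1 : ∑ j ∈ (Icc (k+2) n).filter (fun j => k + 1 ≤ d j), min k (d j)
                      = m' * k := by
                    have hcongr : ∑ j ∈ (Icc (k+2) n).filter (fun j => k + 1 ≤ d j), min k (d j)
                        = ∑ _j ∈ (Icc (k+2) n).filter (fun j => k + 1 ≤ d j), k :=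
                      Finset.sum_congr rfl (fun j hj => by
                        rw [mem_filter] at hj
                        have := hj.2
                        omega)
                    rw [hcongr, Finset.sum_const, smul_eq_mul, hm']
                  have hnmem : n ∈ (Icc (k+2) n).filter (fun j => ¬ (k + 1 ≤ d j)) := by
                    rw [mem_filter, mem_Icc]
                    exact ⟨⟨by omega, le_rfl⟩, by omega⟩
                  have hf2 : min k (d n) ≤ ∑ j ∈ (Icc (k+2) n).filter (fun j => ¬ (k + 1 ≤ d j)),
                      min k (d j) :=
                    Finset.single_le_sum (f := fun j => min k (d j))
                      (fun i _ => Nat.zero_le _) hnmem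
                  have hB'lb : m' * k + d n ≤ B' := by
                    rw [hB']
                    omega
                  have hmul : k * d 1 ≤ k * (k + m') := Nat.mul_le_mul_left k hd1km
                  have ec : k * (k + m') = k * k + m' * k := by ring
                  linarith [heqX, hB'lb, hmul, ec, hdn1]
                omega
            · -- both decrements land in the plain tail sum
              push_neg at hck
              obtain ⟨hUT, hU'T⟩ := hUf k (by omega) (by omega)
              set T := ∑ j ∈ Icc (k+1) n, d j with hT
              have hEGk := hEG k hk1 (by omega)
              have hevenX : Even (k * d 1 + T) := by
                have hs := Hs_split d (show k ≤ n by omega)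
                rw [hHk] at hs
                rwa [hs] at heven
              have hTlb : d 1 + (n - (k+1)) ≤ T := by
                rw [hT]
                have hmem1 : k + 1 ∈ Icc (k+1) n := by rw [mem_Icc]; omega
                have e1 := Finset.add_sum_erase (Icc (k+1) n) d hmem1
                have herase : (Icc (k+1) n).erase (k+1) = Icc (k+2) n := by
                  ext x; rw [mem_erase, mem_Icc, mem_Icc]; omega
                rw [herase] at e1
                have hdk1 : d (k+1) = d 1 := hconst (k+1) (by omega) (by omega)
                have hcard := Finset.card_nsmul_le_sum (Icc (k+2) n) d 1
                  (fun x hx => by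
                    rw [mem_Icc] at hx
                    exact hpos x (by omega) hx.2)
                rw [Nat.card_Icc, smul_eq_mul, mul_one] at hcard
                have hcard' : n + 1 - (k + 2) ≤ ∑ x ∈ Icc (k + 2) n, d x := hcard
                omega
              have hfinal : k * d 1 + 2 ≤ k * (k - 1) + T := by
                refine arith3b (k * d 1) (k * (k - 1)) T (d 1) k n
                  (hpos 1 (by omega) (by omega)) (by omega) hk2n ?_ hevenX (even_mul_pred k)
                  (fun h => Nat.mul_le_mul_left k (by omega)) ?_ hTlb
                · omega
                · intro h
                  rw [h]
                  exact mul_pred_add k hk1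
              omega
      -- evenness for d'
      have heven' : Even (Hs d' n) := by
        obtain ⟨a, ha⟩ := heven
        exact ⟨a - 1, by omega⟩
      have hGd' : IsGraphical n d' := ih n d' (by omega) hmono' heven' hEG'
      have hd1pos : 1 ≤ d 1 := hpos 1 (by omega) (by omega)
      refine graphical_step n d' d p hp1 hpn hGd' ?_ ?_ (fun k _ _ h1 h2 => hd'o k h1 h2) ?_ ?_
      · rw [hd'p]
        have := hpos p hp1 (by omega)
        omega
      · rw [hd'n]; omega
      · rw [hd'p, hdp]; omega
      · intro i h1 h2 hip hin
        rw [hd'n, hd'o i hip hin]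
        have := hmono i n h1 h2 le_rfl
        omega


end ErdosGallaiTV

/-- The shortened Erdős–Gallai criterion of Tripathi and Vijay. -/
theorem erdos_gallai_shortened (n : ℕ) (hn : 1 ≤ n) (b : ℕ → ℕ)
    (hmono : ∀ i j, 1 ≤ i → i ≤ j → j ≤ n → b j ≤ b i)
    (hbound : b 1 ≤ n - 1) :
    IsGraphical n b ↔
      (Even (∑ k ∈ Finset.Icc 1 n, b k) ∧
        ∀ i, 1 ≤ i → i ≤ n → i * (i - 1) < ∑ k ∈ Finset.Icc 1 i, b k →
          (∑ k ∈ Finset.Icc 1 i, b k) ≤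
            i * (i - 1) + ∑ k ∈ Finset.Icc (i + 1) n, min i (b k)) := by
  constructor
  · intro hG
    obtain ⟨G, inst, hdeg⟩ := hG
    haveI := inst
    have hdeg' : ∀ j : Fin n, G.degree j = b (j.1 + 1) := fun j => by
      convert hdeg j using 2
    obtain ⟨h1, h2⟩ := ErdosGallaiTV.necessity n b G hdeg'
    exact ⟨h1, fun i hi1 hi2 _ => h2 i hi1 hi2⟩
  · rintro ⟨heven, hshort⟩
    refine ErdosGallaiTV.suffN (n + ErdosGallaiTV.Hs b n) n b le_rfl hmono heven ?_
    intro i hi1 hi2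
    by_cases hc : i * (i - 1) < ∑ k ∈ Finset.Icc 1 i, b k
    · exact hshort i hi1 hi2 hc
    · push_neg at hc
      have h3 : ErdosGallaiTV.Hs b i ≤ i * (i - 1) := hc
      exact le_trans h3 (Nat.le_add_right _ _)
end

section
/- Let n ≥ 1 and let b = (b_1, ..., b_n) be a nonincreasing sequence of nonnegative integers with b_1 ≤ n-1. Call an index i a checking point if i = n, or 1 ≤ i ≤ n-1 and b_i > b_{i+1}. Then b is n-graphical if and only if (1) b_1 + ... + b_n is even, and (2) for every checking point g, H_g - g(g-1) ≤ Σ_{k=g+1}^{n} min(g, b_k), where H_g = b_1 + ... + b_g. -/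
namespace EGJ
open Finset

def Hs (d : ℕ → ℕ) (g : ℕ) : ℕ := ∑ k ∈ Finset.Icc 1 g, d k
def Rs (d : ℕ → ℕ) (n g : ℕ) : ℕ := ∑ k ∈ Finset.Icc (g+1) n, min g (d k)
def EGi (d : ℕ → ℕ) (n g : ℕ) : Prop := Hs d g ≤ g * (g-1) + Rs d n g
def dec (d : ℕ → ℕ) (a z : ℕ) : ℕ → ℕ := fun k => if k = a ∨ k = z then d k - 1 else d k

lemma icc_map (n : ℕ) : Finset.Icc 1 n
    = (Finset.range n).map ⟨fun j => j+1, fun a b h => Nat.succ_injective h⟩ := by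
  ext k
  simp only [Finset.mem_Icc, Finset.mem_map, Finset.mem_range, Function.Embedding.coeFn_mk]
  constructor
  · rintro ⟨h1, h2⟩; exact ⟨k-1, by omega, by show k - 1 + 1 = k; omega⟩
  · rintro ⟨a, ha, rfl⟩; show 1 ≤ a + 1 ∧ a + 1 ≤ n; omega

lemma sum_fin_filter_icc (n : ℕ) (f : ℕ → ℕ) (p : ℕ → Prop) [DecidablePred p] :
    ∑ i ∈ Finset.univ.filter (fun i : Fin n => p (i.1+1)), f (i.1+1)
      = ∑ k ∈ (Finset.Icc 1 n).filter p, f k := by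
  rw [icc_map n, Finset.filter_map, Finset.sum_map, Finset.sum_filter, Finset.sum_filter]
  rw [Fin.sum_univ_eq_sum_range (fun j => if p (j+1) then f (j+1) else 0) n]
  rfl

lemma sum_fin_icc (n : ℕ) (f : ℕ → ℕ) :
    ∑ i : Fin n, f (i.1+1) = ∑ k ∈ Finset.Icc 1 n, f k := by
  have := sum_fin_filter_icc n f (fun _ => True)
  simpa using this

lemma sum_filter_le_icc (n g : ℕ) (f : ℕ → ℕ) :
    ∑ i ∈ Finset.univ.filter (fun i : Fin n => i.1+1 ≤ g), f (i.1+1)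
      = ∑ k ∈ (Finset.Icc 1 n).filter (fun k => k ≤ g), f k :=
  sum_fin_filter_icc n f (fun k => k ≤ g)

lemma filter_icc_le (n g : ℕ) (hg : g ≤ n) :
    (Finset.Icc 1 n).filter (fun k => k ≤ g) = Finset.Icc 1 g := by
  ext k; simp only [Finset.mem_filter, Finset.mem_Icc]; omega

lemma filter_icc_gt (n g : ℕ) :
    (Finset.Icc 1 n).filter (fun k => ¬ (k ≤ g)) = Finset.Icc (g+1) n := by
  ext k; simp only [Finset.mem_filter, Finset.mem_Icc]; omega

lemma card_filter_le (n g : ℕ) (hg : g ≤ n) :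
    (Finset.univ.filter (fun i : Fin n => i.1+1 ≤ g)).card = g := by
  have h := sum_filter_le_icc n g (fun _ => 1)
  rw [filter_icc_le n g hg] at h
  simpa using h

lemma necessity {n : ℕ} (b : ℕ → ℕ) (G : SimpleGraph (Fin n)) (inst : DecidableRel G.Adj)
    (hdeg : ∀ i : Fin n, G.degree i = b (i.1 + 1)) :
    Even (Hs b n) ∧ ∀ g, 1 ≤ g → g ≤ n → EGi b n g := by
  constructor
  · have h1 : Hs b n = ∑ i : Fin n, G.degree i := by
      rw [Hs, ← sum_fin_icc n b]
      exact (Finset.sum_congr rfl (fun i _ => (hdeg i).symm))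
    rw [h1, SimpleGraph.sum_degrees_eq_twice_card_edges]
    exact ⟨_, by ring⟩
  · intro g hg1 hgn
    set S : Finset (Fin n) := Finset.univ.filter (fun i : Fin n => i.1+1 ≤ g) with hS
    have hcardS : S.card = g := card_filter_le n g hgn
    -- LHS as degree sum over S
    have hH : Hs b g = ∑ i ∈ S, G.degree i := by
      rw [Hs, ← filter_icc_le n g hgn, ← sum_filter_le_icc n g b]
      exact (Finset.sum_congr rfl (fun i _ => (hdeg i).symm))
    -- split degrees
    have hsplit : ∀ i : Fin n, G.degree i
        = ((G.neighborFinset i) ∩ S).card + ((G.neighborFinset i) \ S).card := by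
      intro i
      rw [SimpleGraph.degree, ← Finset.card_inter_add_card_sdiff (G.neighborFinset i) S]
    -- first part: edges inside S
    have hin : ∀ i ∈ S, ((G.neighborFinset i) ∩ S).card ≤ g - 1 := by
      intro i hi
      have hsub : (G.neighborFinset i) ∩ S ⊆ S.erase i := by
        intro j hj
        rw [Finset.mem_inter] at hj
        rw [Finset.mem_erase]
        refine ⟨?_, hj.2⟩
        intro hji
        subst hji
        exact G.irrefl ((SimpleGraph.mem_neighborFinset _ _ _).1 hj.1)
      calc ((G.neighborFinset i) ∩ S).card ≤ (S.erase i).card := Finset.card_le_card hsub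
        _ = g - 1 := by rw [Finset.card_erase_of_mem hi, hcardS]
    -- second part: cross edges, double count
    have hcross : ∑ i ∈ S, ((G.neighborFinset i) \ S).card
        = ∑ j ∈ Finset.univ \ S, (S.filter (fun i => G.Adj j i)).card := by
      have h1 : ∀ i : Fin n, (G.neighborFinset i) \ S = (Finset.univ \ S).filter (fun j => G.Adj i j) := by
        intro i
        ext j
        simp only [Finset.mem_sdiff, Finset.mem_filter, SimpleGraph.mem_neighborFinset,
          Finset.mem_univ, true_and]
        tauto
      calc ∑ i ∈ S, ((G.neighborFinset i) \ S).card
          = ∑ i ∈ S, ∑ j ∈ Finset.univ \ S, (if G.Adj i j then 1 else 0) := by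
            refine Finset.sum_congr rfl (fun i _ => ?_)
            rw [h1 i, Finset.card_filter]
        _ = ∑ j ∈ Finset.univ \ S, ∑ i ∈ S, (if G.Adj i j then 1 else 0) := Finset.sum_comm
        _ = ∑ j ∈ Finset.univ \ S, (S.filter (fun i => G.Adj j i)).card := by
            refine Finset.sum_congr rfl (fun j _ => ?_)
            rw [Finset.card_filter]
            refine Finset.sum_congr rfl (fun i _ => ?_)
            simp only [G.adj_comm i j]
    have hcrossle : ∀ j ∈ Finset.univ \ S, (S.filter (fun i => G.Adj j i)).card
        ≤ min g (b (j.1+1)) := by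
      intro j _
      apply le_min
      · calc (S.filter (fun i => G.Adj j i)).card ≤ S.card := Finset.card_le_card (Finset.filter_subset _ _)
          _ = g := hcardS
      · rw [← hdeg j, SimpleGraph.degree, SimpleGraph.neighborFinset_eq_filter]
        apply Finset.card_le_card
        intro i hi
        simp only [Finset.mem_filter] at hi ⊢
        exact ⟨Finset.mem_univ i, hi.2⟩
    -- assemble
    have hRs : ∑ j ∈ Finset.univ \ S, min g (b (j.1+1)) = Rs b n g := by
      have : Finset.univ \ S = Finset.univ.filter (fun i : Fin n => ¬ (i.1+1 ≤ g)) := by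
        rw [hS, Finset.filter_not]
      rw [this, Rs, ← filter_icc_gt n g, ← sum_fin_filter_icc n (fun k => min g (b k)) (fun k => ¬ (k ≤ g))]
    rw [EGi, hH]
    calc ∑ i ∈ S, G.degree i
        = ∑ i ∈ S, (((G.neighborFinset i) ∩ S).card + ((G.neighborFinset i) \ S).card) :=
          Finset.sum_congr rfl (fun i _ => hsplit i)
      _ = ∑ i ∈ S, ((G.neighborFinset i) ∩ S).card + ∑ i ∈ S, ((G.neighborFinset i) \ S).card :=
          Finset.sum_add_distrib
      _ ≤ g * (g-1) + Rs b n g := by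
          apply Nat.add_le_add
          · calc ∑ i ∈ S, ((G.neighborFinset i) ∩ S).card ≤ ∑ i ∈ S, (g-1) :=
                Finset.sum_le_sum hin
              _ = g * (g-1) := by rw [Finset.sum_const, hcardS, smul_eq_mul]
          · rw [hcross, ← hRs]
            exact Finset.sum_le_sum hcrossle

/-- degree of `v` in an edge multiset -/
def degM {n : ℕ} (M : Finset (Sym2 (Fin n))) (v : Fin n) : ℕ :=
  (M.filter (fun e => v ∈ e)).card

lemma degM_insert {n : ℕ} (M : Finset (Sym2 (Fin n))) (e : Sym2 (Fin n)) (he : e ∉ M)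
    (v : Fin n) : degM (insert e M) v = degM M v + (if v ∈ e then 1 else 0) := by
  unfold degM
  rw [Finset.filter_insert]
  split_ifs with h
  · rw [Finset.card_insert_of_notMem (fun hc => he (Finset.mem_filter.1 hc).1)]
  · simp

lemma degM_erase {n : ℕ} (M : Finset (Sym2 (Fin n))) (e : Sym2 (Fin n)) (he : e ∈ M)
    (v : Fin n) : degM (M.erase e) v = degM M v - (if v ∈ e then 1 else 0) := by
  unfold degM
  rw [Finset.filter_erase]
  split_ifs with h
  · rw [Finset.card_erase_of_mem (Finset.mem_filter.2 ⟨he, h⟩)]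
  · have hne : e ∉ M.filter (fun e => v ∈ e) := fun hc => h (Finset.mem_filter.1 hc).2
    rw [Finset.erase_eq_of_notMem hne]
    simp

/-- the neighbor finset of `v` w.r.t. an edge finset -/
def nbr {n : ℕ} (M : Finset (Sym2 (Fin n))) (v : Fin n) : Finset (Fin n) :=
  Finset.univ.filter (fun w => s(v,w) ∈ M ∧ w ≠ v)

lemma card_nbr {n : ℕ} (M : Finset (Sym2 (Fin n))) (hM : ∀ e ∈ M, ¬ e.IsDiag)
    (v : Fin n) : (nbr M v).card = degM M v := by
  unfold nbr degM
  apply Finset.card_bij (fun w _ => s(v,w))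
  · intro w hw
    simp only [Finset.mem_filter, Finset.mem_univ, true_and] at hw ⊢
    exact ⟨hw.1, Sym2.mem_mk_left v w⟩
  · intro w₁ h₁ w₂ h₂ he
    exact Sym2.congr_right.1 he
  · intro e he
    simp only [Finset.mem_filter] at he
    obtain ⟨heM, hv⟩ := he
    refine ⟨Sym2.Mem.other hv, ?_, Sym2.other_spec hv⟩
    simp only [Finset.mem_filter, Finset.mem_univ, true_and]
    constructor
    · rw [Sym2.other_spec hv]; exact heM
    · intro hc
      apply hM e heM
      rw [← Sym2.other_spec hv, hc]
      exact Sym2.mk_isDiag_iff.2 rfl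

lemma mem_nbr {n : ℕ} (M : Finset (Sym2 (Fin n))) (v w : Fin n) :
    w ∈ nbr M v ↔ s(v,w) ∈ M ∧ w ≠ v := by
  unfold nbr; simp

/-- from an edge finset, build a graph with the same degrees -/
lemma exists_graph {n : ℕ} (M : Finset (Sym2 (Fin n))) (hM : ∀ e ∈ M, ¬ e.IsDiag) :
    ∃ (G : SimpleGraph (Fin n)) (_ : DecidableRel G.Adj), ∀ v, G.degree v = degM M v := by
  refine ⟨⟨fun u v => u ≠ v ∧ s(u,v) ∈ M, ?_, ?_⟩, ?_, ?_⟩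
  · constructor; intro u v h
    exact ⟨Ne.symm h.1, by rw [Sym2.eq_swap]; exact h.2⟩
  · constructor; intro u h
    exact h.1 rfl
  · intro u v
    exact instDecidableAnd
  · intro v
    rw [SimpleGraph.degree, SimpleGraph.neighborFinset_eq_filter, ← card_nbr M hM v]
    congr 1
    unfold nbr
    ext w
    simp only [Finset.mem_filter, Finset.mem_univ, true_and]
    constructor
    · rintro ⟨h1, h2⟩; exact ⟨h2, Ne.symm h1⟩
    · rintro ⟨h1, h2⟩; exact ⟨Ne.symm h2, h1⟩

lemma icc_eq_ioc (a b : ℕ) : Finset.Icc (a+1) b = Finset.Ioc a b := by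
  ext k; rw [Finset.mem_Icc, Finset.mem_Ioc]; omega

lemma Hs_ioc (d : ℕ → ℕ) (g : ℕ) : Hs d g = ∑ k ∈ Finset.Ioc 0 g, d k := by
  unfold Hs; rw [← icc_eq_ioc]

lemma Rs_ioc (d : ℕ → ℕ) (n g : ℕ) : Rs d n g = ∑ k ∈ Finset.Ioc g n, min g (d k) := by
  unfold Rs; rw [← icc_eq_ioc]

lemma EGi_zero (d : ℕ → ℕ) (n : ℕ) : EGi d n 0 := by
  unfold EGi Hs
  rw [Finset.Icc_eq_empty (by omega)]
  simp

/-- upward step of the EG inequality -/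
lemma step_up (d : ℕ → ℕ) (n gm : ℕ) (hgn : gm + 1 ≤ n)
    (hprev : EGi d n gm)
    (hcond : min gm (d (gm+1)) + d (gm+1)
      ≤ 2*gm + ((Finset.Ioc (gm+1) n).filter (fun k => gm + 1 ≤ d k)).card) :
    EGi d n (gm+1) := by
  set g := gm + 1 with hg
  set A := ((Finset.Ioc g n).filter (fun k => g ≤ d k)).card with hA
  -- split Hs
  have hH : Hs d g = Hs d gm + d g := by
    rw [Hs_ioc, Hs_ioc, hg, Finset.sum_Ioc_succ_top (by omega)]
  -- Rs at gm : first term plus tail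
  have hsplit : Finset.Ioc gm n = insert g (Finset.Ioc g n) := by
    ext k; rw [Finset.mem_Ioc, Finset.mem_insert, Finset.mem_Ioc]; omega
  have hR1 : Rs d n gm = min gm (d g) + ∑ k ∈ Finset.Ioc g n, min gm (d k) := by
    rw [Rs_ioc, hsplit, Finset.sum_insert (by simp)]
  -- Rs at g vs Rs-tail at gm
  have hmin : ∀ k, min g (d k) = min gm (d k) + (if g ≤ d k then 1 else 0) := by
    intro k; split_ifs with h <;> omega
  have hR2 : Rs d n g = (∑ k ∈ Finset.Ioc g n, min gm (d k)) + A := by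
    rw [Rs_ioc, hA, Finset.card_filter, ← Finset.sum_add_distrib]
    exact Finset.sum_congr rfl (fun k _ => hmin k)
  rw [EGi] at hprev ⊢
  rw [hR1] at hprev
  rw [hH, hR2]
  have e1 : g * (g - 1) = gm * (gm - 1) + 2 * gm := by
    rw [hg]
    cases gm with
    | zero => simp
    | succ m => rw [Nat.succ_sub_one, Nat.add_sub_cancel]; ring
  omega

/-- main downward + strong induction: jumping implies full EG -/
lemma jumping_to_full (n : ℕ) (d : ℕ → ℕ)
    (hmono : ∀ i j, 1 ≤ i → i ≤ j → j ≤ n → d j ≤ d i)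
    (hjump : ∀ g, (g = n ∨ (1 ≤ g ∧ g ≤ n - 1 ∧ d (g + 1) < d g)) → EGi d n g) :
    ∀ g, g ≤ n → EGi d n g := by
  intro g
  induction g using Nat.strong_induction_on with
  | _ g IH =>
  intro hgn
  rcases Nat.eq_zero_or_pos g with hg0 | hg1
  · subst hg0; exact EGi_zero d n
  by_cases hcheck : g = n ∨ (1 ≤ g ∧ g ≤ n - 1 ∧ d (g + 1) < d g)
  · exact hjump g hcheck
  push_neg at hcheck
  obtain ⟨hgne, hdrop⟩ := hcheck
  have hgn1 : g ≤ n - 1 := by omega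
  have hceq : d (g+1) = d g :=
    le_antisymm (hmono g (g+1) hg1 (by omega) (by omega)) (hdrop hg1 hgn1)
  set c := d g with hc
  set A := ((Finset.Ioc g n).filter (fun k => g ≤ d k)).card with hA
  by_cases hup : min (g-1) c + c ≤ 2*(g-1) + A
  · obtain ⟨gm, rfl⟩ : ∃ gm, g = gm + 1 := ⟨g - 1, by omega⟩
    apply step_up d n gm (by omega) (IH gm (by omega) (by omega))
    have e : gm + 1 - 1 = gm := by omega
    rw [e] at hup
    exact hup
  -- downward case
  have hcg : g ≤ c ∧ g + A ≤ c := by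
    rcases le_or_gt c (g-1) with h | h
    · exfalso; apply hup; have : min (g-1) c = c := by omega
      omega
    · have : min (g-1) c = g - 1 := by omega
      omega
  -- the plateau top h
  have hgmem : g ∈ (Finset.Icc 1 n).filter (fun k => d k = c) := by
    rw [Finset.mem_filter, Finset.mem_Icc]; exact ⟨⟨hg1, hgn⟩, rfl⟩
  set F := (Finset.Icc 1 n).filter (fun k => d k = c) with hF
  have hFne : F.Nonempty := ⟨g, hgmem⟩
  set h := F.max' hFne with hh
  have hhmem : h ∈ F := F.max'_mem hFne
  have hhprop : 1 ≤ h ∧ h ≤ n ∧ d h = c := by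
    have := hhmem; rw [hF] at this
    simp only [Finset.mem_filter, Finset.mem_Icc] at this; tauto
  have hgh : g + 1 ≤ h := by
    apply F.le_max' (g+1)
    rw [hF]; simp only [Finset.mem_filter, Finset.mem_Icc]
    exact ⟨⟨by omega, by omega⟩, hceq⟩
  have hconst : ∀ k, g ≤ k → k ≤ h → d k = c := by
    intro k hk1 hk2
    have h1 : d k ≤ c := hc ▸ hmono g k hg1 hk1 (by omega)
    have h2 : c ≤ d k := hhprop.2.2 ▸ hmono k h (by omega) hk2 hhprop.2.1
    omega
  have hhcheck : h = n ∨ (1 ≤ h ∧ h ≤ n - 1 ∧ d (h + 1) < d h) := by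
    rcases Nat.eq_or_lt_of_le hhprop.2.1 with he | hlt
    · left; exact he
    · right
      refine ⟨hhprop.1, by omega, ?_⟩
      have hle : d (h+1) ≤ d h := hmono h (h+1) hhprop.1 (by omega) (by omega)
      rcases Nat.eq_or_lt_of_le hle with he | h2
      · exfalso
        have : h + 1 ∈ F := by
          rw [hF]; simp only [Finset.mem_filter, Finset.mem_Icc]
          refine ⟨⟨by omega, by omega⟩, by rw [he, hhprop.2.2]⟩
        have := F.le_max' (h+1) this
        omega
      · exact h2
  have EGh : EGi d n h := hjump h hhcheck
  -- now the arithmetic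
  obtain ⟨u, hu⟩ : ∃ u, h = g + u := ⟨h - g, by omega⟩
  set W := ((Finset.Ioc h n).filter (fun k => g + 1 ≤ d k)).card with hW
  -- A ≥ u + W
  have hAuW : u + W ≤ A := by
    have hsplitIoc : Finset.Ioc g n = Finset.Ioc g h ∪ Finset.Ioc h n := by
      ext k; simp only [Finset.mem_Ioc, Finset.mem_union]; omega
    have hdisj : Disjoint (Finset.Ioc g h) (Finset.Ioc h n) := by
      rw [Finset.disjoint_left]; intro k h1 h2
      simp only [Finset.mem_Ioc] at h1 h2; omega
    rw [hA, hsplitIoc, Finset.filter_union,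
      Finset.card_union_of_disjoint (Finset.disjoint_filter_filter hdisj)]
    have h1 : (Finset.Ioc g h).filter (fun k => g ≤ d k) = Finset.Ioc g h := by
      apply Finset.filter_true_of_mem
      intro k hk
      simp only [Finset.mem_Ioc] at hk
      rw [hconst k (by omega) hk.2]; omega
    have h2 : W ≤ ((Finset.Ioc h n).filter (fun k => g ≤ d k)).card := by
      rw [hW]
      apply Finset.card_le_card
      apply Finset.monotone_filter_right
      intro k hk; omega
    rw [h1, Nat.card_Ioc]
    omega
  -- Hs relation
  have hHgh : Hs d h = Hs d g + u * c := by
    rw [Hs_ioc, Hs_ioc, hu, ← Finset.sum_Ioc_consecutive _ (by omega : 0 ≤ g) (by omega : g ≤ g + u)]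
    congr 1
    rw [Finset.sum_congr rfl (fun k hk => by
      simp only [Finset.mem_Ioc] at hk
      exact hconst k (by omega) (by omega)), Finset.sum_const, Nat.card_Ioc]
    simp [mul_comm]
  -- Rs relation at g
  have hRg : Rs d n g = u * g + ∑ k ∈ Finset.Ioc h n, min g (d k) := by
    rw [Rs_ioc, hu, ← Finset.sum_Ioc_consecutive _ (by omega : g ≤ g + u) (by omega : g + u ≤ n)]
    congr 1
    rw [Finset.sum_congr rfl (fun k hk => by
      simp only [Finset.mem_Ioc] at hk
      have : d k = c := hconst k (by omega) (by omega)
      rw [this, min_eq_left (by omega)]), Finset.sum_const, Nat.card_Ioc]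
    simp [mul_comm]
  -- Rs at h bounded
  have hRh : Rs d n h ≤ (∑ k ∈ Finset.Ioc h n, min g (d k)) + u * W := by
    rw [Rs_ioc, hW, Finset.card_filter, Finset.mul_sum, ← Finset.sum_add_distrib]
    apply Finset.sum_le_sum
    intro k _
    split_ifs with hk
    · have : min g (d k) = g := by omega
      rw [this]
      have : min h (d k) ≤ h := min_le_left _ _
      omega
    · have : min h (d k) = min g (d k) := by omega
      omega
  -- conclude
  rw [EGi] at EGh ⊢
  rw [hHgh] at EGh
  rw [hRg]
  set R2 := ∑ k ∈ Finset.Ioc h n, min g (d k) with hR2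
  have hkey : Hs d g + u * c ≤ h * (h-1) + R2 + u * W := by
    have := hRh
    omega
  have hcb : g + u + W ≤ c := by omega
  obtain ⟨gm, rfl⟩ : ∃ gm, g = gm + 1 := ⟨g - 1, by omega⟩
  have h5 : u * (gm+1+u+W) ≤ u * c := Nat.mul_le_mul_left u (by omega)
  have e2 : h * (h-1) = (gm+1+u) * (gm+u) := by
    have h1 : h = gm+1+u := by omega
    have h2 : h - 1 = gm+u := by omega
    rw [h2, h1]
  have eA : (gm+1+u)*(gm+u) = (gm+1)*gm + (gm+1)*u + u*gm + u*u := by ring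
  have eB : u*(gm+1+u+W) = u*(gm+1) + u*u + u*W := by ring
  have eC : u*(gm+1) = (gm+1)*u := by ring
  have eD : u*gm ≤ u*(gm+1) := Nat.mul_le_mul_left u (by omega)
  have eG : (gm+1)*(gm+1-1) = (gm+1)*gm := by rw [Nat.add_sub_cancel]
  rw [e2, eA] at hkey
  rw [eB, eC] at h5
  rw [eC] at eD
  rw [eG]
  omega

/-- splitting a partial sum -/
lemma Hs_split (d : ℕ → ℕ) (g G : ℕ) (hgG : g ≤ G) :
    Hs d G = Hs d g + ∑ k ∈ Finset.Ioc g G, d k := by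
  rw [Hs_ioc, Hs_ioc, ← Finset.sum_Ioc_consecutive _ (Nat.zero_le g) hgG]

/-- sum of an indicator pair over Icc 1 G -/
lemma sum_ind_pair (a z G : ℕ) (ha : 1 ≤ a) (hz : 1 ≤ z) (haz : a ≠ z) :
    ∑ k ∈ Finset.Icc 1 G, (if k = a ∨ k = z then 1 else 0)
      = (if a ≤ G then 1 else 0) + (if z ≤ G then 1 else 0) := by
  have h1 : ∀ k, (if k = a ∨ k = z then (1:ℕ) else 0)
      = (if k = a then 1 else 0) + (if k = z then 1 else 0) := by
    intro k
    by_cases h1 : k = a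
    · subst h1; rw [if_pos (Or.inl rfl), if_pos rfl, if_neg haz]
    · by_cases h2 : k = z
      · subst h2; rw [if_pos (Or.inr rfl), if_neg h1, if_pos rfl]
      · rw [if_neg (by tauto), if_neg h1, if_neg h2]
  rw [Finset.sum_congr rfl (fun k _ => h1 k), Finset.sum_add_distrib]
  congr 1
  · rw [Finset.sum_ite_eq' (Finset.Icc 1 G) a (fun _ => 1)]
    simp only [Finset.mem_Icc]
    split_ifs with h1 h2 h2 <;> omega
  · rw [Finset.sum_ite_eq' (Finset.Icc 1 G) z (fun _ => 1)]
    simp only [Finset.mem_Icc]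
    split_ifs with h1 h2 h2 <;> omega

/-- Hs of the decremented sequence -/
lemma Hs_dec (d : ℕ → ℕ) (a z G : ℕ) (ha : 1 ≤ a) (hz : 1 ≤ z) (haz : a ≠ z)
    (hda : 1 ≤ d a) (hdz : 1 ≤ d z) :
    Hs d G = Hs (dec d a z) G
      + ((if a ≤ G then 1 else 0) + (if z ≤ G then 1 else 0)) := by
  rw [← sum_ind_pair a z G ha hz haz]
  unfold Hs dec
  rw [← Finset.sum_add_distrib]
  refine Finset.sum_congr rfl (fun k _ => ?_)
  by_cases h : k = a ∨ k = z
  · rw [if_pos h, if_pos h]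
    rcases h with rfl | rfl <;> omega
  · rw [if_neg h, if_neg h]
    omega



/-- EG inequality for the decremented sequence at indices `≥ a`. -/
lemma EGdec_ge (n : ℕ) (d : ℕ → ℕ) (a z g : ℕ)
    (ha : 1 ≤ a) (haz : a < z) (hzn : z ≤ n)
    (hda : 1 ≤ d a) (hdz : 1 ≤ d z)
    (hEGg : EGi d n g) (hag : a ≤ g) (hgn : g ≤ n) :
    EGi (dec d a z) n g := by
  have hHs := Hs_dec d a z g ha (by omega) (by omega) hda hdz
  rw [if_pos hag] at hHs
  -- Rs d n g ≤ Rs (dec d a z) n g + (if d z ≤ g then 1 else 0)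
  have hstep : Rs d n g ≤ Rs (dec d a z) n g
      + ∑ k ∈ Finset.Icc (g+1) n, (if k = z then (if d z ≤ g then 1 else 0) else 0) := by
    unfold Rs
    rw [← Finset.sum_add_distrib]
    apply Finset.sum_le_sum
    intro k hk
    simp only [Finset.mem_Icc] at hk
    have hka : k ≠ a := by omega
    by_cases hkz : k = z
    · have e1 : dec d a z z = d z - 1 := by unfold dec; rw [if_pos (Or.inr rfl)]
      rw [hkz, e1, if_pos rfl]
      split_ifs with h <;> omega
    · have e1 : dec d a z k = d k := by unfold dec; rw [if_neg (by tauto)]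
      rw [e1, if_neg hkz]
      omega
  have hiteval : ∑ k ∈ Finset.Icc (g+1) n, (if k = z then (if d z ≤ g then 1 else 0) else 0)
      ≤ (if d z ≤ g then 1 else 0) := by
    rw [Finset.sum_ite_eq' (Finset.Icc (g+1) n) z (fun _ => if d z ≤ g then 1 else 0)]
    split_ifs <;> omega
  have hRs : Rs d n g ≤ Rs (dec d a z) n g + (if d z ≤ g then 1 else 0) := by omega
  rw [EGi] at hEGg ⊢
  split_ifs at hHs hRs with h1 h2 h2 <;> omega

/-- main decrement step -/
lemma decrement_step (n : ℕ) (d : ℕ → ℕ)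
    (hmono : ∀ i j, 1 ≤ i → i ≤ j → j ≤ n → d j ≤ d i)
    (hEG : ∀ g, 1 ≤ g → g ≤ n → EGi d n g)
    (heven : Even (Hs d n)) (hpos : Hs d n ≠ 0) :
    ∃ a z, 1 ≤ a ∧ a < z ∧ z ≤ n ∧ 1 ≤ d a ∧ 1 ≤ d z ∧ d 1 + 1 ≤ z ∧
      (∀ i j, 1 ≤ i → i ≤ j → j ≤ n → dec d a z j ≤ dec d a z i) ∧
      (Hs (dec d a z) n + 2 = Hs d n) ∧
      (∀ g, 1 ≤ g → g ≤ n → EGi (dec d a z) n g) := by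
  have hn : 1 ≤ n := by
    by_contra hc
    apply hpos
    unfold Hs
    rw [Finset.Icc_eq_empty (by omega)]
    rfl
  -- z : last positive index
  have hF1ne : ((Finset.Icc 1 n).filter (fun k => 1 ≤ d k)).Nonempty := by
    by_contra hc
    rw [Finset.not_nonempty_iff_eq_empty, Finset.filter_eq_empty_iff] at hc
    apply hpos
    apply Finset.sum_eq_zero
    intro k hk
    have := hc hk
    omega
  set z := ((Finset.Icc 1 n).filter (fun k => 1 ≤ d k)).max' hF1ne with hzdef
  have hzmem : z ∈ (Finset.Icc 1 n).filter (fun k => 1 ≤ d k) := Finset.max'_mem _ hF1ne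
  have hzfacts : 1 ≤ z ∧ z ≤ n ∧ 1 ≤ d z := by
    rw [Finset.mem_filter, Finset.mem_Icc] at hzmem; tauto
  obtain ⟨hz1, hzn, hdz⟩ := hzfacts
  have hzmax : ∀ k, 1 ≤ k → k ≤ n → 1 ≤ d k → k ≤ z := by
    intro k h1 h2 h3
    apply Finset.le_max'
    rw [Finset.mem_filter, Finset.mem_Icc]
    exact ⟨⟨h1, h2⟩, h3⟩
  have hzero : ∀ k, z < k → k ≤ n → d k = 0 := by
    intro k h1 h2
    by_contra hc
    have := hzmax k (by omega) h2 (by omega)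
    omega
  clear_value z
  have hd1 : 1 ≤ d 1 := le_trans hdz (hmono 1 z le_rfl hz1 hzn)
  -- EG(1) gives d 1 ≤ z - 1
  have hd1z : d 1 + 1 ≤ z := by
    have h1 := hEG 1 le_rfl hn
    rw [EGi] at h1
    have hH1 : Hs d 1 = d 1 := by
      unfold Hs; rw [Finset.Icc_self, Finset.sum_singleton]
    have hR1 : Rs d n 1 ≤ z - 1 := by
      unfold Rs
      calc ∑ k ∈ Finset.Icc 2 n, min 1 (d k)
          ≤ ∑ k ∈ Finset.Icc 2 n, (if k ≤ z then 1 else 0) := by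
            apply Finset.sum_le_sum
            intro k hk
            simp only [Finset.mem_Icc] at hk
            split_ifs with h
            · omega
            · rw [hzero k (by omega) hk.2]; omega
        _ = ((Finset.Icc 2 n).filter (fun k => k ≤ z)).card := by
            rw [Finset.card_filter]
        _ = (Finset.Icc 2 z).card := by
            congr 1
            ext k
            simp only [Finset.mem_filter, Finset.mem_Icc]
            omega
        _ = z - 1 := by rw [Nat.card_Icc]; omega
    -- d 1 ≥ 1, so z ≥ 2 once d 1 ≤ z - 1
    have : d 1 ≤ z - 1 := by rw [hH1] at h1; omega
    omega
  have hz2 : 2 ≤ z := by omega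
  -- t : last index of the first block
  have hF2ne : ((Finset.Icc 1 n).filter (fun k => d k = d 1)).Nonempty := by
    refine ⟨1, ?_⟩
    rw [Finset.mem_filter, Finset.mem_Icc]
    exact ⟨⟨le_rfl, hn⟩, rfl⟩
  set t := ((Finset.Icc 1 n).filter (fun k => d k = d 1)).max' hF2ne with htdef
  have htmem : t ∈ (Finset.Icc 1 n).filter (fun k => d k = d 1) := Finset.max'_mem _ hF2ne
  have htfacts : 1 ≤ t ∧ t ≤ n ∧ d t = d 1 := by
    rw [Finset.mem_filter, Finset.mem_Icc] at htmem; tauto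
  obtain ⟨ht1, htn, hdt⟩ := htfacts
  have htmax : ∀ k, 1 ≤ k → k ≤ n → d k = d 1 → k ≤ t := by
    intro k h1 h2 h3
    apply Finset.le_max'
    rw [Finset.mem_filter, Finset.mem_Icc]
    exact ⟨⟨h1, h2⟩, h3⟩
  clear_value t
  have htz : t ≤ z := hzmax t ht1 htn (by omega)
  have hblock : ∀ k, 1 ≤ k → k ≤ t → d k = d 1 := by
    intro k h1 h2
    have ha := hmono 1 k le_rfl h1 (by omega)
    have hb := hmono k t h1 h2 htn
    omega
  have hafter : ∀ k, t < k → k ≤ n → d k < d 1 := by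
    intro k h1 h2
    have ha := hmono 1 k le_rfl (by omega) h2
    rcases Nat.eq_or_lt_of_le ha with he | hlt
    · exfalso; have := htmax k (by omega) h2 he; omega
    · exact hlt
  -- a
  set a := if t = z then z - 1 else t with hadef
  have ha1 : 1 ≤ a := by rw [hadef]; split_ifs <;> omega
  have haz : a < z := by
    rw [hadef]; split_ifs with h <;> omega
  have hat : a ≤ t := by rw [hadef]; split_ifs <;> omega
  have hda : d a = d 1 := hblock a ha1 hat
  have hda1 : 1 ≤ d a := by omega
  have han : a ≤ n := by omega
  have hcases : (t = z ∧ a = z - 1) ∨ (¬ t = z ∧ a = t) := by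
    rw [hadef]; split_ifs with h
    · exact Or.inl ⟨h, rfl⟩
    · exact Or.inr ⟨h, rfl⟩
  clear_value a
  -- before a, the sequence is constant d 1
  have hbefore : ∀ k, 1 ≤ k → k < a → d k = d 1 := fun k h1 h2 =>
    hblock k h1 (by omega)
  -- monotonicity of dec
  have hdec_le : ∀ k, dec d a z k ≤ d k := by
    intro k; unfold dec; split_ifs <;> omega
  have hmono' : ∀ i j, 1 ≤ i → i ≤ j → j ≤ n → dec d a z j ≤ dec d a z i := by
    intro i j hi hij hjn
    have hdji : d j ≤ d i := hmono i j hi hij hjn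
    by_cases hia : i = a
    · have ei : dec d a z i = d a - 1 := by
        unfold dec; rw [if_pos (Or.inl hia), hia]
      rw [ei]
      by_cases hja : j = a
      · have ej : dec d a z j = d a - 1 := by
          unfold dec; rw [if_pos (Or.inl hja), hja]
        rw [ej]
      · by_cases hjz : j = z
        · have ej : dec d a z j = d z - 1 := by
            unfold dec; rw [if_pos (Or.inr hjz), hjz]
          rw [ej]
          have := hmono a z (by omega) (by omega) hzn
          omega
        · have ej : dec d a z j = d j := by unfold dec; rw [if_neg (by tauto)]
          rw [ej]
          -- d j ≤ d a - 1
          have hiaj : a < j := by omega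
          rcases hcases with ⟨h1, h2⟩ | ⟨h1, h2⟩
          · -- a = z - 1, t = z ; j > z - 1, j ≠ z so j > z : d j = 0
            have hjz2 : z < j := by omega
            rw [hzero j hjz2 hjn]
            omega
          · -- a = t : j > t so d j < d 1
            have : t < j := by omega
            have := hafter j this hjn
            omega
    · by_cases hiz : i = z
      · have ei : dec d a z i = d z - 1 := by
          unfold dec; rw [if_pos (Or.inr hiz), hiz]
        rw [ei]
        by_cases hjz : j = z
        · have ej : dec d a z j = d z - 1 := by
            unfold dec; rw [if_pos (Or.inr hjz), hjz]
          rw [ej]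
        · have hzj : z < j := by omega
          have h0 : d j = 0 := hzero j hzj hjn
          have := hdec_le j
          omega
      · have : dec d a z i = d i := by unfold dec; rw [if_neg (by tauto)]
        rw [this]
        exact le_trans (hdec_le j) hdji
  -- sum relation
  have hHsdec : Hs (dec d a z) n + 2 = Hs d n := by
    have := Hs_dec d a z n ha1 (by omega) (by omega) hda1 hdz
    rw [if_pos han, if_pos hzn] at this
    omega
  refine ⟨a, z, ha1, haz, hzn, hda1, hdz, hd1z, hmono', hHsdec, ?_⟩
  -- EG for dec via jumping criterion
  suffices hjump : ∀ g, (g = n ∨ (1 ≤ g ∧ g ≤ n - 1 ∧ dec d a z (g + 1) < dec d a z g)) →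
      EGi (dec d a z) n g by
    exact fun g h1 h2 => jumping_to_full n (dec d a z) hmono' hjump g h2
  intro g hg
  by_cases hag : a ≤ g
  · have hgn : g ≤ n := by rcases hg with rfl | ⟨_, h, _⟩ <;> omega
    exact EGdec_ge n d a z g ha1 haz hzn hda1 hdz (hEG g (by omega) hgn) hag hgn
  · -- g < a : must be g = a - 1
    push_neg at hag
    rcases hg with rfl | ⟨hg1, hgn1, hdrop⟩
    · omega
    have hga : g + 1 = a := by
      by_contra hc
      have hg1a : g + 1 < a := by omega
      have e1 : dec d a z g = d g := by unfold dec; rw [if_neg (by omega)]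
      have e2 : dec d a z (g+1) = d (g+1) := by unfold dec; rw [if_neg (by omega)]
      rw [e1, e2] at hdrop
      rw [hbefore g hg1 (by omega), hbefore (g+1) (by omega) (by omega)] at hdrop
      omega
    -- now g + 1 = a
    have hgn : g ≤ n := by omega
    have hHg : Hs d g = g * d 1 := by
      unfold Hs
      rw [Finset.sum_congr rfl (fun k hk => by
        simp only [Finset.mem_Icc] at hk
        exact hbefore k hk.1 (by omega)), Finset.sum_const, Nat.card_Icc]
      simp [mul_comm]
    have hHdecg : Hs (dec d a z) g = Hs d g := by
      have := Hs_dec d a z g ha1 (by omega) (by omega) hda1 hdz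
      rw [if_neg (by omega), if_neg (by omega)] at this
      omega
    by_cases hcle : d 1 ≤ g
    · -- parity case
      have htail : ∀ k, g+1 ≤ k → k ≤ n → d k ≤ g := by
        intro k h1 h2
        exact le_trans (hmono 1 k le_rfl (by omega) h2) hcle
      have hRfull : Hs d g + Rs d n g = Hs d n := by
        rw [Hs_split d g n hgn]
        congr 1
        rw [Rs_ioc]
        refine Finset.sum_congr rfl (fun k hk => ?_)
        simp only [Finset.mem_Ioc] at hk
        exact min_eq_right (htail k (by omega) hk.2)
      have hRdec : Rs d n g ≤ Rs (dec d a z) n g + 2 := by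
        have hstep : Rs d n g ≤ Rs (dec d a z) n g
            + ∑ k ∈ Finset.Icc (g+1) n, (if k = a ∨ k = z then 1 else 0) := by
          unfold Rs
          rw [← Finset.sum_add_distrib]
          apply Finset.sum_le_sum
          intro k _
          unfold dec
          split_ifs with h
          · have : d k - 1 + 1 = d k ∨ d k = 0 := by omega
            omega
          · omega
        have hsum2 : ∑ k ∈ Finset.Icc (g+1) n, (if k = a ∨ k = z then (1:ℕ) else 0) ≤ 2 := by
          have h1 : ∀ k, (if k = a ∨ k = z then (1:ℕ) else 0)
              ≤ (if k = a then 1 else 0) + (if k = z then 1 else 0) := by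
            intro k; split_ifs <;> omega
          calc ∑ k ∈ Finset.Icc (g+1) n, (if k = a ∨ k = z then (1:ℕ) else 0)
              ≤ ∑ k ∈ Finset.Icc (g+1) n,
                ((if k = a then 1 else 0) + (if k = z then 1 else 0)) :=
                Finset.sum_le_sum (fun k _ => h1 k)
            _ ≤ 2 := by
                rw [Finset.sum_add_distrib,
                  Finset.sum_ite_eq' (Finset.Icc (g+1) n) a (fun _ => 1),
                  Finset.sum_ite_eq' (Finset.Icc (g+1) n) z (fun _ => 1)]
                split_ifs <;> omega
        omega
      -- strict inequality
      obtain ⟨p, rfl⟩ : ∃ p, g = p + 1 := ⟨g - 1, by omega⟩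
      have hstrict : 2 * ((p+1) * d 1) < (p+1) * p + Hs d n := by
        have hpc : p * d 1 ≤ p * (p + 1) := Nat.mul_le_mul_left p hcle
        rcases hcases with ⟨h1, h2⟩ | ⟨h1, h2⟩
        · -- t = z, a = z - 1, z = g + 2
          have hzg : z = p + 3 := by omega
          have hHz : Hs d z = z * d 1 := by
            unfold Hs
            rw [Finset.sum_congr rfl (fun k hk => by
              simp only [Finset.mem_Icc] at hk
              exact hblock k hk.1 (by omega)), Finset.sum_const, Nat.card_Icc]
            simp [mul_comm]
          have hge : z * d 1 ≤ Hs d n := by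
            rw [← hHz, Hs_split d z n hzn]
            omega
          rw [hzg] at hge
          have e1 : 2 * ((p+1) * d 1) = 2 * (p * d 1) + 2 * d 1 := by ring
          have e5 : (p+3) * d 1 = p * d 1 + 3 * d 1 := by ring
          have e3 : p * (p+1) = p * p + p := by ring
          have e4 : (p+1) * p = p * p + p := by ring
          omega
        · -- a = t, t = g + 1
          have htg : t = p + 2 := by omega
          have hHt : Hs d t = t * d 1 := by
            unfold Hs
            rw [Finset.sum_congr rfl (fun k hk => by
              simp only [Finset.mem_Icc] at hk
              exact hblock k hk.1 hk.2), Finset.sum_const, Nat.card_Icc]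
            simp [mul_comm]
          have hge : t * d 1 + d z ≤ Hs d n := by
            rw [Hs_split d t n htn, ← hHt]
            have hzmem2 : z ∈ Finset.Ioc t n := by
              rw [Finset.mem_Ioc]; omega
            have hsing : d z ≤ ∑ k ∈ Finset.Ioc t n, d k :=
              Finset.single_le_sum (f := fun k => d k)
                (fun k _ => Nat.zero_le (d k)) hzmem2
            omega
          rw [htg] at hge
          have e1 : 2 * ((p+1) * d 1) = 2 * (p * d 1) + 2 * d 1 := by ring
          have e5 : (p+2) * d 1 = p * d 1 + 2 * d 1 := by ring
          have e4 : (p+1) * p = p * p + p := by ring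
          have e3 : p * (p+1) = p * p + p := by ring
          omega
      -- parity finishes
      obtain ⟨m, hm⟩ := heven
      have hev2 : Even ((p+1) * p) := by
        rcases Nat.even_or_odd p with h | h
        · exact h.mul_left _
        · exact (Odd.add_one h).mul_right _
      obtain ⟨q, hq⟩ := hev2
      rw [EGi, hHdecg, hHg]
      have egoal : (p+1)*(p+1-1) = (p+1)*p := by congr 1
      omega
    · -- d 1 ≥ g + 1
      push_neg at hcle
      have hdecal : ∀ k, g+1 ≤ k → k ≤ n → k ≠ z → min g (dec d a z k) = min g (d k) := by
        intro k h1 h2 h3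
        unfold dec
        split_ifs with h
        · have hka : k = a := by tauto
          rw [hka]
          omega
        · rfl
      by_cases hdzg : g + 1 ≤ d z
      · -- no term drops
        have hReq : Rs (dec d a z) n g = Rs d n g := by
          unfold Rs
          refine Finset.sum_congr rfl (fun k hk => ?_)
          simp only [Finset.mem_Icc] at hk
          by_cases h3 : k = z
          · rw [h3]
            have : dec d a z z = d z - 1 := by unfold dec; rw [if_pos (Or.inr rfl)]
            rw [this]
            omega
          · exact hdecal k hk.1 hk.2 h3
        have := hEG g (by omega) hgn
        rw [EGi] at this ⊢
        rw [hHdecg, hReq]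
        exact this
      · -- the crucial strict case : a = t, d z ≤ g
        push_neg at hdzg
        have hta : ¬ t = z := by
          intro h
          rw [h] at hdt
          omega
        have hat2 : a = t := by
          rcases hcases with ⟨h1, _⟩ | ⟨_, h2⟩
          · exact absurd h1 hta
          · exact h2
        have htg : t = g + 1 := by omega
        -- r : last index with d k ≥ t
        have hF3ne : ((Finset.Icc 1 n).filter (fun k => t ≤ d k)).Nonempty := by
          refine ⟨t, ?_⟩
          rw [Finset.mem_filter, Finset.mem_Icc]
          refine ⟨⟨ht1, htn⟩, ?_⟩
          omega
        set r := ((Finset.Icc 1 n).filter (fun k => t ≤ d k)).max' hF3ne with hrdef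
        have hrmem : r ∈ (Finset.Icc 1 n).filter (fun k => t ≤ d k) := Finset.max'_mem _ hF3ne
        clear_value r
        have hrfacts : 1 ≤ r ∧ r ≤ n ∧ t ≤ d r := by
          rw [Finset.mem_filter, Finset.mem_Icc] at hrmem; tauto
        obtain ⟨hr1, hrn, hdr⟩ := hrfacts
        have hrmax : ∀ k, 1 ≤ k → k ≤ n → t ≤ d k → k ≤ r := by
          intro k h1 h2 h3
          rw [hrdef]
          apply Finset.le_max'
          rw [Finset.mem_filter, Finset.mem_Icc]
          exact ⟨⟨h1, h2⟩, h3⟩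
        have htr : t ≤ r := hrmax t ht1 htn (by omega)
        have hrz : r < z := by
          by_contra hc
          push_neg at hc
          have := hmono z r hz1 hc hrn
          omega
        have hhead : ∀ k, 1 ≤ k → k ≤ r → t ≤ d k := by
          intro k h1 h2
          exact le_trans hdr (hmono k r h1 h2 hrn)
        have htail2 : ∀ k, r < k → k ≤ n → d k < t := by
          intro k h1 h2
          by_contra hc
          push_neg at hc
          have := hrmax k (by omega) h2 hc
          omega
        -- key inequality : Hs d g + 1 ≤ g*(g-1) + Rs d n g
        have hI3 : Rs d n g = (r - g) * g + ∑ k ∈ Finset.Ioc r n, d k := by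
          rw [Rs_ioc, ← Finset.sum_Ioc_consecutive _ (by omega : g ≤ r) (by omega : r ≤ n)]
          congr 1
          · rw [Finset.sum_congr rfl (fun k hk => by
              simp only [Finset.mem_Ioc] at hk
              have h5 := hhead k (by omega) hk.2
              have h6 : g ≤ d k := by omega
              exact min_eq_left h6), Finset.sum_const, Nat.card_Ioc]
            simp [mul_comm]
          · refine Finset.sum_congr rfl (fun k hk => ?_)
            simp only [Finset.mem_Ioc] at hk
            have := htail2 k hk.1 hk.2
            exact min_eq_right (by omega)
        have hI4 : Rs d n t = (r - t) * t + ∑ k ∈ Finset.Ioc r n, d k := by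
          rw [Rs_ioc, ← Finset.sum_Ioc_consecutive _ (by omega : t ≤ r) (by omega : r ≤ n)]
          congr 1
          · rw [Finset.sum_congr rfl (fun k hk => by
              simp only [Finset.mem_Ioc] at hk
              exact min_eq_left (hhead k (by omega) hk.2)), Finset.sum_const, Nat.card_Ioc]
            simp [mul_comm]
          · refine Finset.sum_congr rfl (fun k hk => ?_)
            simp only [Finset.mem_Ioc] at hk
            have := htail2 k hk.1 hk.2
            exact min_eq_right (by omega)
        set Q := ∑ k ∈ Finset.Ioc r n, d k with hQdef
        have hQ1 : 1 ≤ Q := by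
          have hzmem3 : z ∈ Finset.Ioc r n := by rw [Finset.mem_Ioc]; omega
          have hsing : d z ≤ ∑ k ∈ Finset.Ioc r n, d k :=
            Finset.single_le_sum (f := fun k => d k)
              (fun k _ => Nat.zero_le (d k)) hzmem3
          omega
        have hHt : Hs d t = t * d 1 := by
          unfold Hs
          rw [Finset.sum_congr rfl (fun k hk => by
            simp only [Finset.mem_Icc] at hk
            exact hblock k hk.1 hk.2), Finset.sum_const, Nat.card_Icc]
          simp [mul_comm]
        have hEGt := hEG t ht1 htn
        rw [EGi, hHt, hI4] at hEGt
        have hkey : Hs d g + 1 ≤ g * (g-1) + Rs d n g := by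
          rw [hHg, hI3]
          by_cases hrc : r ≤ d 1
          · -- use EG(t)
            obtain ⟨u, hu⟩ : ∃ u, r = t + u := ⟨r - t, by omega⟩
            have e0 : t * (t - 1) = (g+1) * g := by rw [htg]; congr 1
            have e1 : (r - t) = u := by omega
            rw [e0, e1, htg] at hEGt
            -- hEGt : (g+1) * d 1 ≤ (g+1)*g + u*(g+1) + Q
            have eA : (g+1) * d 1 = g * d 1 + d 1 := by ring
            have eB : (g+1)*g = g*g + g := by ring
            have eC : u*(g+1) = u*g + u := by ring
            have eD : (r - g) * g = (u+1) * g := by congr 1; omega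
            have eE : (u+1)*g = u*g + g := by ring
            have hcu : g + 1 + u ≤ d 1 := by omega
            rw [eA, eB, eC] at hEGt
            rw [eD, eE]
            -- target : g * d 1 + 1 ≤ g*(g-1) + (u*g + g) + Q
            have eF : g*(g-1) + g = g*g := by
              have : (g-1) + 1 = g := by omega
              calc g*(g-1) + g = g*((g-1)+1) := by ring
                _ = g*g := by rw [this]
            omega
          · -- r ≥ d 1 + 1 : direct
            push_neg at hrc
            have hgle : g * d 1 ≤ g * (r - 1) := Nat.mul_le_mul_left g (by omega)
            have eG : g*(g-1) + (r-g)*g = g*(r-1) := by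
              rw [mul_comm (r-g) g, ← Nat.mul_add]
              congr 1
              omega
            omega
        -- now conclude EG for dec at g
        have hRdec1 : Rs d n g ≤ Rs (dec d a z) n g + 1 := by
          have hstep : Rs d n g ≤ Rs (dec d a z) n g
              + ∑ k ∈ Finset.Icc (g+1) n, (if k = z then 1 else 0) := by
            unfold Rs
            rw [← Finset.sum_add_distrib]
            apply Finset.sum_le_sum
            intro k hk
            simp only [Finset.mem_Icc] at hk
            by_cases h3 : k = z
            · rw [h3, if_pos rfl]
              have : dec d a z z = d z - 1 := by unfold dec; rw [if_pos (Or.inr rfl)]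
              rw [this]
              have := min_le_left g (d z - 1)
              omega
            · rw [if_neg h3, hdecal k hk.1 hk.2 h3]
              omega
          have : ∑ k ∈ Finset.Icc (g+1) n, (if k = z then (1:ℕ) else 0) ≤ 1 := by
            rw [Finset.sum_ite_eq' (Finset.Icc (g+1) n) z (fun _ => 1)]
            split_ifs <;> omega
          omega
        rw [EGi, hHdecg]
        omega

/-- surgery: add one to the degrees of vertices `a` and `z` -/
lemma surgery (n : ℕ) (d : ℕ → ℕ) (a z : ℕ) (ha1 : 1 ≤ a) (haz : a < z) (hzn : z ≤ n)
    (hmono : ∀ i j, 1 ≤ i → i ≤ j → j ≤ n → d j ≤ d i)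
    (hd1 : d 1 + 1 ≤ z) (hdz : 1 ≤ d z) (hda : 1 ≤ d a)
    (M' : Finset (Sym2 (Fin n))) (hM' : ∀ e ∈ M', ¬ e.IsDiag)
    (hdeg : ∀ v : Fin n, degM M' v = dec d a z (v.1+1)) :
    ∃ M : Finset (Sym2 (Fin n)), (∀ e ∈ M, ¬ e.IsDiag) ∧
      ∀ v : Fin n, degM M v = d (v.1+1) := by
  have han : a ≤ n := by omega
  set T : Fin n := ⟨a-1, by omega⟩ with hT
  set Z : Fin n := ⟨z-1, by omega⟩ with hZ
  have hTval : T.1 + 1 = a := by simp [hT]; omega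
  have hZval : Z.1 + 1 = z := by simp [hZ]; omega
  have hTZ : T ≠ Z := by
    intro h
    have := congrArg (fun x : Fin n => x.1) h
    simp [hT, hZ] at this; omega
  have hvala : ∀ v : Fin n, v.1 + 1 = a ↔ v = T := by
    intro v
    constructor
    · intro h; apply Fin.ext; simp [hT]; omega
    · intro h; subst h; exact hTval
  have hvalz : ∀ v : Fin n, v.1 + 1 = z ↔ v = Z := by
    intro v
    constructor
    · intro h; apply Fin.ext; simp [hZ]; omega
    · intro h; subst h; exact hZval
  have htarget : ∀ v : Fin n, d (v.1+1)
      = degM M' v + (if v = T then 1 else 0) + (if v = Z then 1 else 0) := by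
    intro v
    rw [hdeg v]
    unfold dec
    by_cases h1 : v = T
    · have hva : v.1+1 = a := (hvala v).2 h1
      have h2 : v ≠ Z := h1 ▸ hTZ
      rw [if_pos (Or.inl hva), if_pos h1, if_neg h2]
      have : 1 ≤ d (v.1+1) := by rw [hva]; exact hda
      omega
    · by_cases h2 : v = Z
      · have hvz : v.1+1 = z := (hvalz v).2 h2
        rw [if_pos (Or.inr hvz), if_neg h1, if_pos h2]
        have : 1 ≤ d (v.1+1) := by rw [hvz]; exact hdz
        omega
      · have hno : ¬(v.1+1 = a ∨ v.1+1 = z) := by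
          rw [hvala, hvalz]; tauto
        rw [if_neg hno, if_neg h1, if_neg h2]
        omega
  have hdegT : degM M' T = d a - 1 := by
    rw [hdeg T, hTval]; unfold dec; rw [if_pos (Or.inl rfl)]
  have hdegZ : degM M' Z = d z - 1 := by
    rw [hdeg Z, hZval]; unfold dec
    rw [if_pos (Or.inr rfl)]
  by_cases hadj : s(T,Z) ∈ M'
  · -- exchange case
    -- find x
    have hcard1 : (insert T (nbr M' T)).card ≤ d a := by
      calc (insert T (nbr M' T)).card ≤ (nbr M' T).card + 1 := Finset.card_insert_le _ _
        _ = degM M' T + 1 := by rw [card_nbr M' hM']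
        _ = d a := by rw [hdegT]; omega
    have hcard2 : (Finset.univ.filter (fun i : Fin n => i.1+1 ≤ z)).card = z :=
      card_filter_le n z hzn
    have hda1 : d a ≤ d 1 := hmono 1 a le_rfl ha1 (by omega)
    have hLne : ((Finset.univ.filter (fun i : Fin n => i.1+1 ≤ z))
        \ (insert T (nbr M' T))).Nonempty := by
      rw [← Finset.card_pos]
      have := Finset.le_card_sdiff (insert T (nbr M' T))
        (Finset.univ.filter (fun i : Fin n => i.1+1 ≤ z))
      omega
    obtain ⟨x, hx⟩ := hLne
    rw [Finset.mem_sdiff, Finset.mem_insert, Finset.mem_filter] at hx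
    obtain ⟨⟨_, hxz⟩, hxTn⟩ := hx
    push_neg at hxTn
    obtain ⟨hxT, hxnbrT⟩ := hxTn
    rw [mem_nbr] at hxnbrT
    have hTx : s(T,x) ∉ M' := fun hc => hxnbrT ⟨hc, hxT⟩
    have hxZ : x ≠ Z := by
      intro h
      apply hxnbrT
      rw [h]
      exact ⟨hadj, fun hc => hTZ hc.symm⟩
    have hdegx : degM M' x = d (x.1+1) := by
      rw [hdeg x]
      unfold dec
      rw [if_neg]
      rw [hvala, hvalz]
      tauto
    have hdx : d z ≤ d (x.1+1) := hmono (x.1+1) z (by omega) hxz hzn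
    -- find y
    have hTinB : T ∈ insert Z (nbr M' Z) := by
      rw [Finset.mem_insert, mem_nbr]
      right
      exact ⟨by rw [Sym2.eq_swap]; exact hadj, hTZ⟩
    have hcardB : (insert Z (nbr M' Z)).card ≤ d z := by
      calc (insert Z (nbr M' Z)).card ≤ (nbr M' Z).card + 1 := Finset.card_insert_le _ _
        _ = degM M' Z + 1 := by rw [card_nbr M' hM']
        _ = d z := by rw [hdegZ]; omega
    have hnotsub : ¬ (nbr M' x ⊆ insert Z (nbr M' Z)) := by
      intro hsub
      have hcards : (insert Z (nbr M' Z)).card ≤ (nbr M' x).card := by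
        rw [card_nbr M' hM', hdegx]; omega
      have heq := Finset.eq_of_subset_of_card_le hsub hcards
      have hZx : Z ∈ nbr M' x := by
        rw [heq]; exact Finset.mem_insert_self Z _
      rw [mem_nbr] at hZx
      have hxB : x ∈ nbr M' x := by
        rw [heq, Finset.mem_insert, mem_nbr]
        right
        constructor
        · rw [Sym2.eq_swap]; exact hZx.1
        · exact hxZ
      rw [mem_nbr] at hxB
      exact hxB.2 rfl
    rw [Finset.not_subset] at hnotsub
    obtain ⟨y, hyx, hyB⟩ := hnotsub
    rw [mem_nbr] at hyx
    obtain ⟨hxy, hyxne⟩ := hyx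
    rw [Finset.mem_insert, mem_nbr] at hyB
    push_neg at hyB
    obtain ⟨hyZ, hyZ2⟩ := hyB
    have hZy : s(Z,y) ∉ M' := fun hc => hyZ (hyZ2 hc)
    have hyT : y ≠ T := by
      intro h
      subst h
      exact hTZ (hyZ2 (by rw [Sym2.eq_swap]; exact hadj))
    -- the new edge set
    have hxyE : s(x,y) ∈ M' := hxy
    have hZyE : s(Z,y) ∉ M'.erase s(x,y) := fun hc => hZy (Finset.mem_of_mem_erase hc)
    have hTxE : s(T,x) ∉ insert s(Z,y) (M'.erase s(x,y)) := by
      rw [Finset.mem_insert]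
      push_neg
      constructor
      · intro hc
        rw [Sym2.eq_iff] at hc
        rcases hc with ⟨h1, _⟩ | ⟨h1, _⟩
        · exact hTZ h1
        · exact hyT h1.symm
      · intro hc
        exact hTx (Finset.mem_of_mem_erase hc)
    refine ⟨insert s(T,x) (insert s(Z,y) (M'.erase s(x,y))), ?_, ?_⟩
    · intro e he
      rw [Finset.mem_insert, Finset.mem_insert] at he
      rcases he with rfl | rfl | he
      · rw [Sym2.mk_isDiag_iff]
        intro h; exact hxT h.symm
      · rw [Sym2.mk_isDiag_iff]
        intro h; exact hyZ h.symm
      · exact hM' e (Finset.mem_of_mem_erase he)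
    · intro v
      rw [degM_insert _ _ hTxE, degM_insert _ _ hZyE, degM_erase _ _ hxyE]
      have mem0 : ∀ (w p q : Fin n), w ≠ p → w ≠ q →
          (if w ∈ s(p,q) then (1:ℕ) else 0) = 0 := by
        intro w p q hp hq
        rw [if_neg]
        rw [Sym2.mem_iff]
        push_neg
        exact ⟨hp, hq⟩
      have mem1l : ∀ (p q : Fin n), (if p ∈ s(p,q) then (1:ℕ) else 0) = 1 :=
        fun p q => if_pos (Sym2.mem_mk_left p q)
      have mem1r : ∀ (p q : Fin n), (if q ∈ s(p,q) then (1:ℕ) else 0) = 1 :=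
        fun p q => if_pos (Sym2.mem_mk_right p q)
      have hvsxy : (if v ∈ s(x,y) then 1 else 0) ≤ degM M' v := by
        split_ifs with h
        · exact Finset.card_pos.2 ⟨s(x,y), Finset.mem_filter.2 ⟨hxyE, h⟩⟩
        · omega
      have ht := htarget v
      by_cases h1 : v = T
      · subst h1
        rw [mem0 T x y (Ne.symm hxT) (Ne.symm hyT), mem0 T Z y hTZ (Ne.symm hyT),
          mem1l T x]
        rw [if_pos rfl, if_neg hTZ] at ht
        omega
      · by_cases h2 : v = Z
        · subst h2
          rw [mem0 Z x y (Ne.symm hxZ) (Ne.symm hyZ), mem1l Z y,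
            mem0 Z T x (Ne.symm hTZ) (Ne.symm hxZ)]
          rw [if_neg (fun h => hTZ h.symm), if_pos rfl] at ht
          omega
        · by_cases h3 : v = x
          · rw [h3] at hvsxy ht ⊢
            rw [mem1l x y, mem0 x Z y hxZ (Ne.symm hyxne), mem1r T x]
            rw [mem1l x y] at hvsxy
            rw [if_neg hxT, if_neg hxZ] at ht
            omega
          · by_cases h4 : v = y
            · rw [h4] at hvsxy ht ⊢
              rw [mem1r x y, mem1r Z y, mem0 y T x hyT hyxne]
              rw [mem1r x y] at hvsxy
              rw [if_neg hyT, if_neg hyZ] at ht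
              omega
            · rw [mem0 v x y h3 h4, mem0 v Z y h2 h4, mem0 v T x h1 h3]
              rw [if_neg h1, if_neg h2] at ht
              omega
  · -- simple insertion
    refine ⟨insert s(T,Z) M', ?_, ?_⟩
    · intro e he
      rw [Finset.mem_insert] at he
      rcases he with rfl | he
      · rw [Sym2.mk_isDiag_iff]; exact hTZ
      · exact hM' e he
    · intro v
      rw [degM_insert _ _ hadj]
      have ht := htarget v
      by_cases h1 : v = T
      · subst h1
        rw [if_pos (Sym2.mem_mk_left T Z)]
        rw [if_pos rfl, if_neg hTZ] at ht
        omega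
      · by_cases h2 : v = Z
        · subst h2
          rw [if_pos (Sym2.mem_mk_right T Z)]
          rw [if_neg (fun h => hTZ h.symm), if_pos rfl] at ht
          omega
        · rw [if_neg (by rw [Sym2.mem_iff]; push_neg; exact ⟨h1, h2⟩)]
          rw [if_neg h1, if_neg h2] at ht
          omega


/-- sufficiency by strong induction on the degree sum -/
lemma sufficiency (S : ℕ) : ∀ (n : ℕ) (d : ℕ → ℕ),
    (∀ i j, 1 ≤ i → i ≤ j → j ≤ n → d j ≤ d i) →
    (∀ g, 1 ≤ g → g ≤ n → EGi d n g) →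
    Even (Hs d n) → Hs d n = S →
    ∃ M : Finset (Sym2 (Fin n)), (∀ e ∈ M, ¬ e.IsDiag) ∧
      ∀ v : Fin n, degM M v = d (v.1+1) := by
  induction S using Nat.strong_induction_on with
  | _ S IH =>
  intro n d hmono hEG heven hsum
  rcases Nat.eq_zero_or_pos S with rfl | hSpos
  · refine ⟨∅, by simp, ?_⟩
    intro v
    have hdeg0 : d (v.1+1) = 0 := by
      unfold Hs at hsum
      have hv : v.1+1 ∈ Finset.Icc 1 n := by
        rw [Finset.mem_Icc]
        have := v.2
        omega
      exact (Finset.sum_eq_zero_iff.1 hsum) (v.1+1) hv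
    rw [hdeg0]
    unfold degM
    simp
  · obtain ⟨a, z, ha1, haz, hzn, hda, hdz, hd1z, hmono', hHsdec, hEG'⟩ :=
      decrement_step n d hmono hEG heven (by omega)
    obtain ⟨m, hm⟩ := heven
    have hS2 : 2 ≤ S := by omega
    have hsum' : Hs (dec d a z) n = S - 2 := by omega
    have heven' : Even (Hs (dec d a z) n) := ⟨m - 1, by omega⟩
    obtain ⟨M', hM'1, hM'2⟩ := IH (S-2) (by omega) n (dec d a z) hmono' hEG' heven' hsum'
    exact surgery n d a z ha1 haz hzn hmono hd1z hdz hda M' hM'1 hM'2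

end EGJ

open EGJ in
/-- The jumping Erdős–Gallai criterion: it suffices to check the Erdős–Gallai
inequalities at the checking points. -/
theorem erdos_gallai_jumping (n : ℕ) (hn : 1 ≤ n) (b : ℕ → ℕ)
    (hmono : ∀ i j, 1 ≤ i → i ≤ j → j ≤ n → b j ≤ b i)
    (hbound : b 1 ≤ n - 1) :
    IsGraphical n b ↔
      (Even (∑ k ∈ Finset.Icc 1 n, b k) ∧
        ∀ g, (g = n ∨ (1 ≤ g ∧ g ≤ n - 1 ∧ b (g + 1) < b g)) →
          (∑ k ∈ Finset.Icc 1 g, b k) - g * (g - 1) ≤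
            ∑ k ∈ Finset.Icc (g + 1) n, min g (b k)) := by
  constructor
  · rintro ⟨G, inst, hdeg⟩
    obtain ⟨hev, hEG⟩ := necessity b G inst hdeg
    refine ⟨hev, ?_⟩
    intro g hg
    have hg1 : 1 ≤ g := by rcases hg with rfl | ⟨h1, _, _⟩ <;> omega
    have hgn : g ≤ n := by rcases hg with rfl | ⟨_, h2, _⟩ <;> omega
    have h := hEG g hg1 hgn
    rw [EGi] at h
    unfold Hs Rs at h
    omega
  · rintro ⟨hev, hjump⟩
    have hjump' : ∀ g, (g = n ∨ (1 ≤ g ∧ g ≤ n - 1 ∧ b (g+1) < b g)) → EGi b n g := by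
      intro g hg
      have h := hjump g hg
      rw [EGi]
      unfold Hs Rs
      omega
    have hEG := jumping_to_full n b hmono hjump'
    obtain ⟨M, hM1, hM2⟩ := sufficiency (Hs b n) n b hmono
      (fun g _ h2 => hEG g h2) hev rfl
    obtain ⟨G, inst, hdeg⟩ := exists_graph M hM1
    exact ⟨G, inst, fun i => by rw [hdeg i, hM2 i]⟩
end

section
/- For a nonincreasing sequence b = (b_1, ..., b_n) of nonnegative integers, if i > w_i then Σ_{k=i+1}^{n} min(i, b_k) = H_n - H_i, and if i ≤ w_i then Σ_{k=i+1}^{n} min(i, b_k) = i(w_i - i) + H_n - H_{w_i}, where w_i is the largest index k with b_k ≥ i (w_i = 0 if none), and H_j = b_1 + ... + b_j with H_0 = 0. -/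
/-- Closed-form evaluation of the Erdős–Gallai tail sum via weight points. -/
theorem tail_sum_closed_form (n : ℕ) (b : ℕ → ℕ)
    (hmono : ∀ i j, 1 ≤ i → i ≤ j → j ≤ n → b j ≤ b i)
    (w : ℕ → ℕ) (hw : ∀ i, w i = ((Finset.Icc 1 n).filter fun k => i ≤ b k).sup id)
    (H : ℕ → ℕ) (hH : ∀ i, H i = ∑ k ∈ Finset.Icc 1 i, b k) :
    ∀ i, 1 ≤ i → i ≤ n →
      (w i < i → (∑ k ∈ Finset.Icc (i + 1) n, min i (b k)) = H n - H i) ∧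
      (i ≤ w i → (∑ k ∈ Finset.Icc (i + 1) n, min i (b k)) = i * (w i - i) + (H n - H (w i))) := by
  intro i hi1 hin
  -- any k with i ≤ b k and 1 ≤ k ≤ n is ≤ w i
  have hwle : ∀ k, 1 ≤ k → k ≤ n → i ≤ b k → k ≤ w i := by
    intro k h1 h2 h3
    rw [hw]
    exact Finset.le_sup (f := id)
      (Finset.mem_filter.mpr ⟨Finset.mem_Icc.mpr ⟨h1, h2⟩, h3⟩)
  have hblt : ∀ k, k ≤ n → w i < k → b k < i := by
    intro k hk hwk
    by_contra h
    push_neg at h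
    have h1 : 1 ≤ k := by omega
    have := hwle k h1 hk h
    omega
  have htail : ∀ a, a ≤ n → (∑ k ∈ Finset.Ioc a n, b k) = H n - H a := by
    intro a ha
    have := Finset.sum_Ioc_consecutive b (Nat.zero_le a) ha
    rw [hH, hH]
    have e0 : ∀ x : ℕ, Finset.Icc 1 x = Finset.Ioc 0 x := by
      intro x; ext y; simp [Finset.mem_Icc, Finset.mem_Ioc]; omega
    rw [e0, e0, ← this]
    omega
  have hIcc : Finset.Icc (i + 1) n = Finset.Ioc i n := by
    ext y; simp [Finset.mem_Icc, Finset.mem_Ioc]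
  constructor
  · intro hwi
    rw [hIcc, ← htail i hin]
    apply Finset.sum_congr rfl
    intro k hk
    rw [Finset.mem_Ioc] at hk
    have := hblt k hk.2 (lt_trans hwi hk.1)
    omega
  · intro hiw
    -- w i ∈ the filter, so w i ≤ n and i ≤ b (w i)
    have hne : ((Finset.Icc 1 n).filter fun k => i ≤ b k).Nonempty := by
      by_contra h
      rw [Finset.not_nonempty_iff_eq_empty] at h
      rw [hw, h] at hiw
      simp at hiw
      omega
    obtain ⟨m, hm, hm2⟩ := Finset.exists_mem_eq_sup _ hne id
    rw [← hw] at hm2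
    simp only [id] at hm2
    rw [Finset.mem_filter, Finset.mem_Icc] at hm
    have hwn : w i ≤ n := hm2 ▸ hm.1.2
    have hbw : i ≤ b (w i) := hm2 ▸ hm.2
    rw [hIcc, ← Finset.sum_Ioc_consecutive _ hiw hwn]
    have h1 : (∑ k ∈ Finset.Ioc i (w i), min i (b k)) = i * (w i - i) := by
      rw [Finset.sum_congr rfl (fun k hk => ?_), Finset.sum_const,
        Nat.card_Ioc, smul_eq_mul, mul_comm]
      rw [Finset.mem_Ioc] at hk
      have : b (w i) ≤ b k := hmono k (w i) (by omega) hk.2 hwn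
      have : i ≤ b k := le_trans hbw this
      omega
    have h2 : (∑ k ∈ Finset.Ioc (w i) n, min i (b k)) = H n - H (w i) := by
      rw [← htail (w i) hwn]
      apply Finset.sum_congr rfl
      intro k hk
      rw [Finset.mem_Ioc] at hk
      have := hblt k hk.2 hk.1
      omega
    rw [h1, h2]
end

section
/- For n ≥ 1, the number of nonincreasing sequences (b_1, ..., b_n) of integers with n-1 ≥ b_1 ≥ ... ≥ b_n ≥ 0 whose sum is even equals (1/2)(C(2n-1, n) + C(n-1, ⌊n/2⌋)). -/
open Finset

private def Ssum (m k : ℕ) : ℤ :=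
  ∑ T ∈ (Finset.range m).powersetCard k, (-1 : ℤ) ^ (∑ x ∈ T, x)

private lemma Ssum_zero (m : ℕ) : Ssum m 0 = 1 := by
  simp [Ssum]

private lemma Ssum_zero_succ (k : ℕ) : Ssum 0 (k+1) = 0 := by
  rw [Ssum, Finset.powersetCard_eq_empty.2 (by simp), Finset.sum_empty]

private lemma Ssum_succ_succ (m k : ℕ) :
    Ssum (m+1) (k+1) = Ssum m (k+1) + (-1 : ℤ) ^ m * Ssum m k := by
  have hm : m ∉ Finset.range m := by simp
  have hdisj : Disjoint ((Finset.range m).powersetCard (k+1))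
      (((Finset.range m).powersetCard k).image (insert m)) := by
    rw [Finset.disjoint_left]
    rintro T hT hT'
    simp only [Finset.mem_image] at hT'
    obtain ⟨U, hU, rfl⟩ := hT'
    rw [Finset.mem_powersetCard] at hT
    exact hm (hT.1 (Finset.mem_insert_self m U))
  have hinj : ∀ T ∈ (Finset.range m).powersetCard k,
      ∀ U ∈ (Finset.range m).powersetCard k, insert m T = insert m U → T = U := by
    intro T hT U hU h
    rw [Finset.mem_powersetCard] at hT hU
    have hmT : m ∉ T := fun h' => hm (hT.1 h')
    have hmU : m ∉ U := fun h' => hm (hU.1 h')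
    ext x
    constructor <;> intro hx
    · have hx' : x ∈ insert m U := h ▸ Finset.mem_insert_of_mem hx
      rcases Finset.mem_insert.1 hx' with rfl | h'
      · exact absurd hx hmT
      · exact h'
    · have hx' : x ∈ insert m T := h.symm ▸ Finset.mem_insert_of_mem hx
      rcases Finset.mem_insert.1 hx' with rfl | h'
      · exact absurd hx hmU
      · exact h'
  have himg : ∑ T ∈ ((Finset.range m).powersetCard k).image (insert m),
      (-1 : ℤ) ^ (∑ x ∈ T, x) = (-1 : ℤ) ^ m * Ssum m k := by
    rw [Finset.sum_image hinj, Ssum, Finset.mul_sum]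
    refine Finset.sum_congr rfl fun T hT => ?_
    rw [Finset.mem_powersetCard] at hT
    have hmT : m ∉ T := fun h' => hm (hT.1 h')
    rw [Finset.sum_insert hmT, pow_add]
  show ∑ T ∈ (Finset.range (m+1)).powersetCard (k+1), (-1 : ℤ) ^ (∑ x ∈ T, x) = _
  rw [Finset.range_add_one, Finset.powersetCard_succ_insert hm, Finset.sum_union hdisj, himg]
  rfl

private def Cform (m k : ℕ) : ℤ :=
  (-1 : ℤ) ^ (k / 2) * (if Even m ∧ Odd k then 0 else ((m / 2).choose (k / 2) : ℤ))

private lemma Cform_succ (m k : ℕ) :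
    Cform (m+1) (k+1) = Cform m (k+1) + (-1 : ℤ) ^ m * Cform m k := by
  unfold Cform
  rcases Nat.even_or_odd m with ⟨a, ha⟩ | ⟨a, ha⟩ <;>
    rcases Nat.even_or_odd k with ⟨b, hb⟩ | ⟨b, hb⟩ <;> subst ha <;> subst hb
  · -- m = a+a even, k = b+b even
    have h1 : ¬ (Even (a + a + 1) ∧ Odd (b + b + 1)) := by
      rintro ⟨h, -⟩; simp [Nat.even_add_one, Nat.even_add] at h
    have h2 : Even (a + a) ∧ Odd (b + b + 1) := ⟨⟨a, rfl⟩, ⟨b, by omega⟩⟩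
    have h3 : ¬ (Even (a + a) ∧ Odd (b + b)) := by
      rintro ⟨-, h⟩; rw [Nat.odd_iff] at h; omega
    rw [if_neg h1, if_pos h2, if_neg h3]
    have e1 : (b + b + 1) / 2 = b := by omega
    have e2 : (a + a + 1) / 2 = a := by omega
    have e3 : (b + b) / 2 = b := by omega
    have e4 : (a + a) / 2 = a := by omega
    rw [e1, e2, e3, e4]
    have : (-1 : ℤ) ^ (a + a) = 1 := Even.neg_one_pow ⟨a, rfl⟩
    rw [this]; ring
  · -- m = a+a even, k = 2b+1 odd
    have h1 : ¬ (Even (a + a + 1) ∧ Odd (2 * b + 1 + 1)) := by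
      rintro ⟨h, -⟩; simp [Nat.even_add_one, Nat.even_add] at h
    have h2 : ¬ (Even (a + a) ∧ Odd (2 * b + 1 + 1)) := by
      rintro ⟨-, h⟩; rw [Nat.odd_iff] at h; omega
    have h3 : Even (a + a) ∧ Odd (2 * b + 1) := ⟨⟨a, rfl⟩, ⟨b, by omega⟩⟩
    rw [if_neg h1, if_neg h2, if_pos h3]
    have e1 : (2 * b + 1 + 1) / 2 = b + 1 := by omega
    have e2 : (a + a + 1) / 2 = a := by omega
    have e3 : (a + a) / 2 = a := by omega
    rw [e1, e2, e3]; ring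
  · -- m = 2a+1 odd, k = b+b even
    have h1 : ¬ (Even (2 * a + 1) ∧ Odd (b + b)) := by
      rintro ⟨h, -⟩; rw [Nat.even_iff] at h; omega
    have h2 : Even (2 * a + 2) ∧ Odd (b + b + 1) := ⟨⟨a + 1, by omega⟩, ⟨b, by omega⟩⟩
    have h3 : ¬ (Even (2 * a + 1) ∧ Odd (b + b + 1)) := by
      rintro ⟨h, -⟩; rw [Nat.even_iff] at h; omega
    rw [if_pos h2, if_neg h3, if_neg h1]
    have e1 : (b + b + 1) / 2 = b := by omega
    have e2 : (2 * a + 1) / 2 = a := by omega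
    have e3 : (b + b) / 2 = b := by omega
    rw [e1, e2, e3]
    have : (-1 : ℤ) ^ (2 * a + 1) = -1 := Odd.neg_one_pow ⟨a, by omega⟩
    rw [this]; ring
  · -- m = 2a+1 odd, k = 2b+1 odd
    have h1 : ¬ (Even (2 * a + 2) ∧ Odd (2 * b + 2)) := by
      rintro ⟨-, h⟩; rw [Nat.odd_iff] at h; omega
    have h2 : ¬ (Even (2 * a + 1) ∧ Odd (2 * b + 2)) := by
      rintro ⟨h, -⟩; rw [Nat.even_iff] at h; omega
    have h3 : ¬ (Even (2 * a + 1) ∧ Odd (2 * b + 1)) := by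
      rintro ⟨h, -⟩; rw [Nat.even_iff] at h; omega
    rw [if_neg h1, if_neg h2, if_neg h3]
    have e1 : (2 * b + 1 + 1) / 2 = b + 1 := by omega
    have e2 : (2 * a + 1 + 1) / 2 = a + 1 := by omega
    have e3 : (2 * b + 1) / 2 = b := by omega
    have e4 : (2 * a + 1) / 2 = a := by omega
    rw [e1, e2, e3, e4]
    have hp : (-1 : ℤ) ^ (2 * a + 1) = -1 := Odd.neg_one_pow ⟨a, by omega⟩
    have hpas : ((a + 1).choose (b + 1) : ℤ) = (a.choose b : ℤ) + (a.choose (b + 1) : ℤ) := by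
      rw [Nat.choose_succ_succ]; push_cast; ring
    rw [hp, hpas]; ring

private lemma Ssum_eq (m k : ℕ) : Ssum m k = Cform m k := by
  induction m generalizing k with
  | zero =>
    cases k with
    | zero => rw [Ssum_zero, Cform]; norm_num [Nat.odd_iff]
    | succ k =>
      rw [Ssum_zero_succ, Cform]
      rcases Nat.even_or_odd (k + 1) with he | ho
      · have : ¬ (Even 0 ∧ Odd (k + 1)) := by
          rintro ⟨-, h⟩; exact (Nat.not_odd_iff_even.2 he) h
        rw [if_neg this]
        have : (0 / 2).choose ((k + 1) / 2) = 0 := by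
          apply Nat.choose_eq_zero_of_lt
          rw [Nat.even_iff] at he; omega
        rw [this]; ring
      · rw [if_pos ⟨Even.zero, ho⟩]; ring
  | succ m ih =>
    cases k with
    | zero => rw [Ssum_zero, Cform]; norm_num [Nat.odd_iff]
    | succ k => rw [Ssum_succ_succ, ih, ih, Cform_succ]


private lemma strictMono_gap {n : ℕ} {u : Fin n → ℕ} (hu : StrictMono u) :
    ∀ (d : ℕ) (a b : Fin n), a.val + d = b.val → u a + d ≤ u b := by
  intro d
  induction d with
  | zero =>
    intro a b h
    have : a = b := Fin.ext (by omega)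
    subst this; omega
  | succ d ih =>
    intro a b h
    have hb' : a.val + d < n := by have := b.isLt; omega
    have h1 := ih a ⟨a.val + d, hb'⟩ rfl
    have h2 : u ⟨a.val + d, hb'⟩ < u b := hu (by rw [Fin.lt_def]; simp; omega)
    omega

private def phi (n : ℕ) (b : Fin n → ℕ) : Finset ℕ :=
  Finset.image (fun i : Fin n => b i + (n - 1 - i.val)) Finset.univ

private lemma phi_strictAnti {n : ℕ} {b : Fin n → ℕ} (hb : Antitone b) :
    StrictAnti (fun i : Fin n => b i + (n - 1 - i.val)) := by
  intro i j hij
  have h1 : b j ≤ b i := hb hij.le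
  have h2 : i.val < j.val := hij
  have h3 : j.val < n := j.isLt
  simp only
  omega

private lemma phi_card {n : ℕ} {b : Fin n → ℕ} (hb : Antitone b) : (phi n b).card = n := by
  rw [phi, Finset.card_image_of_injective _ (phi_strictAnti hb).injective, Finset.card_univ,
    Fintype.card_fin]

private lemma phi_subset {n : ℕ} (hn : 1 ≤ n) {b : Fin n → ℕ}
    (hbd : ∀ i, b i ≤ n - 1) : phi n b ⊆ Finset.range (2 * n - 1) := by
  intro x hx
  rw [phi, Finset.mem_image] at hx
  obtain ⟨i, -, rfl⟩ := hx
  have := hbd i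
  rw [Finset.mem_range]
  omega

private lemma phi_sum {n : ℕ} {b : Fin n → ℕ} (hb : Antitone b) :
    ∑ x ∈ phi n b, x = (∑ i, b i) + ∑ i ∈ Finset.range n, i := by
  rw [phi, Finset.sum_image (fun i _ j _ h => (phi_strictAnti hb).injective h),
    Finset.sum_add_distrib]
  congr 1
  rw [Fin.sum_univ_eq_sum_range (fun j => n - 1 - j) n]
  exact Finset.sum_range_reflect (fun j => j) n

private lemma phi_sum' {n : ℕ} {b : Fin n → ℕ} (hb : Antitone b) :
    ∑ x ∈ phi n b, x = (∑ i, b i) + ∑ i ∈ Finset.range n, i := phi_sum hb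

-- parity lemma
private lemma even_gauss (n : ℕ) : Even ((∑ i ∈ Finset.range n, i) + n / 2) := by
  have h2 := Finset.sum_range_id_mul_two n
  rcases Nat.even_or_odd n with ⟨q, hq⟩ | ⟨q, hq⟩
  · -- n = q + q
    have hc : (∑ i ∈ Finset.range n, i) = q * (2 * q - 1) := by
      have : (∑ i ∈ Finset.range n, i) * 2 = (q * (2 * q - 1)) * 2 := by
        rw [h2, hq]
        cases q with
        | zero => simp
        | succ p =>
          have e : 2 * (p + 1) - 1 = 2 * p + 1 := by omega
          have e2 : p + 1 + (p + 1) - 1 = 2 * p + 1 := by omega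
          rw [e, e2]; ring
      omega
    have hd : n / 2 = q := by omega
    rw [hc, hd]
    cases q with
    | zero => simp
    | succ p =>
      have e : 2 * (p + 1) - 1 = 2 * p + 1 := by omega
      rw [e]
      exact ⟨(p + 1) * (p + 1), by ring⟩
  · -- n = 2q+1
    have hc : (∑ i ∈ Finset.range n, i) = q * (2 * q + 1) := by
      have : (∑ i ∈ Finset.range n, i) * 2 = (q * (2 * q + 1)) * 2 := by
        rw [h2, hq]
        have e : 2 * q + 1 - 1 = 2 * q := by omega
        rw [e]; ring
      omega
    have hd : n / 2 = q := by omega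
    rw [hc, hd]
    exact ⟨q * q + q, by ring⟩


private lemma Ssum_val (n : ℕ) (hn : 1 ≤ n) :
    Ssum (2 * n - 1) n = (-1 : ℤ) ^ (n / 2) * ((n - 1).choose (n / 2) : ℤ) := by
  rw [Ssum_eq, Cform]
  have hodd : ¬ (Even (2 * n - 1) ∧ Odd n) := by
    rintro ⟨h, -⟩
    rw [Nat.even_iff] at h
    omega
  rw [if_neg hodd]
  have h2 : (2 * n - 1) / 2 = n - 1 := by omega
  rw [h2]

/-- Ascher's formula: twice the number of `n`-even sequences equals
`C(2n-1, n) + C(n-1, ⌊n/2⌋)`. -/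
theorem count_n_even (n : ℕ) (hn : 1 ≤ n) :
    2 * Nat.card {b : Fin n → ℕ //
        Antitone b ∧ (∀ i, b i ≤ n - 1) ∧ Even (∑ i, b i)} =
      Nat.choose (2 * n - 1) n + Nat.choose (n - 1) (n / 2) := by
  classical
  set c : ℕ := ∑ i ∈ Finset.range n, i with hc
  set A : Finset (Finset ℕ) := (Finset.range (2 * n - 1)).powersetCard n with hA
  set E : Finset (Finset ℕ) := A.filter (fun T => Even ((∑ x ∈ T, x) + c)) with hE
  -- Step 1: the bijection
  have hΦmem : ∀ x : {b : Fin n → ℕ //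
      Antitone b ∧ (∀ i, b i ≤ n - 1) ∧ Even (∑ i, b i)}, phi n x.1 ∈ E := by
    rintro ⟨b, hb, hbd, hev⟩
    rw [hE, Finset.mem_filter]
    constructor
    · rw [hA, Finset.mem_powersetCard]
      exact ⟨phi_subset hn hbd, phi_card hb⟩
    · rw [phi_sum hb]
      rw [Nat.even_iff] at hev ⊢
      omega
  have hbij : Function.Bijective
      (fun x : {b : Fin n → ℕ //
        Antitone b ∧ (∀ i, b i ≤ n - 1) ∧ Even (∑ i, b i)} =>
        (⟨phi n x.1, hΦmem x⟩ : {T // T ∈ E})) := by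
    constructor
    · -- injective
      rintro ⟨b, hb, hbd, hev⟩ ⟨b', hb', hbd', hev'⟩ h
      simp only [Subtype.mk.injEq] at h
      have hcb : (phi n b).card = n := phi_card hb
      have hcb' : (phi n b).card = n := by rw [h]; exact phi_card hb'
      have h1 : (fun j : Fin n => b j.rev + (n - 1 - j.rev.val)) =
          (phi n b).orderEmbOfFin hcb := by
        apply Finset.orderEmbOfFin_unique
        · intro x
          exact Finset.mem_image.2 ⟨x.rev, Finset.mem_univ _, rfl⟩
        · intro a b hab
          exact phi_strictAnti hb (Fin.rev_lt_rev.2 hab)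
      have h2 : (fun j : Fin n => b' j.rev + (n - 1 - j.rev.val)) =
          (phi n b).orderEmbOfFin hcb := by
        apply Finset.orderEmbOfFin_unique
        · intro x
          rw [h]
          exact Finset.mem_image.2 ⟨x.rev, Finset.mem_univ _, rfl⟩
        · intro a b hab
          exact phi_strictAnti hb' (Fin.rev_lt_rev.2 hab)
      have h3 : ∀ i : Fin n, b i = b' i := by
        intro i
        have := congrFun (h1.trans h2.symm) i.rev
        simp only [Fin.rev_rev] at this
        omega
      exact Subtype.ext (funext h3)
    · -- surjective
      rintro ⟨T, hTE⟩
      rw [hE, Finset.mem_filter] at hTE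
      obtain ⟨hTA, hTev⟩ := hTE
      rw [hA, Finset.mem_powersetCard] at hTA
      obtain ⟨hsub, hcard⟩ := hTA
      set u : Fin n → ℕ := fun j => T.orderEmbOfFin hcard j with hu_def
      have hu : StrictMono u := (T.orderEmbOfFin hcard).strictMono
      have humem : ∀ j, u j ∈ T := fun j => Finset.orderEmbOfFin_mem T hcard j
      have hlow : ∀ j : Fin n, j.val ≤ u j := by
        intro j
        have h0 : (0 : ℕ) < n := lt_of_le_of_lt (Nat.zero_le _) j.isLt
        have := strictMono_gap hu j.val ⟨0, h0⟩ j (by simp)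
        omega
      have hhigh : ∀ j : Fin n, u j ≤ n - 1 + j.val := by
        intro j
        have h0 : n - 1 < n := by omega
        have hg := strictMono_gap hu (n - 1 - j.val) j ⟨n - 1, h0⟩
          (by simp; omega)
        have hm := humem ⟨n - 1, h0⟩
        have := hsub hm
        rw [Finset.mem_range] at this
        have hjn := j.isLt
        omega
      have hrev : ∀ i : Fin n, (i.rev : ℕ) = n - 1 - i.val := by
        intro i
        rw [Fin.val_rev]
        omega
      set b : Fin n → ℕ := fun i => u i.rev - (n - 1 - i.val) with hb_def
      have hval : ∀ i : Fin n, b i + (n - 1 - i.val) = u i.rev := by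
        intro i
        have := hlow i.rev
        rw [hrev] at this
        simp only [hb_def]
        omega
      have hbant : Antitone b := by
        intro i j hij
        have hij' : i.val ≤ j.val := hij
        have hjn := j.isLt
        have hkey := strictMono_gap hu (j.val - i.val) j.rev i.rev
          (by rw [hrev, hrev]; omega)
        have hl := hlow j.rev
        rw [hrev] at hl
        simp only [hb_def]
        omega
      have hbbd : ∀ i, b i ≤ n - 1 := by
        intro i
        have := hhigh i.rev
        rw [hrev] at this
        simp only [hb_def]
        omega
      have hphiT : phi n b = T := by
        have himg : phi n b = Finset.image u Finset.univ := by
          rw [phi]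
          ext x
          simp only [Finset.mem_image]
          constructor
          · rintro ⟨i, -, rfl⟩
            exact ⟨i.rev, Finset.mem_univ _, (hval i).symm⟩
          · rintro ⟨j, -, rfl⟩
            exact ⟨j.rev, Finset.mem_univ _, by rw [hval j.rev, Fin.rev_rev]⟩
        rw [himg]
        apply Finset.eq_of_subset_of_card_le
        · intro x hx
          rw [Finset.mem_image] at hx
          obtain ⟨j, -, rfl⟩ := hx
          exact humem j
        · rw [Finset.card_image_of_injective _ hu.injective, Finset.card_univ,
            Fintype.card_fin, hcard]
      have hbev : Even (∑ i, b i) := by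
        have hsum : (∑ i, b i) + c = ∑ x ∈ T, x := by
          rw [← hphiT, phi_sum hbant]
        rw [Nat.even_iff] at hTev ⊢
        omega
      exact ⟨⟨b, hbant, hbbd, hbev⟩, Subtype.ext hphiT⟩
  have hcount : Nat.card {b : Fin n → ℕ //
      Antitone b ∧ (∀ i, b i ≤ n - 1) ∧ Even (∑ i, b i)} = E.card := by
    rw [Nat.card_eq_of_bijective _ hbij, Nat.card_eq_finsetCard]
  -- Step 2: the signed count
  rw [hcount]
  have hZ : (2 * E.card : ℤ) = ((2 * n - 1).choose n : ℤ) + ((n - 1).choose (n / 2) : ℤ) := by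
    have hsplit : ∑ T ∈ A, ((1 : ℤ) + (-1 : ℤ) ^ ((∑ x ∈ T, x) + c)) = 2 * E.card := by
      rw [← Finset.sum_filter_add_sum_filter_not A (fun T => Even ((∑ x ∈ T, x) + c))]
      have e1 : ∑ T ∈ A.filter (fun T => Even ((∑ x ∈ T, x) + c)),
          ((1 : ℤ) + (-1 : ℤ) ^ ((∑ x ∈ T, x) + c)) = 2 * E.card := by
        have hterm : ∀ T ∈ A.filter (fun T => Even ((∑ x ∈ T, x) + c)),
            ((1 : ℤ) + (-1 : ℤ) ^ ((∑ x ∈ T, x) + c)) = 2 := by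
          intro T hT
          rw [Finset.mem_filter] at hT
          rw [Even.neg_one_pow hT.2]
          norm_num
        rw [Finset.sum_congr rfl hterm, Finset.sum_const, nsmul_eq_mul, hE]
        ring
      have e2 : ∑ T ∈ A.filter (fun T => ¬ Even ((∑ x ∈ T, x) + c)),
          ((1 : ℤ) + (-1 : ℤ) ^ ((∑ x ∈ T, x) + c)) = 0 := by
        apply Finset.sum_eq_zero
        intro T hT
        rw [Finset.mem_filter] at hT
        rw [Odd.neg_one_pow (Nat.not_even_iff_odd.1 hT.2)]
        ring
      rw [e1, e2, add_zero]
    have hsplit2 : ∑ T ∈ A, ((1 : ℤ) + (-1 : ℤ) ^ ((∑ x ∈ T, x) + c)) =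
        (A.card : ℤ) + (-1 : ℤ) ^ c * Ssum (2 * n - 1) n := by
      have hsgn : ∑ T ∈ A, (-1 : ℤ) ^ ((∑ x ∈ T, x) + c) =
          (-1 : ℤ) ^ c * Ssum (2 * n - 1) n := by
        rw [Ssum, Finset.mul_sum]
        refine Finset.sum_congr rfl fun T hT => ?_
        rw [pow_add, mul_comm]
      rw [Finset.sum_add_distrib, Finset.sum_const, nsmul_eq_mul, mul_one, hsgn]
    have hAcard : (A.card : ℤ) = ((2 * n - 1).choose n : ℤ) := by
      rw [hA, Finset.card_powersetCard, Finset.card_range]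
    have hSval : Ssum (2 * n - 1) n = (-1 : ℤ) ^ (n / 2) * ((n - 1).choose (n / 2) : ℤ) :=
      Ssum_val n hn
    have hsign : (-1 : ℤ) ^ c * (-1 : ℤ) ^ (n / 2) = 1 := by
      rw [← pow_add]
      refine Even.neg_one_pow ?_
      rw [hc]
      exact even_gauss n
    rw [hsplit] at hsplit2
    rw [hsplit2, hAcard, hSval]
    calc ((2 * n - 1).choose n : ℤ) + (-1 : ℤ) ^ c *
          ((-1 : ℤ) ^ (n / 2) * ((n - 1).choose (n / 2) : ℤ))
        = ((2 * n - 1).choose n : ℤ) +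
          ((-1 : ℤ) ^ c * (-1 : ℤ) ^ (n / 2)) * ((n - 1).choose (n / 2) : ℤ) := by ring
      _ = ((2 * n - 1).choose n : ℤ) + ((n - 1).choose (n / 2) : ℤ) := by rw [hsign]; ring
  exact_mod_cast hZ
end

section
/- Let R(n) = C(2n-1, n) and E(n) = (1/2)(C(2n-1, n) + C(n-1, ⌊n/2⌋)). Then the sequence E(n)/R(n) is strictly decreasing in n (for n ≥ 1) and converges to 1/2 as n → ∞. -/
open Filter
theorem dbl (k : ℕ) : Nat.choose (2*k+2) (k+1) = 2 * Nat.choose (2*k+1) (k+1) := by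
  rw [show 2*k+2 = (2*k+1)+1 by ring, Nat.choose_succ_succ, Nat.succ_eq_add_one,
    show Nat.choose (2*k+1) k = Nat.choose (2*k+1) (k+1) by
      rw [← Nat.choose_symm (by omega : k+1 ≤ 2*k+1)]; congr 1; omega]
  ring

theorem bstep (k : ℕ) : (k+2) * Nat.choose (2*k+3) (k+2) = 2*(2*k+3) * Nat.choose (2*k+1) (k+1) := by
  have h1 := Nat.add_one_mul_choose_eq (2*k+2) (k+1)
  rw [dbl k] at h1
  rw [show 2*k+2+1 = 2*k+3 by ring, show k+1+1 = k+2 by ring] at h1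
  ring_nf at h1 ⊢
  omega

theorem astep (m : ℕ) : (2*m+2) * Nat.choose (2*m+1) (m+1) = 2*(2*m+1) * Nat.choose (2*m) m := by
  have h := Nat.add_one_mul_choose_eq (2*m) m
  ring_nf at h ⊢
  omega

theorem key (n : ℕ) (hn : 1 ≤ n) :
    (2*n+1) * (Nat.choose n ((n+1)/2) * Nat.choose (2*n-1) n)
      ≤ (n+1) * (Nat.choose (n-1) (n/2) * Nat.choose (2*n+1) (n+1)) := by
  rcases Nat.even_or_odd n with ⟨m, hm⟩ | ⟨m, hm⟩
  · obtain ⟨j, rfl⟩ : ∃ j, m = j + 1 := ⟨m - 1, by omega⟩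
    rw [show n = 2*j+2 by omega]
    rw [show (2*j+2+1)/2 = j+1 by omega, show (2*j+2)/2 = j+1 by omega,
        show 2*(2*j+2)-1 = 4*j+3 by omega, show 2*j+2-1 = 2*j+1 by omega,
        show 2*(2*j+2)+1 = 4*j+5 by omega, show 2*j+2+1 = 2*j+3 by omega]
    have hC : (2*j+3) * Nat.choose (4*j+5) (2*j+3)
        = 2*(4*j+5) * Nat.choose (4*j+3) (2*j+2) := by
      have h := bstep (2*j+1)
      rw [show 2*j+1+2 = 2*j+3 by ring, show 2*(2*j+1)+3 = 4*j+5 by ring,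
          show 2*(2*j+1)+1 = 4*j+3 by ring, show 2*j+1+1 = 2*j+2 by ring] at h
      exact h
    rw [dbl j]
    apply le_of_eq
    calc (4*j+5) * (2 * Nat.choose (2*j+1) (j+1) * Nat.choose (4*j+3) (2*j+2))
        = Nat.choose (2*j+1) (j+1) * (2*(4*j+5) * Nat.choose (4*j+3) (2*j+2)) := by ring
      _ = Nat.choose (2*j+1) (j+1) * ((2*j+3) * Nat.choose (4*j+5) (2*j+3)) := by rw [hC]
      _ = (2*j+3) * (Nat.choose (2*j+1) (j+1) * Nat.choose (4*j+5) (2*j+3)) := by ring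
  · rw [hm]
    rw [show (2*m+1+1)/2 = m+1 by omega, show (2*m+1)/2 = m by omega,
        show 2*(2*m+1)-1 = 4*m+1 by omega, show 2*m+1-1 = 2*m by omega,
        show 2*(2*m+1)+1 = 4*m+3 by omega, show 2*m+1+1 = 2*m+2 by omega]
    have hC : (2*m+2) * Nat.choose (4*m+3) (2*m+2)
        = 2*(4*m+3) * Nat.choose (4*m+1) (2*m+1) := by
      have h := bstep (2*m)
      rw [show 2*(2*m)+3 = 4*m+3 by ring, show 2*(2*m)+1 = 4*m+1 by ring] at h
      exact h
    have hA := astep m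
    refine Nat.le_of_mul_le_mul_left ?_ (show 0 < 2*m+2 by omega)
    calc (2*m+2) * ((4*m+3) * (Nat.choose (2*m+1) (m+1) * Nat.choose (4*m+1) (2*m+1)))
        = (4*m+3) * Nat.choose (4*m+1) (2*m+1) * ((2*m+2) * Nat.choose (2*m+1) (m+1)) := by ring
      _ = (4*m+3) * Nat.choose (4*m+1) (2*m+1) * (2*(2*m+1) * Nat.choose (2*m) m) := by rw [hA]
      _ ≤ (4*m+3) * Nat.choose (4*m+1) (2*m+1) * (2*(2*m+2) * Nat.choose (2*m) m) := by
          gcongr; omega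
      _ = (2*m+2) * Nat.choose (2*m) m * ((2*m+2) * Nat.choose (4*m+3) (2*m+2)) := by
          rw [hC]; ring
      _ = (2*m+2) * ((2*m+2) * (Nat.choose (2*m) m * Nat.choose (4*m+3) (2*m+2))) := by ring

noncomputable def rr (n : ℕ) : ℝ := (Nat.choose (n-1) (n/2) : ℝ) / (Nat.choose (2*n-1) n)

theorem rr_nonneg (n : ℕ) : 0 ≤ rr n := by unfold rr; positivity

theorem rr_pos (n : ℕ) (hn : 1 ≤ n) : 0 < rr n := by
  unfold rr
  apply div_pos
  · exact_mod_cast Nat.choose_pos (by omega)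
  · exact_mod_cast Nat.choose_pos (by omega)

theorem b_pos (n : ℕ) (hn : 1 ≤ n) : (0:ℝ) < Nat.choose (2*n-1) n := by
  exact_mod_cast Nat.choose_pos (by omega)

theorem rr_step (n : ℕ) (hn : 1 ≤ n) : rr (n+1) ≤ ((n+1:ℝ)/(2*n+1)) * rr n := by
  unfold rr
  rw [show (n+1) - 1 = n from rfl, show 2*(n+1)-1 = 2*n+1 by omega]
  have hb1 : (0:ℝ) < Nat.choose (2*n+1) (n+1) := by
    exact_mod_cast Nat.choose_pos (by omega)
  have hb0 : (0:ℝ) < Nat.choose (2*n-1) n := b_pos n hn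
  rw [div_mul_div_comm, div_le_div_iff₀ hb1 (by positivity)]
  have hkeyR : ((2*n+1 : ℕ) : ℝ) * (Nat.choose n ((n+1)/2) * Nat.choose (2*n-1) n)
      ≤ ((n+1 : ℕ) : ℝ) * (Nat.choose (n-1) (n/2) * Nat.choose (2*n+1) (n+1)) := by
    exact_mod_cast key n hn
  push_cast at hkeyR
  nlinarith [hkeyR]

theorem rr_step23 (n : ℕ) (hn : 1 ≤ n) : rr (n+1) ≤ (2/3) * rr n := by
  refine (rr_step n hn).trans (mul_le_mul_of_nonneg_right ?_ (rr_nonneg n))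
  rw [div_le_div_iff₀ (by positivity) (by norm_num)]
  have h1 : (1:ℝ) ≤ n := by exact_mod_cast hn
  linarith

theorem rr_lt (n : ℕ) (hn : 1 ≤ n) : rr (n+1) < rr n := by
  have h := rr_step23 n hn
  have hp := rr_pos n hn
  linarith

theorem rr_anti (m n : ℕ) (hm : 1 ≤ m) (hmn : m < n) : rr n < rr m := by
  induction n with
  | zero => omega
  | succ k ih =>
    rcases Nat.lt_or_ge m k with h | h
    · exact lt_trans (rr_lt k (by omega)) (ih h)
    · have : m = k := by omega
      subst this
      exact rr_lt m hm

theorem rr_bound (n : ℕ) (hn : 1 ≤ n) : rr n ≤ (2/3 : ℝ)^(n-1) := by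
  induction n with
  | zero => omega
  | succ k ih =>
    rcases Nat.lt_or_ge 1 (k+1) with h | h
    · have hk : 1 ≤ k := by omega
      have := rr_step23 k hk
      have hb := ih hk
      calc rr (k+1) ≤ (2/3) * rr k := this
        _ ≤ (2/3) * (2/3:ℝ)^(k-1) := by gcongr
        _ = (2/3:ℝ)^(k-1+1) := by ring
        _ = (2/3:ℝ)^(k+1-1) := by congr 1; omega
    · have : k = 0 := by omega
      subst this
      simp [rr]

theorem rr_tendsto : Tendsto rr atTop (nhds 0) := by
  have hpow : Tendsto (fun n : ℕ => (2/3:ℝ)^(n-1)) atTop (nhds 0) := by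
    have h1 : Tendsto (fun n : ℕ => n - 1) atTop atTop := by
      apply tendsto_atTop_atTop.mpr
      intro b
      exact ⟨b+1, fun a ha => by omega⟩
    exact (tendsto_pow_atTop_nhds_zero_of_lt_one (by norm_num) (by norm_num)).comp h1
  apply squeeze_zero' (Eventually.of_forall fun n => rr_nonneg n) ?_ hpow
  filter_upwards [eventually_ge_atTop 1] with n hn
  exact rr_bound n hn

/-- The ratio `E(n)/R(n)` is strictly decreasing and tends to `1/2`. -/
theorem E_over_R (R E : ℕ → ℝ)
    (hR : ∀ n, R n = Nat.choose (2 * n - 1) n)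
    (hE : ∀ n, E n = ((Nat.choose (2 * n - 1) n : ℝ) + (Nat.choose (n - 1) (n / 2) : ℝ)) / 2) :
    (∀ m n, 1 ≤ m → m < n → E n / R n < E m / R m) ∧
    Tendsto (fun n => E n / R n) atTop (nhds (1 / 2)) := by
  have hratio : ∀ n, 1 ≤ n → E n / R n = 1/2 + rr n / 2 := by
    intro n hn
    rw [hE, hR]
    have hb : (Nat.choose (2*n-1) n : ℝ) ≠ 0 := ne_of_gt (b_pos n hn)
    unfold rr
    have e : (2*n-1) = (2*n-1) := rfl
    rw [show (2 * n - 1) = 2*n-1 from rfl]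
    generalize hB : ((Nat.choose (2*n-1) n : ℕ) : ℝ) = B at hb ⊢
    generalize hA : ((Nat.choose (n-1) (n/2) : ℕ) : ℝ) = A
    field_simp
  constructor
  · intro m n hm hmn
    rw [hratio n (by omega), hratio m hm]
    have := rr_anti m n hm hmn
    linarith
  · have h : Tendsto (fun n => 1/2 + rr n / 2) atTop (nhds (1/2 + 0/2)) :=
      tendsto_const_nhds.add (rr_tendsto.div_const 2)
    rw [show (1:ℝ)/2 + 0/2 = 1/2 by norm_num] at h
    apply h.congr'
    filter_upwards [eventually_ge_atTop 1] with n hn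
    exact (hratio n hn).symm
end
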